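/- arXiv:1801.04717 — 10 statements merged into one kernel-verified Lean document; each statement's English description precedes it below -/
import Mathlib

section
/- The equation (13^n - 1)(76^n - 1) = x^2 has exactly one solution in positive integers n, x, namely n = 1, x = 30. -/
private lemma cast_sub_one (m a n : ℕ) (ha : 0 < a) :
    ((a ^ n - 1 : ℕ) : ZMod m) = (a : ZMod m) ^ n - 1 := by
  rw [Nat.cast_sub (Nat.one_le_pow _ _ ha)]
  push_cast
  ring

private lemma val5 (n : ℕ) (hn : n ≠ 0) (h4 : 4 ∣ n) :
    padicValNat 5 ((13 ^ n - 1) * (76 ^ n - 1)) = 3 + 2 * padicValNat 5 (n / 4) := by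
  haveI : Fact (Nat.Prime 5) := ⟨by norm_num⟩
  obtain ⟨m, rfl⟩ := h4
  have hm : m ≠ 0 := by omega
  have h13 : (13 : ℕ) ^ (4 * m) - 1 = 28561 ^ m - 1 ^ m := by
    rw [pow_mul]; norm_num
  have hA : padicValNat 5 (13 ^ (4 * m) - 1) = 1 + padicValNat 5 m := by
    rw [h13, padicValNat.pow_sub_pow (by decide) (by norm_num) (by norm_num) (by norm_num) hm]
    congr 1
    have : (28561 - 1 : ℕ) = 5 * 5712 := by norm_num
    rw [this, padicValNat.mul (by norm_num) (by norm_num),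
      padicValNat.self (by norm_num), padicValNat.eq_zero_of_not_dvd (by norm_num)]
  have hB : padicValNat 5 (76 ^ (4 * m) - 1) = 2 + padicValNat 5 m := by
    have h76 : (76 : ℕ) ^ (4 * m) - 1 = 76 ^ (4 * m) - 1 ^ (4 * m) := by norm_num
    rw [h76, padicValNat.pow_sub_pow (by decide) (by norm_num) (by norm_num) (by norm_num)
      (by omega)]
    have h75 : (76 - 1 : ℕ) = 5 ^ 2 * 3 := by norm_num
    rw [h75, padicValNat.mul (by norm_num) (by norm_num), padicValNat.prime_pow,
      padicValNat.eq_zero_of_not_dvd (by norm_num)]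
    have : padicValNat 5 (4 * m) = padicValNat 5 m := by
      rw [padicValNat.mul (by norm_num) hm, padicValNat.eq_zero_of_not_dvd (by norm_num)]
      omega
    omega
  have hA0 : 13 ^ (4 * m) - 1 ≠ 0 := by
    have : 13 ^ 1 ≤ 13 ^ (4 * m) := Nat.pow_le_pow_right (by norm_num) (by omega)
    simp only [pow_one] at this; omega
  have hB0 : 76 ^ (4 * m) - 1 ≠ 0 := by
    have : 76 ^ 1 ≤ 76 ^ (4 * m) := Nat.pow_le_pow_right (by norm_num) (by omega)
    simp only [pow_one] at this; omega
  rw [padicValNat.mul hA0 hB0, hA, hB]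
  have : 4 * m / 4 = m := by omega
  rw [this]; ring

theorem stmt_1 (n x : ℕ) (hn : 0 < n) (hx : 0 < x) :
    (13 ^ n - 1) * (76 ^ n - 1) = x ^ 2 ↔ n = 1 ∧ x = 30 := by
  constructor
  · intro h
    have hn1 : n = 1 := by
      by_contra hne
      have h2 : 2 ≤ n := by omega
      have h8 : n % 8 < 8 := Nat.mod_lt _ (by norm_num)
      interval_cases hr : n % 8
      · haveI : Fact (Nat.Prime 5) := ⟨by norm_num⟩
        have hv := val5 n (by omega) (by omega)
        rw [h, padicValNat.pow _ _] at hv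
        omega
      · obtain ⟨j, rfl⟩ : ∃ j, n = 8 * j + 9 := ⟨n / 8 - 1, by omega⟩
        have hc := congrArg (Nat.cast : ℕ → ZMod 32) h
        rw [Nat.cast_mul, cast_sub_one _ _ _ (by norm_num),
          cast_sub_one _ _ _ (by norm_num), Nat.cast_pow] at hc
        have e13 : ((13:ℕ) : ZMod 32) ^ (8 * j + 9) = ((13:ℕ) : ZMod 32) ^ 9 := by
          rw [pow_add, pow_mul, show ((13:ℕ) : ZMod 32) ^ 8 = 1 from by decide, one_pow,
            one_mul]
        have e76 : ((76:ℕ) : ZMod 32) ^ (8 * j + 9) = 0 := by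
          rw [pow_add, show ((76:ℕ) : ZMod 32) ^ 9 = 0 from by decide, mul_zero]
        rw [e13, e76] at hc
        exact (by decide : ∀ y : ZMod 32,
          (((13:ℕ) : ZMod 32) ^ 9 - 1) * (0 - 1) ≠ y ^ 2) _ hc
      · obtain ⟨j, rfl⟩ : ∃ j, n = 4 * j + 2 := ⟨n / 4, by omega⟩
        have hc := congrArg (Nat.cast : ℕ → ZMod 16) h
        rw [Nat.cast_mul, cast_sub_one _ _ _ (by norm_num),
          cast_sub_one _ _ _ (by norm_num), Nat.cast_pow] at hc
        have e13 : ((13:ℕ) : ZMod 16) ^ (4 * j + 2) = ((13:ℕ) : ZMod 16) ^ 2 := by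
          rw [pow_add, pow_mul, show ((13:ℕ) : ZMod 16) ^ 4 = 1 from by decide, one_pow,
            one_mul]
        have e76 : ((76:ℕ) : ZMod 16) ^ (4 * j + 2) = 0 := by
          rw [pow_add, show ((76:ℕ) : ZMod 16) ^ 2 = 0 from by decide, mul_zero]
        rw [e13, e76] at hc
        exact (by decide : ∀ y : ZMod 16,
          (((13:ℕ) : ZMod 16) ^ 2 - 1) * (0 - 1) ≠ y ^ 2) _ hc
      · obtain ⟨j, rfl⟩ : ∃ j, n = 4 * j + 3 := ⟨n / 4, by omega⟩
        have hc := congrArg (Nat.cast : ℕ → ZMod 16) h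
        rw [Nat.cast_mul, cast_sub_one _ _ _ (by norm_num),
          cast_sub_one _ _ _ (by norm_num), Nat.cast_pow] at hc
        have e13 : ((13:ℕ) : ZMod 16) ^ (4 * j + 3) = ((13:ℕ) : ZMod 16) ^ 3 := by
          rw [pow_add, pow_mul, show ((13:ℕ) : ZMod 16) ^ 4 = 1 from by decide, one_pow,
            one_mul]
        have e76 : ((76:ℕ) : ZMod 16) ^ (4 * j + 3) = 0 := by
          rw [pow_add, show ((76:ℕ) : ZMod 16) ^ 3 = 0 from by decide, mul_zero]
        rw [e13, e76] at hc
        exact (by decide : ∀ y : ZMod 16,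
          (((13:ℕ) : ZMod 16) ^ 3 - 1) * (0 - 1) ≠ y ^ 2) _ hc
      · haveI : Fact (Nat.Prime 5) := ⟨by norm_num⟩
        have hv := val5 n (by omega) (by omega)
        rw [h, padicValNat.pow _ _] at hv
        omega
      · obtain ⟨j, rfl⟩ : ∃ j, n = 8 * j + 5 := ⟨n / 8, by omega⟩
        have hc := congrArg (Nat.cast : ℕ → ZMod 17) h
        rw [Nat.cast_mul, cast_sub_one _ _ _ (by norm_num),
          cast_sub_one _ _ _ (by norm_num), Nat.cast_pow] at hc
        have e13 : ((13:ℕ) : ZMod 17) ^ (8 * j + 5) = ((13:ℕ) : ZMod 17) ^ 5 := by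
          rw [pow_add, pow_mul, show ((13:ℕ) : ZMod 17) ^ 8 = 1 from by decide, one_pow, one_mul]
        have e76 : ((76:ℕ) : ZMod 17) ^ (8 * j + 5) = ((76:ℕ) : ZMod 17) ^ 5 := by
          rw [pow_add, pow_mul, show ((76:ℕ) : ZMod 17) ^ 8 = 1 from by decide, one_pow, one_mul]
        rw [e13, e76] at hc
        exact (by decide : ∀ y : ZMod 17,
          (((13:ℕ) : ZMod 17) ^ 5 - 1) * (((76:ℕ) : ZMod 17) ^ 5 - 1) ≠ y ^ 2) _ hc
      · obtain ⟨j, rfl⟩ : ∃ j, n = 4 * j + 2 := ⟨n / 4, by omega⟩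
        have hc := congrArg (Nat.cast : ℕ → ZMod 16) h
        rw [Nat.cast_mul, cast_sub_one _ _ _ (by norm_num),
          cast_sub_one _ _ _ (by norm_num), Nat.cast_pow] at hc
        have e13 : ((13:ℕ) : ZMod 16) ^ (4 * j + 2) = ((13:ℕ) : ZMod 16) ^ 2 := by
          rw [pow_add, pow_mul, show ((13:ℕ) : ZMod 16) ^ 4 = 1 from by decide, one_pow,
            one_mul]
        have e76 : ((76:ℕ) : ZMod 16) ^ (4 * j + 2) = 0 := by
          rw [pow_add, show ((76:ℕ) : ZMod 16) ^ 2 = 0 from by decide, mul_zero]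
        rw [e13, e76] at hc
        exact (by decide : ∀ y : ZMod 16,
          (((13:ℕ) : ZMod 16) ^ 2 - 1) * (0 - 1) ≠ y ^ 2) _ hc
      · obtain ⟨j, rfl⟩ : ∃ j, n = 4 * j + 3 := ⟨n / 4, by omega⟩
        have hc := congrArg (Nat.cast : ℕ → ZMod 16) h
        rw [Nat.cast_mul, cast_sub_one _ _ _ (by norm_num),
          cast_sub_one _ _ _ (by norm_num), Nat.cast_pow] at hc
        have e13 : ((13:ℕ) : ZMod 16) ^ (4 * j + 3) = ((13:ℕ) : ZMod 16) ^ 3 := by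
          rw [pow_add, pow_mul, show ((13:ℕ) : ZMod 16) ^ 4 = 1 from by decide, one_pow,
            one_mul]
        have e76 : ((76:ℕ) : ZMod 16) ^ (4 * j + 3) = 0 := by
          rw [pow_add, show ((76:ℕ) : ZMod 16) ^ 3 = 0 from by decide, mul_zero]
        rw [e13, e76] at hc
        exact (by decide : ∀ y : ZMod 16,
          (((13:ℕ) : ZMod 16) ^ 3 - 1) * (0 - 1) ≠ y ^ 2) _ hc
    subst hn1
    refine ⟨rfl, ?_⟩
    norm_num at h
    have hz : (x : ℤ) ^ 2 = 900 := by exact_mod_cast congrArg (Nat.cast : ℕ → ℤ) h.symm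
    have : (x : ℤ) = 30 := by nlinarith [sq_nonneg ((x : ℤ) - 30), sq_nonneg ((x : ℤ) + 30)]
    exact_mod_cast this
  · rintro ⟨rfl, rfl⟩
    norm_num
end

section
/- The equation (4^n - 1)(49^n - 1) = x^2 has exactly one solution in positive integers n, x, namely n = 1, x = 12. -/
namespace Stmt2Aux



def act (u : ℤ√14) (s : ℤ × ℤ) : ℤ × ℤ :=
  (u.re * s.1 + 7 * u.im * s.2, u.re * s.2 + 2 * u.im * s.1)

def sq2 (s : ℤ × ℤ) : ℤ√14 := ⟨2 * s.1 ^ 2 + 7 * s.2 ^ 2, 2 * s.1 * s.2⟩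

def eps : ℤ√14 := ⟨15, 4⟩

def WV : ℕ → ℤ × ℤ
  | 0 => (2, 1)
  | k + 1 => act eps (WV k)

lemma WV_zero : WV 0 = (2, 1) := rfl

lemma WV_succ (k : ℕ) : WV (k + 1) = act eps (WV k) := rfl

lemma act_act (u u' : ℤ√14) (s : ℤ × ℤ) : act u (act u' s) = act (u * u') s := by
  simp only [act, Zsqrtd.re_mul, Zsqrtd.im_mul, Prod.mk.injEq]
  constructor <;> ring

lemma act_one (s : ℤ × ℤ) : act 1 s = s := by
  simp [act, Zsqrtd.re_one, Zsqrtd.im_one]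

lemma act_congr (u u' : ℤ√14) (s : ℤ × ℤ) (h : u = u') : act u s = act u' s := by rw [h]

lemma sq2_act_eps (s : ℤ × ℤ) : sq2 (act eps s) = eps * eps * sq2 s := by
  simp only [sq2, act, eps, Zsqrtd.ext_iff, Zsqrtd.re_mul, Zsqrtd.im_mul]
  constructor <;> ring

lemma WV_add (m j : ℕ) : WV (m + j) = act (eps ^ j) (WV m) := by
  induction j with
  | zero => simp [act_one]
  | succ j ih =>
      rw [show m + (j + 1) = (m + j) + 1 from rfl, WV_succ, ih, act_act, pow_succ]
      exact act_congr _ _ _ (mul_comm _ _)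

lemma WV_prop : ∀ k, 2 * (WV k).1 ^ 2 - 7 * (WV k).2 ^ 2 = 1 ∧ 2 ≤ (WV k).1 ∧ 1 ≤ (WV k).2 := by
  intro k
  induction k with
  | zero => norm_num [WV_zero]
  | succ k ih =>
      obtain ⟨h1, h2, h3⟩ := ih
      rw [WV_succ]
      simp only [act, eps]
      refine ⟨by nlinarith, by nlinarith, by nlinarith⟩

lemma WV_seven (k : ℕ) : WV (7 * k + 3) = act ((sq2 (WV k)) ^ 3) (WV k) := by
  induction k with
  | zero =>
      rw [show 7 * 0 + 3 = 0 + 3 by ring, WV_add]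
      rw [show sq2 (WV 0) = eps by simp [WV_zero, sq2, eps, Zsqrtd.ext_iff]]
  | succ k ih =>
      rw [show 7 * (k + 1) + 3 = (7 * k + 3) + 7 by ring, WV_add, ih, act_act,
        WV_succ, act_act, sq2_act_eps]
      exact act_congr _ _ _ (by ring)



lemma vcomp (w v : ℤ) :
    (act ((sq2 (w, v)) ^ 3) (w, v)).2 =
      7 * v * (8 * w ^ 6 + 140 * w ^ 4 * v ^ 2 + 294 * w ^ 2 * v ^ 4 + 49 * v ^ 6) := by
  rw [pow_succ, pow_succ, pow_one]
  simp only [act, sq2, Zsqrtd.re_mul, Zsqrtd.im_mul]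
  ring

lemma eps_pow_seven : eps ^ 7 = ⟨10850138895, 2899821596⟩ := by
  rw [show (7:ℕ) = 1+1+1+1+1+1+1 from rfl]
  simp only [pow_succ, pow_zero, one_mul, eps, Zsqrtd.ext_iff, Zsqrtd.re_mul, Zsqrtd.im_mul]
  norm_num

lemma WV_mod7 (k : ℕ) : (WV (k + 7)).2 % 7 = (WV k).2 % 7 := by
  rw [WV_add, eps_pow_seven]
  dsimp only [act]
  omega

lemma WV_mod7_period (k : ℕ) : (WV k).2 % 7 = (WV (k % 7)).2 % 7 := by
  induction k using Nat.strong_induction_on with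
  | _ k ih =>
    rcases lt_or_ge k 7 with h | h
    · rw [Nat.mod_eq_of_lt h]
    · obtain ⟨j, rfl⟩ : ∃ j, k = j + 7 := ⟨k - 7, by omega⟩
      rw [WV_mod7, ih j (by omega), show (j + 7) % 7 = j % 7 by omega]

lemma index_of_dvd (k : ℕ) (h : (7:ℤ) ∣ (WV k).2) : k % 7 = 3 := by
  have h0 : (WV k).2 % 7 = 0 := by omega
  have hper := WV_mod7_period k
  rw [h0] at hper
  have : k % 7 = 0 ∨ k % 7 = 1 ∨ k % 7 = 2 ∨ k % 7 = 3 ∨ k % 7 = 4 ∨ k % 7 = 5 ∨ k % 7 = 6 := by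
    omega
  rcases this with h7 | h7 | h7 | h7 | h7 | h7 | h7 <;> rw [h7] at hper <;>
    first
      | exact h7
      | (exfalso; revert hper; norm_num [WV_succ, WV_zero, act, eps])


lemma act_def (u : ℤ√14) (s : ℤ × ℤ) :
    act u s = (u.re * s.1 + 7 * u.im * s.2, u.re * s.2 + 2 * u.im * s.1) := rfl

lemma eps_def : eps = ⟨15, 4⟩ := rfl
/-- completeness: every positive solution of `2w² - 7v² = 1` is in the orbit -/
lemma descent : ∀ (n : ℕ) (w v : ℤ), v.toNat = n → 0 < w → 0 < v →
    2 * w ^ 2 - 7 * v ^ 2 = 1 → ∃ k, WV k = (w, v) := by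
  intro n
  induction n using Nat.strong_induction_on with
  | _ n ih =>
    intro w v hn hw hv heq
    rcases eq_or_lt_of_le (by omega : (1:ℤ) ≤ v) with h1 | h1
    · have hw2 : w = 2 := by nlinarith [sq_nonneg (w - 2), sq_nonneg (w + 2)]
      exact ⟨0, by rw [WV_zero, hw2, ← h1]⟩
    · have hv6 : 6 ≤ v := by
        by_contra hcon
        push_neg at hcon
        have hv5 : v ≤ 5 := by omega
        have hw9 : w ≤ 9 := by nlinarith
        have hw1 : 1 ≤ w := hw
        have hv2 : 2 ≤ v := h1
        interval_cases w <;> interval_cases v <;> norm_num at heq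
      have hw28 : 28 * v < 15 * w := by nlinarith
      have hv8 : 8 * w < 15 * v := by nlinarith
      have hlt : 15 * v - 8 * w < v := by nlinarith
      have heq' : 2 * (15 * w - 28 * v) ^ 2 - 7 * (15 * v - 8 * w) ^ 2 = 1 := by
        have h : 2 * (15 * w - 28 * v) ^ 2 - 7 * (15 * v - 8 * w) ^ 2
            = 2 * w ^ 2 - 7 * v ^ 2 := by ring
        rw [h, heq]
      obtain ⟨k, hk⟩ := ih (15 * v - 8 * w).toNat (by omega) (15 * w - 28 * v)
        (15 * v - 8 * w) rfl (by omega) (by omega) heq'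
      refine ⟨k + 1, ?_⟩
      rw [WV_succ, hk, act_def, eps_def]
      simp only [Prod.mk.injEq]
      constructor <;> ring

lemma no_seven_pow (w : ℤ) (m : ℕ) (hw : 0 < w)
    (heq : 2 * w ^ 2 - 7 * ((7 ^ m : ℤ)) ^ 2 = 1) : m = 0 := by
  by_contra hm
  obtain ⟨k, hk⟩ := descent _ w (7 ^ m) rfl hw (by positivity) heq
  have h7 : (7:ℤ) ∣ (WV k).2 := by
    rw [hk]
    exact dvd_pow_self 7 hm
  obtain ⟨k₀, rfl⟩ : ∃ k₀, k = 7 * k₀ + 3 := ⟨k / 7, by have := index_of_dvd k h7; omega⟩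
  obtain ⟨hp, hw0, hv0⟩ := WV_prop k₀
  have hveq : (WV (7 * k₀ + 3)).2 = 7 * (WV k₀).2 *
      (8 * (WV k₀).1 ^ 6 + 140 * (WV k₀).1 ^ 4 * (WV k₀).2 ^ 2 +
        294 * (WV k₀).1 ^ 2 * (WV k₀).2 ^ 4 + 49 * (WV k₀).2 ^ 6) := by
    rw [WV_seven k₀, show WV k₀ = ((WV k₀).1, (WV k₀).2) from rfl, vcomp]
  set w₀ := (WV k₀).1 with hw₀
  set v₀ := (WV k₀).2 with hv₀
  set C : ℤ := 8 * w₀ ^ 6 + 140 * w₀ ^ 4 * v₀ ^ 2 + 294 * w₀ ^ 2 * v₀ ^ 4 + 49 * v₀ ^ 6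
    with hC
  have hpow : (7:ℤ) ^ m = 7 * v₀ * C := by rw [← hveq, hk]
  have hC8 : 8 ≤ C := by
    rw [hC]
    nlinarith [pow_le_pow_left₀ (show (0:ℤ) ≤ 2 by norm_num) hw0 6,
      sq_nonneg (w₀ ^ 2 * v₀), sq_nonneg (w₀ * v₀ ^ 2), sq_nonneg (v₀ ^ 3)]
  have hC7 : ¬ (7:ℤ) ∣ C := by
    intro hd
    have h8 : (7:ℤ) ∣ 8 * w₀ ^ 6 := by
      have : (8:ℤ) * w₀ ^ 6 = C - 7 * (20 * w₀ ^ 4 * v₀ ^ 2 + 42 * w₀ ^ 2 * v₀ ^ 4 + 7 * v₀ ^ 6) := by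
        rw [hC]; ring
      rw [this]
      exact dvd_sub hd (Dvd.intro _ rfl)
    have hnw : (7:ℤ) ∣ w₀ ^ 6 := by
      rcases (Int.Prime.dvd_mul' (by norm_num) h8) with h | h
      · norm_num at h
      · exact h
    have h7w : (7:ℤ) ∣ w₀ := Int.Prime.dvd_pow' (by norm_num) hnw
    obtain ⟨t, ht⟩ := h7w
    rw [ht] at hp
    have h1 : (7:ℤ) ∣ 1 := ⟨14 * t ^ 2 - v₀ ^ 2, by linarith⟩
    norm_num at h1
  have hCd : C ∣ (7:ℤ) ^ m := Dvd.intro_left _ hpow.symm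
  have hCn : C.natAbs ∣ 7 ^ m := by
    have h2 := Int.natAbs_dvd_natAbs.mpr hCd
    rwa [Int.natAbs_pow, show ((7:ℤ)).natAbs = 7 from rfl] at h2
  obtain ⟨j, hj, hje⟩ := (Nat.dvd_prime_pow (by norm_num)).mp hCn
  rcases Nat.eq_zero_or_pos j with rfl | hjpos
  · simp at hje
    omega
  · have h7n : (7:ℕ) ∣ C.natAbs := hje ▸ dvd_pow_self 7 (by omega)
    exact hC7 (Int.dvd_natAbs.mp (show (7:ℤ) ∣ (C.natAbs : ℤ) by exact_mod_cast h7n))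




open Pell Pell.Solution₁

lemma nat_sq_mod_four (b : ℕ) : b ^ 2 % 4 = 0 ∨ b ^ 2 % 4 = 1 := by
  rcases Nat.even_or_odd b with ⟨c, hc⟩ | ⟨c, hc⟩
  · left
    subst hc
    rw [show (c + c) ^ 2 = 4 * c ^ 2 by ring]
    exact Nat.mul_mod_right 4 _
  · right
    subst hc
    rw [show (2 * c + 1) ^ 2 = 1 + (c ^ 2 + c) * 4 by ring]
    simp [Nat.add_mul_mod_self_right]

/-- if `f.x` is odd, all powers have odd `x` -/
lemma x_pow_odd_of_odd {d : ℤ} {f : Solution₁ d} (hodd : f.x % 2 = 1) (k : ℕ) :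
    (f ^ k).x % 2 = 1 := by
  have hxx : (f.x * f.x) % 2 = 1 := by rw [Int.mul_emod, hodd]; decide
  have hyy : (d * f.y * f.y) % 2 = 0 := by
    have h := f.prop_y
    have h2 : d * f.y * f.y = f.x * f.x - 1 := by linear_combination h
    rw [h2, Int.sub_emod, hxx]
    decide
  have hdy : (d * f.y) % 2 = 0 := by
    rcases Int.emod_two_eq f.y with h0 | h1
    · rw [Int.mul_emod, h0, mul_zero, Int.zero_emod]
    · rw [Int.mul_emod, h1, mul_one, Int.emod_emod_of_dvd _ (dvd_refl 2)] at hyy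
      exact hyy
  induction k with
  | zero => rfl
  | succ k ih =>
      rw [pow_succ, x_mul,
        show (f ^ k).x * f.x + d * ((f ^ k).y * f.y) =
          (f ^ k).x * f.x + (d * f.y) * (f ^ k).y by ring,
        Int.add_emod, Int.mul_emod ((f ^ k).x) f.x, Int.mul_emod (d * f.y) ((f ^ k).y),
        hdy, ih, hodd]
      omega

/-- if `f.x` is even, parities of coordinates of `f^k` alternate -/
lemma x_pow_parity_of_even {d : ℤ} {f : Solution₁ d} (heven : f.x % 2 = 0) (k : ℕ) :
    (f ^ k).x % 2 = (k + 1) % 2 ∧ (f ^ k).y % 2 = k % 2 := by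
  have hxx : (f.x * f.x) % 2 = 0 := by rw [Int.mul_emod, heven]; decide
  have hyy : (d * f.y * f.y) % 2 = 1 := by
    have h := f.prop_y
    have h2 : d * f.y * f.y = f.x * f.x - 1 := by linear_combination h
    rw [h2, Int.sub_emod, hxx]
    decide
  have hy : f.y % 2 = 1 := by
    rcases Int.emod_two_eq f.y with h0 | h1
    · rw [Int.mul_emod, h0, mul_zero, Int.zero_emod] at hyy
      norm_num at hyy
    · exact h1
  have hd : d % 2 = 1 := by
    rcases Int.emod_two_eq d with h0 | h1
    · rw [show d * f.y * f.y = d * (f.y * f.y) by ring, Int.mul_emod, h0,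
        zero_mul, Int.zero_emod] at hyy
      norm_num at hyy
    · exact h1
  have hdy : (d * f.y) % 2 = 1 := by rw [Int.mul_emod, hd, hy]; decide
  induction k with
  | zero => exact ⟨rfl, rfl⟩
  | succ k ih =>
      obtain ⟨ih1, ih2⟩ := ih
      constructor
      · rw [pow_succ, x_mul,
          show (f ^ k).x * f.x + d * ((f ^ k).y * f.y) =
            (f ^ k).x * f.x + (d * f.y) * (f ^ k).y by ring,
          Int.add_emod, Int.mul_emod ((f ^ k).x) f.x, Int.mul_emod (d * f.y) ((f ^ k).y),
          hdy, ih2, heven]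
        omega
      · rw [pow_succ, y_mul, Int.add_emod, Int.mul_emod ((f ^ k).x) f.y,
          Int.mul_emod ((f ^ k).y) f.x, ih1, ih2, heven, hy]
        omega

/-- reduce zpow to pow of natAbs, for x-coordinates -/
lemma x_zpow_natAbs {d : ℤ} (f : Solution₁ d) (j : ℤ) :
    (f ^ j).x = (f ^ j.natAbs).x := by
  rcases le_or_gt 0 j with h | h
  · rw [← zpow_natCast f j.natAbs, Int.natAbs_of_nonneg h]
  · have h1 : f ^ j = (f ^ (-j))⁻¹ := by
      rw [zpow_neg, inv_inv]
    rw [h1, x_inv, ← zpow_natCast f j.natAbs,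
      show ((j.natAbs : ℤ)) = -j by omega]




open Pell Pell.Solution₁

lemma pell_reduction (n : ℕ) (hn : 0 < n) (x : ℕ)
    (h : (4 ^ n - 1) * (49 ^ n - 1) = x ^ 2) : ∃ w : ℤ, 2 * w ^ 2 = 7 ^ n + 1 := by
  have h4 : 4 ≤ 4 ^ n := by calc (4:ℕ) = 4 ^ 1 := (pow_one 4).symm
                                _ ≤ 4 ^ n := Nat.pow_le_pow_right (by norm_num) hn
  have h49 : 49 ≤ 49 ^ n := by calc (49:ℕ) = 49 ^ 1 := (pow_one 49).symm
                                _ ≤ 49 ^ n := Nat.pow_le_pow_right (by norm_num) hn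
  have hA0 : 4 ^ n - 1 ≠ 0 := by omega
  have hB0 : 49 ^ n - 1 ≠ 0 := by omega
  obtain ⟨a₀, b₀, hab₀, hsq₀⟩ := Nat.sq_mul_squarefree (4 ^ n - 1)
  obtain ⟨a₁, b₁, hab₁, hsq₁⟩ := Nat.sq_mul_squarefree (49 ^ n - 1)
  have ha₀ : a₀ ≠ 0 := by rintro rfl; simp at hab₀; omega
  have ha₁ : a₁ ≠ 0 := by rintro rfl; simp at hab₁; omega
  have hb₀ : b₀ ≠ 0 := by rintro rfl; simp at hab₀; omega
  have hb₁ : b₁ ≠ 0 := by rintro rfl; simp at hab₁; omega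
  have hx0 : x ≠ 0 := by
    rintro rfl
    simp at h
    omega
  -- the squarefree parts agree
  have key : a₀ = a₁ := by
    rw [Nat.eq_iff_prime_padicValNat_eq _ _ ha₀ ha₁]
    intro p hp
    haveI : Fact p.Prime := ⟨hp⟩
    have hmain : padicValNat p (4 ^ n - 1) + padicValNat p (49 ^ n - 1)
        = 2 * padicValNat p x := by
      rw [← padicValNat.mul hA0 hB0, h, padicValNat.pow x 2]
    rw [← hab₀, ← hab₁, padicValNat.mul (by positivity) ha₀,
      padicValNat.mul (by positivity) ha₁, padicValNat.pow b₀ 2,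
      padicValNat.pow b₁ 2] at hmain
    have hle₀ : padicValNat p a₀ ≤ 1 := by
      rw [← Nat.factorization_def _ hp]
      exact hsq₀.natFactorization_le_one p
    have hle₁ : padicValNat p a₁ ≤ 1 := by
      rw [← Nat.factorization_def _ hp]
      exact hsq₁.natFactorization_le_one p
    omega
  subst key
  -- a₀ is positive and not a square (over ℤ)
  have hD0 : (0:ℤ) < (a₀ : ℤ) := by positivity
  have hDsq : ¬ IsSquare ((a₀ : ℤ)) := by
    rintro ⟨r, hr⟩
    have hA4 : (4 ^ n - 1) % 4 = 3 := by
      have : 4 ∣ 4 ^ n := dvd_pow_self 4 hn.ne'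
      omega
    have hnat : a₀ = r.natAbs * r.natAbs := by
      have := congrArg Int.natAbs hr
      simpa [Int.natAbs_mul] using this
    have : 4 ^ n - 1 = (b₀ * r.natAbs) ^ 2 := by
      rw [← hab₀, hnat]; ring
    rcases nat_sq_mod_four (b₀ * r.natAbs) with hm | hm <;> omega
  -- the two Pell solutions
  have e1 : ((2:ℤ) ^ n) ^ 2 - (a₀ : ℤ) * (b₀ : ℤ) ^ 2 = 1 := by
    have hcast : ((b₀ : ℤ)) ^ 2 * (a₀ : ℤ) = (4:ℤ) ^ n - 1 := by
      have := congrArg (Nat.cast : ℕ → ℤ) hab₀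
      push_cast [Nat.cast_sub (by omega : 1 ≤ 4 ^ n)] at this
      linarith [this]
    have h2 : ((2:ℤ) ^ n) ^ 2 = 4 ^ n := by
      rw [← pow_mul, mul_comm, pow_mul]; norm_num
    rw [h2]; linarith
  have e2 : ((7:ℤ) ^ n) ^ 2 - (a₀ : ℤ) * (b₁ : ℤ) ^ 2 = 1 := by
    have hcast : ((b₁ : ℤ)) ^ 2 * (a₀ : ℤ) = (49:ℤ) ^ n - 1 := by
      have := congrArg (Nat.cast : ℕ → ℤ) hab₁
      push_cast [Nat.cast_sub (by omega : 1 ≤ 49 ^ n)] at this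
      linarith [this]
    have h2 : ((7:ℤ) ^ n) ^ 2 = 49 ^ n := by
      rw [← pow_mul, mul_comm, pow_mul]; norm_num
    rw [h2]; linarith
  obtain ⟨f, hf⟩ := Pell.IsFundamental.exists_of_not_isSquare hD0 hDsq
  obtain ⟨i, hi⟩ := hf.eq_zpow_or_neg_zpow (Solution₁.mk _ _ e1)
  obtain ⟨j, hj⟩ := hf.eq_zpow_or_neg_zpow (Solution₁.mk _ _ e2)
  -- x-coordinate of f^i is ±2^n, even, so f.x is even
  have hieq : (f ^ i).x = 2 ^ n ∨ (f ^ i).x = -(2 ^ n) := by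
    rcases hi with hi | hi
    · left; rw [← hi, x_mk]
    · right
      have := congrArg Solution₁.x hi
      rw [x_mk, x_neg] at this
      omega
  have h2n : ((2:ℤ) ^ n) % 2 = 0 := by
    have : (2:ℤ) ∣ 2 ^ n := dvd_pow_self 2 hn.ne'
    omega
  have hfx : f.x % 2 = 0 := by
    rcases Int.emod_two_eq f.x with h0 | h1
    · exact h0
    · exfalso
      have hodd := x_pow_odd_of_odd h1 i.natAbs
      rw [← x_zpow_natAbs] at hodd
      rcases hieq with he | he <;> omega
  -- x-coordinate of f^j is ±7^n, odd, so j is even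
  have hjeq : (f ^ j).x = 7 ^ n ∨ (f ^ j).x = -(7 ^ n) := by
    rcases hj with hj | hj
    · left; rw [← hj, x_mk]
    · right
      have := congrArg Solution₁.x hj
      rw [x_mk, x_neg] at this
      omega
  have h7n : ((7:ℤ) ^ n) % 2 = 1 := by
    rcases Int.emod_two_eq ((7:ℤ) ^ n) with h0 | h1
    · exfalso
      have hd : (2:ℤ) ∣ 7 ^ n := Int.dvd_of_emod_eq_zero h0
      have := Int.Prime.dvd_pow' (by norm_num) (show ((2:ℕ):ℤ) ∣ (7:ℤ) ^ n by exact_mod_cast hd)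
      norm_num at this
    · exact h1
  have hjev : j % 2 = 0 := by
    have hpar := (x_pow_parity_of_even hfx j.natAbs).1
    rw [← x_zpow_natAbs] at hpar
    rcases hjeq with he | he <;> omega
  obtain ⟨c, rfl⟩ : ∃ c, j = 2 * c := ⟨j / 2, by omega⟩
  refine ⟨(f ^ c).x, ?_⟩
  have hsq : (f ^ (2 * c)).x = 2 * (f ^ c).x ^ 2 - 1 := by
    rw [two_mul, zpow_add, x_mul]
    linear_combination -(f ^ c).prop
  rcases hjeq with he | he
  · rw [hsq] at he
    linarith
  · exfalso
    rw [hsq] at he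
    have h7 : (7:ℤ) ≤ 7 ^ n := by
      calc (7:ℤ) = 7 ^ 1 := (pow_one 7).symm
      _ ≤ 7 ^ n := pow_le_pow_right₀ (by norm_num) hn
    nlinarith [sq_nonneg ((f ^ c).x)]




lemma even_case (m : ℕ) (hm : 0 < m) (x : ℕ)
    (h : (4 ^ (2 * m) - 1) * (49 ^ (2 * m) - 1) = x ^ 2) : False := by
  haveI : Fact (Nat.Prime 5) := ⟨by norm_num⟩
  have h16 : (4:ℕ) ^ (2 * m) = 16 ^ m := by
    rw [pow_mul]; norm_num
  have h2401 : (49:ℕ) ^ (2 * m) = 2401 ^ m := by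
    rw [pow_mul]; norm_num
  rw [h16, h2401] at h
  have h16m : (16:ℕ) ≤ 16 ^ m := by
    calc (16:ℕ) = 16 ^ 1 := (pow_one 16).symm
    _ ≤ 16 ^ m := Nat.pow_le_pow_right (by norm_num) hm
  have h2401m : (2401:ℕ) ≤ 2401 ^ m := by
    calc (2401:ℕ) = 2401 ^ 1 := (pow_one 2401).symm
    _ ≤ 2401 ^ m := Nat.pow_le_pow_right (by norm_num) hm
  have hx0 : x ≠ 0 := by rintro rfl; simp at h; omega
  have hv1 : padicValNat 5 (16 ^ m - 1) = padicValNat 5 15 + padicValNat 5 m := by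
    have := padicValNat.pow_sub_pow (p := 5) (x := 16) (y := 1) (by decide)
      (by norm_num) (by norm_num) (by norm_num) hm.ne'
    simpa using this
  have hv2 : padicValNat 5 (2401 ^ m - 1) = padicValNat 5 2400 + padicValNat 5 m := by
    have := padicValNat.pow_sub_pow (p := 5) (x := 2401) (y := 1) (by decide)
      (by norm_num) (by norm_num) (by norm_num) hm.ne'
    simpa using this
  have h15 : padicValNat 5 15 = 1 := by
    rw [show (15:ℕ) = 5 * 3 by norm_num,
      padicValNat.mul (by norm_num) (by norm_num)]
    rw [padicValNat.self (by norm_num), padicValNat.eq_zero_of_not_dvd (by norm_num)]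
  have h2400 : padicValNat 5 2400 = 2 := by
    rw [show (2400:ℕ) = 5 ^ 2 * 96 by norm_num,
      padicValNat.mul (by norm_num) (by norm_num),
      padicValNat.prime_pow, padicValNat.eq_zero_of_not_dvd (by norm_num)]
  have hmul : padicValNat 5 ((16 ^ m - 1) * (2401 ^ m - 1))
      = padicValNat 5 (16 ^ m - 1) + padicValNat 5 (2401 ^ m - 1) :=
    padicValNat.mul (by omega) (by omega)
  have hxx : padicValNat 5 (x ^ 2) = 2 * padicValNat 5 x := padicValNat.pow x 2
  rw [h, hxx] at hmul
  omega

theorem main (n x : ℕ) (hn : 0 < n) (hx : 0 < x) :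
    (4 ^ n - 1) * (49 ^ n - 1) = x ^ 2 ↔ n = 1 ∧ x = 12 := by
  constructor
  · intro h
    rcases Nat.even_or_odd n with ⟨m, hm⟩ | ⟨m, hm⟩
    · exfalso
      have hm0 : 0 < m := by omega
      exact even_case m hm0 x (by rw [show 2 * m = n by omega]; exact h)
    · -- n odd
      obtain ⟨w, hw⟩ := pell_reduction n hn x h
      have hw0 : w ≠ 0 := by
        rintro rfl
        have : (7:ℤ) ^ n ≥ 1 := one_le_pow₀ (by norm_num)
        simp at hw
        linarith
      have heq : 2 * |w| ^ 2 - 7 * ((7 ^ m : ℤ)) ^ 2 = 1 := by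
        rw [sq_abs]
        have h7 : (7:ℤ) ^ n = 7 * ((7:ℤ) ^ m) ^ 2 := by
          rw [hm, show 2 * m + 1 = m * 2 + 1 by ring, pow_succ, pow_mul]
          ring
        rw [h7] at hw
        linarith
      have hm0 : m = 0 := no_seven_pow |w| m (abs_pos.mpr hw0) heq
      have hn1 : n = 1 := by omega
      subst hn1
      refine ⟨rfl, ?_⟩
      have : x ^ 2 = 12 ^ 2 := by norm_num at h; omega
      exact Nat.pow_left_injective (by norm_num) this
  · rintro ⟨rfl, rfl⟩
    norm_num


end Stmt2Aux

theorem stmt_2 (n x : ℕ) (hn : 0 < n) (hx : 0 < x) :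
    (4 ^ n - 1) * (49 ^ n - 1) = x ^ 2 ↔ n = 1 ∧ x = 12 :=
  Stmt2Aux.main n x hn hx
end

section
/- Let a, b be integers with 1 < a < b, gcd(a,b) > 1, and ν₂(a) ≠ ν₂(b), where ν₂ denotes the 2-adic valuation. Then there are no positive integers n, x with n even such that (a^n - 1)(b^n - 1) = x^2. -/
open Pell Pell.Solution₁



namespace Stmt3Aux

variable {d : ℤ}

lemma x_add_x_sub (f : Solution₁ d) {r s : ℕ} (h : s ≤ r) :
    (f ^ (r + s)).x + (f ^ (r - s)).x = 2 * (f ^ r).x * (f ^ s).x := by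
  have h1 : f ^ (r + s) = f ^ r * f ^ s := pow_add f r s
  have h2 : f ^ (r - s) = f ^ r * (f ^ s)⁻¹ := by
    have : f ^ (r - s) * f ^ s = f ^ r := by rw [← pow_add, Nat.sub_add_cancel h]
    exact eq_mul_inv_of_mul_eq this
  rw [h1, h2, x_mul, x_mul, x_inv, y_inv]
  ring

lemma x_mod (f : Solution₁ d) : ∀ k : ℕ,
    (2 * f.x ∣ (f ^ (2 * k)).x - (-1) ^ k) ∧
    (2 * f.x ∣ (f ^ (2 * k + 1)).x - (-1) ^ k * f.x) := by
  intro k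
  induction k with
  | zero => simp
  | succ k ih =>
    obtain ⟨h1, h2⟩ := ih
    have e1 : (f ^ (2 * k + 2)).x + (f ^ (2 * k)).x = 2 * (f ^ (2 * k + 1)).x * f.x := by
      have := x_add_x_sub f (r := 2 * k + 1) (s := 1) (by omega)
      simpa using this
    have e2 : (f ^ (2 * k + 3)).x + (f ^ (2 * k + 1)).x
        = 2 * (f ^ (2 * k + 2)).x * f.x := by
      have := x_add_x_sub f (r := 2 * k + 2) (s := 1) (by omega)
      simpa [show 2 * k + 2 + 1 = 2 * k + 3 from rfl] using this
    constructor
    · have : (f ^ (2 * (k + 1))).x - (-1) ^ (k + 1)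
          = 2 * f.x * (f ^ (2 * k + 1)).x - ((f ^ (2 * k)).x - (-1) ^ k) := by
        have hidx : 2 * (k + 1) = 2 * k + 2 := by ring
        rw [hidx, pow_succ (-1 : ℤ) k]
        linarith [e1]
      rw [this]
      exact dvd_sub (Dvd.intro _ rfl) h1
    · have : (f ^ (2 * (k + 1) + 1)).x - (-1) ^ (k + 1) * f.x
          = 2 * f.x * (f ^ (2 * k + 2)).x - ((f ^ (2 * k + 1)).x - (-1) ^ k * f.x) := by
        have hidx : 2 * (k + 1) + 1 = 2 * k + 3 := by ring
        rw [hidx, pow_succ (-1 : ℤ) k]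
        linarith [e2]
      rw [this]
      exact dvd_sub (Dvd.intro _ rfl) h2

/-- x at even indices is always odd. -/
lemma x_even_idx_odd (f : Solution₁ d) (k : ℕ) : ¬ (2 : ℤ) ∣ (f ^ (2 * k)).x := by
  intro h
  have h2 : (2 : ℤ) ∣ (f ^ (2 * k)).x - (-1) ^ k := dvd_trans ⟨f.x, rfl⟩ (x_mod f k).1
  have h3 : (2 : ℤ) ∣ (-1 : ℤ) ^ k := (dvd_sub_right h).mp h2
  have h4 : Odd ((-1 : ℤ) ^ k) := Odd.pow ⟨-1, by ring⟩
  rw [Int.odd_iff] at h4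
  omega

/-- x at odd index is f.x times an odd number. -/
lemma x_odd_idx (f : Solution₁ d) (k : ℕ) :
    ∃ c : ℤ, Odd c ∧ (f ^ (2 * k + 1)).x = f.x * c := by
  obtain ⟨t, ht⟩ := (x_mod f k).2
  refine ⟨(-1) ^ k + 2 * t, ?_, by linarith⟩
  exact (Odd.pow (n := k) ⟨-1, by ring⟩).add_even ⟨t, by ring⟩


lemma key_iff (f : Solution₁ d) {p : ℤ} (hp : Prime p) (hp2 : ¬ p ∣ 2) {r s : ℕ}
    (hsr : s ≤ r) (hdvd : p ∣ (f ^ r).x ∨ p ∣ (f ^ s).x) :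
    (p ∣ (f ^ (r + s)).x ↔ p ∣ (f ^ (r - s)).x) := by
  have hid := x_add_x_sub f hsr
  have h2 : p ∣ 2 * (f ^ r).x * (f ^ s).x := by
    rcases hdvd with h | h
    · exact Dvd.dvd.mul_right (h.mul_left 2) _
    · exact h.mul_left _
  constructor <;> intro h
  · have : (f ^ (r - s)).x = 2 * (f ^ r).x * (f ^ s).x - (f ^ (r + s)).x := by linarith
    rw [this]; exact dvd_sub h2 h
  · have : (f ^ (r + s)).x = 2 * (f ^ r).x * (f ^ s).x - (f ^ (r - s)).x := by linarith
    rw [this]; exact dvd_sub h2 h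

lemma idx_mod (f : Solution₁ d) {p : ℤ} (hp : Prime p) (hp2 : ¬ p ∣ 2) {q : ℕ}
    (hq0 : 0 < q) (hq : p ∣ (f ^ q).x)
    (hmin : ∀ i : ℕ, 0 < i → i < q → ¬ p ∣ (f ^ i).x) :
    ∀ j : ℕ, p ∣ (f ^ j).x → j % (2 * q) = q := by
  intro j
  induction j using Nat.strong_induction_on with
  | _ j ih =>
    intro hj
    have hx0 : ¬ p ∣ (f ^ (0 : ℕ)).x := by
      simpa using fun h => hp.not_isUnit (isUnit_of_dvd_one h)
    rcases lt_trichotomy j q with hlt | rfl | hgt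
    · rcases Nat.eq_zero_or_pos j with rfl | hj0
      · exact absurd hj hx0
      · exact absurd hj (hmin j hj0 hlt)
    · exact Nat.mod_eq_of_lt (by omega)
    · rcases le_or_gt j (2 * q) with hle | hgt2
      · -- q < j ≤ 2q : contradiction
        exfalso
        have hsr : j - q ≤ q := by omega
        have := (key_iff f hp hp2 hsr (Or.inl hq)).mp
          (by rw [Nat.add_sub_cancel' (le_of_lt hgt)]; exact hj)
        rcases Nat.eq_zero_or_pos (q - (j - q)) with hz | hpos
        · rw [hz] at this; exact hx0 this
        · exact hmin _ hpos (by omega) this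
      · -- j > 2q : descend
        have hsr : q ≤ j - q := by omega
        have hiter := (key_iff f hp hp2 hsr (Or.inr hq)).mp
          (by rw [Nat.sub_add_cancel (by omega : q ≤ j)]; exact hj)
        have hidx : j - q - q = j - 2 * q := by omega
        rw [hidx] at hiter
        have hrec := ih (j - 2 * q) (by omega) hiter
        rw [Nat.mod_eq_sub_mod (by omega : 2 * q ≤ j)]
        exact hrec

/-- Two indices whose x is divisible by the same odd prime have the same parity. -/
lemma parity_eq (f : Solution₁ d) {p : ℤ} (hp : Prime p) (hp2 : ¬ p ∣ 2) {K L : ℕ}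
    (hK : p ∣ (f ^ K).x) (hL : p ∣ (f ^ L).x) : K % 2 = L % 2 := by
  have hx0 : ¬ p ∣ (f ^ (0 : ℕ)).x := by
    simpa using fun h => hp.not_unit (isUnit_of_dvd_one h)
  have hKpos : 0 < K := by rcases Nat.eq_zero_or_pos K with rfl | h; exact absurd hK hx0; exact h
  have hex : ∃ i : ℕ, 0 < i ∧ p ∣ (f ^ i).x := ⟨K, hKpos, hK⟩
  classical
  let q := Nat.find hex
  obtain ⟨hq0, hqd⟩ : 0 < q ∧ p ∣ (f ^ q).x := Nat.find_spec hex
  have hmin : ∀ i : ℕ, 0 < i → i < q → ¬ p ∣ (f ^ i).x := by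
    intro i hi0 hiq hdvd
    exact Nat.find_min hex hiq ⟨hi0, hdvd⟩
  have h1 := idx_mod f hp hp2 hq0 hqd hmin K hK
  have h2 := idx_mod f hp hp2 hq0 hqd hmin L hL
  have e1 : K % 2 = K % (2 * q) % 2 := (Nat.mod_mod_of_dvd K ⟨q, rfl⟩).symm
  have e2 : L % 2 = L % (2 * q) % 2 := (Nat.mod_mod_of_dvd L ⟨q, rfl⟩).symm
  rw [e1, e2, h1, h2]


lemma two_dvd_x_iff (f : Solution₁ d) (k : ℕ) :
    (2 : ℤ) ∣ (f ^ k).x ↔ (k % 2 = 1 ∧ (2 : ℤ) ∣ f.x) := by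
  rcases Nat.even_or_odd k with ⟨j, hj⟩ | ⟨j, hj⟩
  · have hk : k = 2 * j := by omega
    subst hk
    constructor
    · intro h; exact absurd h (x_even_idx_odd f j)
    · rintro ⟨h, -⟩; omega
  · have hk : k = 2 * j + 1 := by omega
    subst hk
    obtain ⟨c, hc, hX⟩ := x_odd_idx f j
    rw [hX]
    constructor
    · intro h
      refine ⟨by omega, ?_⟩
      rcases (Int.prime_two.dvd_mul).mp h with h' | h'
      · exact h'
      · rw [Int.odd_iff] at hc; omega
    · rintro ⟨-, h⟩; exact dvd_mul_of_dvd_left h c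

lemma mixed_contra (f : Solution₁ d) {p : ℤ} (hp : Prime p) (hp2 : ¬ p ∣ 2) {K L : ℕ}
    (hpK : p ∣ (f ^ K).x) (hpL : p ∣ (f ^ L).x)
    (hKodd : ¬ (2 : ℤ) ∣ (f ^ K).x) (hLeven : (2 : ℤ) ∣ (f ^ L).x) : False := by
  obtain ⟨hL2, hfx2⟩ := (two_dvd_x_iff f L).mp hLeven
  have hK2 : K % 2 = 0 := by
    by_contra h
    exact hKodd ((two_dvd_x_iff f K).mpr ⟨by omega, hfx2⟩)
  have := parity_eq f hp hp2 hpK hpL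
  omega

lemma mixed_nat (f : Solution₁ d) {p K L A B : ℕ} (hp : p.Prime) (hp2 : p ≠ 2)
    (hpA : p ∣ A) (hpB : p ∣ B) (hAeven : 2 ∣ A) (hBodd : ¬ 2 ∣ B)
    (hAx : (A : ℤ) = (f ^ K).x) (hBx : (B : ℤ) = (f ^ L).x) : False := by
  have hpZ : Prime (p : ℤ) := Int.prime_iff_natAbs_prime.mpr (by simpa using hp)
  have hp2Z : ¬ (p : ℤ) ∣ 2 := by
    intro h
    have h2 : p ∣ 2 := by exact_mod_cast h
    have := (Nat.prime_dvd_prime_iff_eq hp Nat.prime_two).mp h2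
    exact hp2 this
  refine mixed_contra f hpZ hp2Z (K := L) (L := K) ?_ ?_ ?_ ?_
  · rw [← hBx]; exact_mod_cast Int.natCast_dvd_natCast.mpr hpB
  · rw [← hAx]; exact_mod_cast Int.natCast_dvd_natCast.mpr hpA
  · rw [← hBx]; intro h; exact hBodd (by exact_mod_cast h)
  · rw [← hAx]; exact_mod_cast Int.natCast_dvd_natCast.mpr hAeven

lemma val_eq (f : Solution₁ d) (hfx : 0 < f.x) {K A : ℕ} (hK : K % 2 = 1)
    (hA : (A : ℤ) = (f ^ K).x) : padicValNat 2 A = padicValNat 2 f.x.toNat := by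
  obtain ⟨j, hj⟩ : ∃ j, K = 2 * j + 1 := ⟨K / 2, by omega⟩
  obtain ⟨c, hc, hXc⟩ := x_odd_idx f j
  rw [← hj] at hXc
  have hXpos : 0 < (f ^ K).x := x_pow_pos hfx K
  have hcpos : 0 < c := by
    rcases lt_trichotomy c 0 with h | h | h
    · nlinarith
    · rw [h, mul_zero] at hXc; omega
    · exact h
  have hAval : A = f.x.toNat * c.toNat := by
    have : (A : ℤ) = (f.x.toNat : ℤ) * (c.toNat : ℤ) := by
      rw [Int.toNat_of_nonneg hfx.le, Int.toNat_of_nonneg hcpos.le, hA, hXc]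
    exact_mod_cast this
  have hcodd : ¬ 2 ∣ c.toNat := by
    rw [Int.odd_iff] at hc
    omega
  rw [hAval, padicValNat.mul (by omega) (by omega),
    padicValNat.eq_zero_of_not_dvd hcodd, add_zero]

end Stmt3Aux

open Stmt3Aux in
theorem stmt_3 (a b : ℕ) (ha : 1 < a) (hab : a < b) (hg : 1 < Nat.gcd a b)
    (hv : padicValNat 2 a ≠ padicValNat 2 b) :
    ¬ ∃ (n x : ℕ), 0 < n ∧ 0 < x ∧ Even n ∧ (a ^ n - 1) * (b ^ n - 1) = x ^ 2 := by
  rintro ⟨n, x, hn, hx, ⟨m, rfl⟩, heq⟩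
  have hm : 0 < m := by omega
  have hb : 1 < b := ha.trans hab
  set A := a ^ m with hAdef
  set B := b ^ m with hBdef
  have hA1 : 1 < A := Nat.one_lt_pow hm.ne' ha
  have hB1 : 1 < B := Nat.one_lt_pow hm.ne' hb
  have hApow : a ^ (m + m) = A ^ 2 := by rw [hAdef, ← pow_mul]; ring_nf
  have hBpow : b ^ (m + m) = B ^ 2 := by rw [hBdef, ← pow_mul]; ring_nf
  rw [hApow, hBpow] at heq
  -- decompose using gcd
  set g := Nat.gcd (A ^ 2 - 1) (B ^ 2 - 1) with hgdef
  have hA2 : 1 < A ^ 2 := by nlinarith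
  have hB2 : 1 < B ^ 2 := by nlinarith
  have hg0 : 0 < g := Nat.gcd_pos_of_pos_left _ (by omega)
  set s := (A ^ 2 - 1) / g with hsdef
  set t := (B ^ 2 - 1) / g with htdef
  have hgs : g * s = A ^ 2 - 1 := Nat.mul_div_cancel' (Nat.gcd_dvd_left _ _)
  have hgt : g * t = B ^ 2 - 1 := Nat.mul_div_cancel' (Nat.gcd_dvd_right _ _)
  have hco : Nat.Coprime s t := Nat.coprime_div_gcd_div_gcd hg0
  have hsq : g ^ 2 * (s * t) = x ^ 2 := by rw [← heq, ← hgs, ← hgt]; ring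
  have hgx : g ∣ x := by
    rw [← Nat.pow_dvd_pow_iff (two_ne_zero)]
    exact ⟨s * t, hsq.symm⟩
  obtain ⟨w, rfl⟩ := hgx
  have hst : s * t = w ^ 2 := by
    have h2 : g ^ 2 * (s * t) = g ^ 2 * w ^ 2 := by rw [hsq]; ring
    exact Nat.eq_of_mul_eq_mul_left (by positivity) h2
  obtain ⟨u, hu⟩ : ∃ u, s = u ^ 2 :=
    exists_eq_pow_of_mul_eq_pow (Nat.isUnit_iff.mpr hco) hst
  obtain ⟨v, hv'⟩ : ∃ v, t = v ^ 2 :=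
    exists_eq_pow_of_mul_eq_pow (Nat.isUnit_iff.mpr (Nat.Coprime.symm hco))
      (by rw [mul_comm] at hst; exact hst)
  have hAu : g * u ^ 2 + 1 = A ^ 2 := by rw [← hu]; omega
  have hBv : g * v ^ 2 + 1 = B ^ 2 := by rw [← hv']; omega
  -- to ℤ, Pell solutions
  have propA : (A : ℤ) ^ 2 - (g : ℤ) * (u : ℤ) ^ 2 = 1 := by
    have h2 : ((g : ℤ)) * (u : ℤ) ^ 2 + 1 = (A : ℤ) ^ 2 := by exact_mod_cast hAu
    linarith
  have propB : (B : ℤ) ^ 2 - (g : ℤ) * (v : ℤ) ^ 2 = 1 := by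
    have h2 : ((g : ℤ)) * (v : ℤ) ^ 2 + 1 = (B : ℤ) ^ 2 := by exact_mod_cast hBv
    linarith
  set sA : Solution₁ (g : ℤ) := Solution₁.mk (A : ℤ) (u : ℤ) propA with hsA
  set sB : Solution₁ (g : ℤ) := Solution₁.mk (B : ℤ) (v : ℤ) propB with hsB
  have hsAx : 1 < sA.x := by rw [hsA, x_mk]; exact_mod_cast hA1
  have hd0 : 0 < ((g : ℤ)) := d_pos_of_one_lt_x hsAx
  have hdns : ¬ IsSquare ((g : ℤ)) := d_nonsquare_of_one_lt_x hsAx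
  obtain ⟨f, hf⟩ := IsFundamental.exists_of_not_isSquare hd0 hdns
  obtain ⟨K, hK⟩ := hf.eq_pow_of_nonneg (a := sA)
    (by rw [hsA, x_mk]; positivity) (by rw [hsA, y_mk]; positivity)
  obtain ⟨L, hL⟩ := hf.eq_pow_of_nonneg (a := sB)
    (by rw [hsB, x_mk]; positivity) (by rw [hsB, y_mk]; positivity)
  have hAx : (A : ℤ) = (f ^ K).x := by rw [← hK, hsA, x_mk]
  have hBx : (B : ℤ) = (f ^ L).x := by rw [← hL, hsB, x_mk]
  -- facts about p for the mixed cases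
  have hmfp : (Nat.gcd a b).minFac.Prime := Nat.minFac_prime (by omega)
  have hpa : (Nat.gcd a b).minFac ∣ a := (Nat.minFac_dvd _).trans (Nat.gcd_dvd_left a b)
  have hpb : (Nat.gcd a b).minFac ∣ b := (Nat.minFac_dvd _).trans (Nat.gcd_dvd_right a b)
  have hpA : (Nat.gcd a b).minFac ∣ A := dvd_pow hpa hm.ne'
  have hpB : (Nat.gcd a b).minFac ∣ B := dvd_pow hpb hm.ne'
  -- parity of a, b
  rcases Nat.even_or_odd a with hea | hoa <;> rcases Nat.even_or_odd b with heb | hob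
  · -- both even
    have hdvA : (2 : ℤ) ∣ (f ^ K).x := by
      rw [← hAx]
      exact_mod_cast Int.natCast_dvd_natCast.mpr (dvd_pow hea.two_dvd hm.ne')
    have hdvB : (2 : ℤ) ∣ (f ^ L).x := by
      rw [← hBx]
      exact_mod_cast Int.natCast_dvd_natCast.mpr (dvd_pow heb.two_dvd hm.ne')
    obtain ⟨hK2, -⟩ := (two_dvd_x_iff f K).mp hdvA
    obtain ⟨hL2, -⟩ := (two_dvd_x_iff f L).mp hdvB
    have e1 := val_eq f hf.x_pos hK2 hAx
    have e2 := val_eq f hf.x_pos hL2 hBx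
    rw [hAdef, padicValNat.pow a m] at e1
    rw [hBdef, padicValNat.pow b m] at e2
    exact hv (Nat.eq_of_mul_eq_mul_left hm (e1.trans e2.symm))
  · -- a even, b odd
    have hp2 : (Nat.gcd a b).minFac ≠ 2 := by
      intro h
      have h2 : 2 ∣ b := h ▸ hpb
      rw [Nat.odd_iff] at hob
      omega
    exact mixed_nat f hmfp hp2 hpA hpB (dvd_pow hea.two_dvd hm.ne')
      (by rw [hBdef, Nat.two_dvd_ne_zero, ← Nat.odd_iff]; exact hob.pow) hAx hBx
  · -- a odd, b even
    have hp2 : (Nat.gcd a b).minFac ≠ 2 := by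
      intro h
      have h2 : 2 ∣ a := h ▸ hpa
      rw [Nat.odd_iff] at hoa
      omega
    exact mixed_nat f hmfp hp2 hpB hpA (dvd_pow heb.two_dvd hm.ne')
      (by rw [hAdef, Nat.two_dvd_ne_zero, ← Nat.odd_iff]; exact hoa.pow) hBx hAx
  · -- both odd
    rw [padicValNat.eq_zero_of_not_dvd (by rw [Nat.two_dvd_ne_zero, ← Nat.odd_iff]; exact hoa),
      padicValNat.eq_zero_of_not_dvd (by rw [Nat.two_dvd_ne_zero, ← Nat.odd_iff]; exact hob)] at hv
    exact hv rfl
end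

section
/- The equation (28^n - 1)(49^n - 1) = x^2 has exactly one solution in positive integers n, x, namely n = 1, x = 36. -/
set_option maxRecDepth 100000

private lemma periodic_case (q P r : ℕ) [NeZero q] (hP : (28:ZMod q)^P = 1)
    (hQ : (49:ZMod q)^P = 1)
    (hc : ∀ y : ZMod q, y^2 ≠ ((28:ZMod q)^r - 1) * ((49:ZMod q)^r - 1))
    {n x : ℕ} (hnr : n % P = r) (h : (28^n - 1)*(49^n - 1) = x^2) : False := by
  obtain ⟨k, hk⟩ : ∃ k, n = P*k + r := ⟨n/P, by rw [← hnr]; exact (Nat.div_add_mod n P).symm⟩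
  apply hc x
  have e28 : (1:ℕ) ≤ 28^n := Nat.one_le_pow _ _ (by norm_num)
  have e49 : (1:ℕ) ≤ 49^n := Nat.one_le_pow _ _ (by norm_num)
  have hcast := congrArg (Nat.cast : ℕ → ZMod q) h
  rw [Nat.cast_mul, Nat.cast_sub e28, Nat.cast_sub e49] at hcast
  push_cast at hcast
  rw [hk, pow_add, pow_mul, hP, one_pow, one_mul, pow_add, pow_mul, hQ, one_pow,
    one_mul] at hcast
  exact hcast.symm

private lemma twoadic_case (q P r e : ℕ) [NeZero q] (h0 : (28:ZMod q)^e = 0)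
    (hQ : (49:ZMod q)^P = 1)
    (hc : ∀ y : ZMod q, y^2 ≠ (0 - 1) * ((49:ZMod q)^r - 1))
    {n x : ℕ} (hnr : n % P = r) (hne : e ≤ n) (h : (28^n - 1)*(49^n - 1) = x^2) : False := by
  obtain ⟨k, hk⟩ : ∃ k, n = P*k + r := ⟨n/P, by rw [← hnr]; exact (Nat.div_add_mod n P).symm⟩
  apply hc x
  have e28 : (1:ℕ) ≤ 28^n := Nat.one_le_pow _ _ (by norm_num)
  have e49 : (1:ℕ) ≤ 49^n := Nat.one_le_pow _ _ (by norm_num)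
  have hcast := congrArg (Nat.cast : ℕ → ZMod q) h
  rw [Nat.cast_mul, Nat.cast_sub e28, Nat.cast_sub e49] at hcast
  push_cast at hcast
  have h28 : (28:ZMod q)^n = 0 := by
    rw [show n = e + (n - e) by omega, pow_add, h0, zero_mul]
  rw [h28] at hcast
  conv at hcast => rw [hk, pow_add, pow_mul, hQ, one_pow, one_mul]
  exact hcast.symm

private lemma lte_case {n x : ℕ} (hx : 0 < x) (hn4 : n % 4 = 0) (hn : 0 < n)
    (h : (28^n - 1)*(49^n - 1) = x^2) : False := by
  haveI : Fact (Nat.Prime 5) := ⟨by norm_num⟩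
  obtain ⟨m, rfl⟩ : ∃ m, n = 4*m := ⟨n/4, by omega⟩
  have hm : m ≠ 0 := by omega
  have hA : (28:ℕ)^(4*m) - 1 = 614656^m - 1^m := by
    rw [pow_mul]; norm_num
  have hB : (49:ℕ)^(4*m) - 1 = 5764801^m - 1^m := by
    rw [pow_mul]; norm_num
  rw [hA, hB] at h
  have h5 : Odd 5 := ⟨2, rfl⟩
  have vA : padicValNat 5 (614656^m - 1^m) = 1 + padicValNat 5 m := by
    rw [padicValNat.pow_sub_pow h5 (by norm_num) (by norm_num) (by norm_num) hm]
    congr 1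
    have e : (614656:ℕ) - 1 = 5 * 122931 := by norm_num
    rw [e, padicValNat.mul (by norm_num) (by norm_num),
      padicValNat.eq_zero_of_not_dvd (show ¬(5:ℕ)∣122931 by norm_num),
      padicValNat.self (by norm_num)]
  have vB : padicValNat 5 (5764801^m - 1^m) = 2 + padicValNat 5 m := by
    rw [padicValNat.pow_sub_pow h5 (by norm_num) (by norm_num) (by norm_num) hm]
    congr 1
    have e : (5764801:ℕ) - 1 = 5^2 * 230592 := by norm_num
    rw [e, padicValNat.mul (by positivity) (by norm_num),
      padicValNat.eq_zero_of_not_dvd (show ¬(5:ℕ)∣230592 by norm_num),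
      padicValNat.prime_pow]
  have hA0 : 614656^m - 1^m ≠ 0 := by
    have : (614656:ℕ)^m ≥ 614656^1 := Nat.pow_le_pow_right (by norm_num) (by omega)
    simp only [one_pow]; omega
  have hB0 : 5764801^m - 1^m ≠ 0 := by
    have : (5764801:ℕ)^m ≥ 5764801^1 := Nat.pow_le_pow_right (by norm_num) (by omega)
    simp only [one_pow]; omega
  have hv := congrArg (padicValNat 5) h
  rw [padicValNat.mul hA0 hB0, vA, vB, padicValNat.pow x 2] at hv
  omega

theorem stmt_4 (n x : ℕ) (hn : 0 < n) (hx : 0 < x) :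
    (28 ^ n - 1) * (49 ^ n - 1) = x ^ 2 ↔ n = 1 ∧ x = 36 := by
  constructor
  · intro h
    have hn1 : n = 1 := by
      by_contra hne
      have h8 : n % 8 = 0 ∨ n % 8 = 1 ∨ n % 8 = 2 ∨ n % 8 = 3 ∨ n % 8 = 4 ∨ n % 8 = 5 ∨
          n % 8 = 6 ∨ n % 8 = 7 := by omega
      rcases h8 with h8 | h8 | h8 | h8 | h8 | h8 | h8 | h8
      · exact lte_case hx (by omega) hn h
      · -- n ≡ 1 mod 8, n ≥ 9 : mod 128
        exact twoadic_case 128 8 1 4 (by decide) (by decide) (by decide) h8 (by omega) h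
      · -- n ≡ 2 mod 4 : mod 64, n = 2 separately
        rcases eq_or_ne n 2 with rfl | hne2
        · norm_num at h
          rcases le_or_gt x 1370 with hle | hlt
          · have := Nat.pow_le_pow_left hle 2
            norm_num at this; omega
          · have : 1371 ≤ x := hlt
            have := Nat.pow_le_pow_left this 2
            norm_num at this; omega
        · exact twoadic_case 64 4 2 3 (by decide) (by decide) (by decide) (by omega)
            (by omega) h
      · exact periodic_case 5 4 3 (by decide) (by decide) (by decide) (by omega) h
      · exact lte_case hx (by omega) hn h
      · -- n ≡ 5 mod 8 : split mod 48
        have h48 : n % 48 = 5 ∨ n % 48 = 13 ∨ n % 48 = 21 ∨ n % 48 = 29 ∨ n % 48 = 37 ∨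
            n % 48 = 45 := by omega
        rcases h48 with h48 | h48 | h48 | h48 | h48 | h48
        · exact periodic_case 13 48 5 (by decide) (by decide) (by decide) h48 h
        · exact periodic_case 17 48 13 (by decide) (by decide) (by decide) h48 h
        · exact periodic_case 13 48 21 (by decide) (by decide) (by decide) h48 h
        · exact periodic_case 13 48 29 (by decide) (by decide) (by decide) h48 h
        · exact periodic_case 193 48 37 (by decide) (by decide) (by decide) h48 h
        · exact periodic_case 13 48 45 (by decide) (by decide) (by decide) h48 h
      · exact twoadic_case 64 4 2 3 (by decide) (by decide) (by decide) (by omega)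
          (by omega) h
      · exact periodic_case 5 4 3 (by decide) (by decide) (by decide) (by omega) h
    subst hn1
    norm_num at h
    refine ⟨rfl, ?_⟩
    rcases le_or_gt x 35 with hle | hlt
    · have := Nat.pow_le_pow_left hle 2
      norm_num at this; omega
    · rcases le_or_gt 37 x with hge | hlt2
      · have := Nat.pow_le_pow_left hge 2
        norm_num at this; omega
      · omega
  · rintro ⟨rfl, rfl⟩
    norm_num
end

section
/- The equation (45^n - 1)(100^n - 1) = x^2 has exactly one solution in positive integers n, x, namely n = 1, x = 66. -/
set_option exponentiation.threshold 5000
set_option maxRecDepth 4000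
set_option maxHeartbeats 1000000



-- Euler criterion kill
lemma eulerKill {p : ℕ} (hp : p.Prime) (h2 : 2 < p) {v x : ℕ}
    (hveq : ((x : ZMod p))^2 = (v : ZMod p))
    (hv : v ^ ((p-1)/2) % p = p - 1) : False := by
  haveI : Fact p.Prime := ⟨hp⟩
  have hodd : 2 * ((p-1)/2) = p - 1 := by
    have h3 : p % 2 = 1 := Nat.odd_iff.mp (hp.odd_of_ne_two (by omega))
    omega
  have hcast : ((v : ZMod p))^((p-1)/2) = -1 := by
    have h0 : (((v ^ ((p-1)/2)) % p : ℕ) : ZMod p) = ((p - 1 : ℕ) : ZMod p) := by rw [hv]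
    rw [ZMod.natCast_mod] at h0
    have h1 : ((p - 1 : ℕ) : ZMod p) = -1 := by
      have : ((p : ℕ) : ZMod p) = 0 := ZMod.natCast_self p
      have hp1 : (1:ℕ) ≤ p := by omega
      push_cast [Nat.cast_sub hp1] at h0 ⊢
      rw [this]; ring
    rw [h1] at h0; push_cast at h0; exact h0
  have hx0 : (x : ZMod p) ≠ 0 := by
    intro h
    rw [h] at hveq
    have : (v : ZMod p) = 0 := by rw [← hveq]; ring
    rw [this] at hcast
    have : (0 : ZMod p) ^ ((p-1)/2) = 0 := by
      apply zero_pow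
      intro hz
      rw [hz] at hodd; omega
    rw [this] at hcast
    have h2' : ((2:ℕ) : ZMod p) = 0 := by push_cast; linear_combination (2:ZMod p) * hcast
    have := (ZMod.natCast_eq_zero_iff 2 p).mp h2'
    have := Nat.le_of_dvd (by norm_num) this
    omega
  have hfer : ((x:ZMod p))^(p-1) = 1 := ZMod.pow_card_sub_one_eq_one hx0
  rw [← hveq, ← pow_mul] at hcast
  rw [hodd] at hcast
  rw [hfer] at hcast
  have h2' : ((2:ℕ) : ZMod p) = 0 := by push_cast; linear_combination hcast
  have := (ZMod.natCast_eq_zero_iff 2 p).mp h2'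
  have := Nat.le_of_dvd (by norm_num) this
  omega

-- reduce (45^n-1)(100^n-1) = x^2 mod p with period P
lemma killA {p P n x : ℕ} (hp : p.Prime) (h2 : 2 < p) (hP : 0 < P)
    (h45 : 45^P % p = 1) (h100 : 100^P % p = 1)
    (he : (45^n - 1) * (100^n - 1) = x^2)
    (hv : (((45^(n % P) - 1) * (100^(n % P) - 1)) % p) ^ ((p-1)/2) % p = p - 1) : False := by
  haveI : Fact p.Prime := ⟨hp⟩
  have e45 : (1:ℕ) ≤ 45^n := Nat.one_le_pow _ _ (by norm_num)
  have e100 : (1:ℕ) ≤ 100^n := Nat.one_le_pow _ _ (by norm_num)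
  have e45r : (1:ℕ) ≤ 45^(n % P) := Nat.one_le_pow _ _ (by norm_num)
  have e100r : (1:ℕ) ≤ 100^(n % P) := Nat.one_le_pow _ _ (by norm_num)
  have h45z : ((45 : ZMod p))^P = 1 := by
    have : ((45^P % p : ℕ) : ZMod p) = ((1:ℕ) : ZMod p) := by rw [h45]
    rw [ZMod.natCast_mod] at this; push_cast at this; exact this
  have h100z : ((100 : ZMod p))^P = 1 := by
    have : ((100^P % p : ℕ) : ZMod p) = ((1:ℕ) : ZMod p) := by rw [h100]
    rw [ZMod.natCast_mod] at this; push_cast at this; exact this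
  have hn45 : ((45 : ZMod p))^n = ((45 : ZMod p))^(n % P) := by
    conv_lhs => rw [← Nat.div_add_mod n P]
    rw [pow_add, pow_mul, h45z, one_pow, one_mul]
  have hn100 : ((100 : ZMod p))^n = ((100 : ZMod p))^(n % P) := by
    conv_lhs => rw [← Nat.div_add_mod n P]
    rw [pow_add, pow_mul, h100z, one_pow, one_mul]
  -- cast he
  have hz : ((x : ZMod p))^2 = ((((45^(n % P) - 1) * (100^(n % P) - 1)) % p : ℕ) : ZMod p) := by
    have := congrArg (fun y : ℕ => (y : ZMod p)) he
    push_cast [Nat.cast_sub e45, Nat.cast_sub e100, Nat.cast_sub e45r, Nat.cast_sub e100r,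
      ZMod.natCast_mod] at this ⊢
    rw [← this, hn45, hn100]
  exact eulerKill hp h2 hz hv

-- mod 64 kill: for n ≥ 3, 100^n ≡ 0, 45 has period 16
lemma killB {n x : ℕ} (hn : 3 ≤ n)
    (he : (45^n - 1) * (100^n - 1) = x^2)
    (hv : ∀ z : ZMod 64, z^2 ≠ 1 - (45 : ZMod 64)^(n % 16)) : False := by
  have e45 : (1:ℕ) ≤ 45^n := Nat.one_le_pow _ _ (by norm_num)
  have e100 : (1:ℕ) ≤ 100^n := Nat.one_le_pow _ _ (by norm_num)
  have h45z : ((45 : ZMod 64))^(16:ℕ) = 1 := by decide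
  have hn45 : ((45 : ZMod 64))^n = ((45 : ZMod 64))^(n % 16) := by
    conv_lhs => rw [← Nat.div_add_mod n 16]
    rw [pow_add, pow_mul, h45z, one_pow, one_mul]
  have hn100 : ((100 : ZMod 64))^n = 0 := by
    obtain ⟨m, rfl⟩ : ∃ m, n = 3 + m := ⟨n - 3, by omega⟩
    rw [pow_add]
    have : ((100 : ZMod 64))^(3:ℕ) = 0 := by decide
    rw [this, zero_mul]
  have hz : ((x : ZMod 64))^2 = ((45 : ZMod 64)^n - 1) * ((100 : ZMod 64)^n - 1) := by
    have := congrArg (fun y : ℕ => (y : ZMod 64)) he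
    push_cast [Nat.cast_sub e45, Nat.cast_sub e100] at this
    rw [← this]
  rw [hn45, hn100] at hz
  apply hv x
  rw [hz]; ring

lemma prime_31 : Nat.Prime 31 := by norm_num
lemma h45_31 : 45^15 % 31 = 1 := by decide
lemma h100_31 : 100^15 % 31 = 1 := by decide
lemma prime_2161 : Nat.Prime 2161 := by norm_num
lemma h45_2161 : 45^120 % 2161 = 1 := by decide
lemma h100_2161 : 100^120 % 2161 = 1 := by decide
lemma prime_7 : Nat.Prime 7 := by norm_num
lemma h45_7 : 45^6 % 7 = 1 := by decide
lemma h100_7 : 100^6 % 7 = 1 := by decide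
lemma prime_17 : Nat.Prime 17 := by norm_num
lemma h45_17 : 45^16 % 17 = 1 := by decide
lemma h100_17 : 100^16 % 17 = 1 := by decide
lemma prime_641 : Nat.Prime 641 := by norm_num
lemma h45_641 : 45^80 % 641 = 1 := by decide
lemma h100_641 : 100^80 % 641 = 1 := by decide

lemma oddKill {n x : ℕ} (hn : 3 ≤ n) (hodd : n % 2 = 1)
    (he : (45^n - 1) * (100^n - 1) = x^2) : False := by
  have h16 : n % 16 = 1 ∨ n % 16 = 3 ∨ n % 16 = 5 ∨ n % 16 = 7 ∨ n % 16 = 9 ∨ n % 16 = 11 ∨ n % 16 = 13 ∨ n % 16 = 15 := by omega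
  rcases h16 with h16|h16|h16|h16|h16|h16|h16|h16
  · exact killB hn he (by rw [h16]; decide)
  · exact killB hn he (by rw [h16]; decide)
  · have h6 : n % 6 = 1 ∨ n % 6 = 3 ∨ n % 6 = 5 := by omega
    rcases h6 with h6|h6|h6
    rotate_right
    · exact killA (p := 7) (P := 6) prime_7 (by norm_num) (by norm_num) h45_7 h100_7 he (by rw [show n % 6 = 5 by omega]; decide)
    all_goals (
      have h240 : n % 240 = 21 ∨ n % 240 = 37 ∨ n % 240 = 69 ∨ n % 240 = 85 ∨ n % 240 = 117 ∨ n % 240 = 133 ∨ n % 240 = 165 ∨ n % 240 = 181 ∨ n % 240 = 213 ∨ n % 240 = 229 := by omega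
      rcases h240 with h|h|h|h|h|h|h|h|h|h
      · exact killA (p := 31) (P := 15) prime_31 (by norm_num) (by norm_num) h45_31 h100_31 he (by rw [show n % 15 = 6 by omega]; decide)
      · exact killA (p := 31) (P := 15) prime_31 (by norm_num) (by norm_num) h45_31 h100_31 he (by rw [show n % 15 = 7 by omega]; decide)
      · exact killA (p := 31) (P := 15) prime_31 (by norm_num) (by norm_num) h45_31 h100_31 he (by rw [show n % 15 = 9 by omega]; decide)
      · exact killA (p := 641) (P := 80) prime_641 (by norm_num) (by norm_num) h45_641 h100_641 he (by rw [show n % 80 = 5 by omega]; decide)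
      · exact killA (p := 31) (P := 15) prime_31 (by norm_num) (by norm_num) h45_31 h100_31 he (by rw [show n % 15 = 12 by omega]; decide)
      · exact killA (p := 31) (P := 15) prime_31 (by norm_num) (by norm_num) h45_31 h100_31 he (by rw [show n % 15 = 13 by omega]; decide)
      · exact killA (p := 641) (P := 80) prime_641 (by norm_num) (by norm_num) h45_641 h100_641 he (by rw [show n % 80 = 5 by omega]; decide)
      · exact killA (p := 2161) (P := 120) prime_2161 (by norm_num) (by norm_num) h45_2161 h100_2161 he (by rw [show n % 120 = 61 by omega]; decide)
      · exact killA (p := 31) (P := 15) prime_31 (by norm_num) (by norm_num) h45_31 h100_31 he (by rw [show n % 15 = 3 by omega]; decide)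
      · exact killA (p := 2161) (P := 120) prime_2161 (by norm_num) (by norm_num) h45_2161 h100_2161 he (by rw [show n % 120 = 109 by omega]; decide)
    )
  · exact killB hn he (by rw [h16]; decide)
  · exact killB hn he (by rw [h16]; decide)
  · exact killB hn he (by rw [h16]; decide)
  · exact killA (p := 17) (P := 16) prime_17 (by norm_num) (by norm_num) h45_17 h100_17 he (by rw [show n % 16 = 13 by omega]; decide)
  · exact killB hn he (by rw [h16]; decide)
open Pell

lemma prime5 : Prime (5 : ℤ) := by norm_num

lemma extract5 (z : ℤ) (hz : z ≠ 0) : ∃ c w, z = 5^c * w ∧ ¬ (5:ℤ) ∣ w := by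
  suffices H : ∀ m : ℕ, ∀ z : ℤ, z ≠ 0 → z.natAbs ≤ m → ∃ c w, z = 5^c * w ∧ ¬ (5:ℤ) ∣ w from
    H z.natAbs z hz le_rfl
  intro m
  induction m with
  | zero => intro z hz h0; exact absurd (Int.natAbs_eq_zero.mp (by omega)) hz
  | succ m ih =>
    intro z hz hle
    by_cases h5 : (5:ℤ) ∣ z
    · obtain ⟨z', rfl⟩ := h5
      have hz' : z' ≠ 0 := by rintro rfl; simp at hz
      have hlt : z'.natAbs ≤ m := by
        rw [Int.natAbs_mul] at hle
        have h1 : z'.natAbs ≠ 0 := Int.natAbs_ne_zero.mpr hz'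
        have h2 : (5:ℤ).natAbs = 5 := rfl
        rw [h2] at hle
        omega
      obtain ⟨c, w, hw, h5w⟩ := ih z' hz' hlt
      exact ⟨c+1, w, by rw [pow_succ, hw]; ring, h5w⟩
    · exact ⟨0, z, by rw [pow_zero, one_mul], h5⟩

lemma extract5nat (s : ℕ) (hs : s ≠ 0) : ∃ α s₀, s = 5^α * s₀ ∧ ¬ 5 ∣ s₀ := by
  suffices H : ∀ m : ℕ, ∀ s : ℕ, s ≠ 0 → s ≤ m → ∃ α s₀, s = 5^α * s₀ ∧ ¬ 5 ∣ s₀ from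
    H s s hs le_rfl
  intro m
  induction m with
  | zero => intro s hs h0; omega
  | succ m ih =>
    intro s hs hle
    by_cases h5 : 5 ∣ s
    · obtain ⟨s', rfl⟩ := h5
      have hs' : s' ≠ 0 := by rintro rfl; simp at hs
      obtain ⟨α, s₀, hw, h5w⟩ := ih s' hs' (by omega)
      exact ⟨α+1, s₀, by rw [pow_succ, hw]; ring, h5w⟩
    · exact ⟨0, s, by rw [pow_zero, one_mul], h5⟩

lemma pow5_unique {m l : ℕ} {A B : ℤ} (h : 5^m * A = 5^l * B) (hA : ¬(5:ℤ)∣A) (hB : ¬(5:ℤ)∣B) :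
    m = l := by
  rcases Nat.lt_trichotomy m l with hml | rfl | hml
  · exfalso; apply hA
    obtain ⟨e, he⟩ : ∃ e, l = m + (e+1) := ⟨l - m - 1, by omega⟩
    rw [he, pow_add, mul_assoc] at h
    have h5 : (5:ℤ)^m ≠ 0 := by positivity
    have hAB : A = 5^(e+1) * B := mul_left_cancel₀ h5 h
    exact ⟨5^e * B, by rw [hAB, pow_succ]; ring⟩
  · rfl
  · exfalso; apply hB
    obtain ⟨e, he⟩ : ∃ e, m = l + (e+1) := ⟨m - l - 1, by omega⟩
    rw [he, pow_add, mul_assoc] at h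
    have h5 : (5:ℤ)^l ≠ 0 := by positivity
    have hAB : 5^(e+1) * A = B := mul_left_cancel₀ h5 h
    exact ⟨5^e * A, by rw [← hAB, pow_succ]; ring⟩

section
variable {D : ℤ} {u : Pell.Solution₁ D}

-- abbreviations
noncomputable def XX (u : Pell.Solution₁ D) (r : ℕ) : ℤ := (u ^ r).x
noncomputable def YY (u : Pell.Solution₁ D) (r : ℕ) : ℤ := (u ^ r).y

lemma XX0 : XX u 0 = 1 := by simp [XX]
lemma YY0 : YY u 0 = 0 := by simp [YY]
lemma XX1 : XX u 1 = u.x := by simp [XX]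
lemma YY1 : YY u 1 = u.y := by simp [YY]

lemma XXadd (r s : ℕ) : XX u (r+s) = XX u r * XX u s + D * (YY u r * YY u s) := by
  simp [XX, YY, pow_add, Pell.Solution₁.x_mul]

lemma YYadd (r s : ℕ) : YY u (r+s) = XX u r * YY u s + YY u r * XX u s := by
  simp [XX, YY, pow_add, Pell.Solution₁.y_mul]

lemma XXprop (r : ℕ) : (XX u r)^2 - D * (YY u r)^2 = 1 := Pell.Solution₁.prop _

lemma XXpos (hux : 0 < u.x) (r : ℕ) : 0 < XX u r := Pell.Solution₁.x_pow_pos hux r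

lemma YYnonneg (hux : 0 < u.x) (huy : 0 < u.y) (r : ℕ) : 0 ≤ YY u r := by
  cases r with
  | zero => simp [YY]
  | succ m => exact (Pell.Solution₁.y_pow_succ_pos hux huy m).le

lemma YYpos (hux : 0 < u.x) (huy : 0 < u.y) {r : ℕ} (hr : 1 ≤ r) : 0 < YY u r := by
  obtain ⟨m, rfl⟩ : ∃ m, r = m + 1 := ⟨r - 1, by omega⟩
  exact Pell.Solution₁.y_pow_succ_pos hux huy m

lemma XXgrow (hux : 1 < u.x) (huy : 0 < u.y) (r : ℕ) : 2^r ≤ XX u r := by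
  have hD : 0 < D := Pell.Solution₁.d_pos_of_one_lt_x hux
  induction r with
  | zero => simp [XX]
  | succ m ih =>
    have h1 : XX u (m+1) = XX u m * XX u 1 + D * (YY u m * YY u 1) := XXadd m 1
    rw [XX1, YY1] at h1
    have h2 : 0 ≤ D * (YY u m * u.y) :=
      mul_nonneg hD.le (mul_nonneg (YYnonneg (by linarith) huy m) huy.le)
    have h3 : XX u m * 2 ≤ XX u m * u.x :=
      mul_le_mul_of_nonneg_left (by omega) (XXpos (by linarith) m).le
    rw [pow_succ]
    linarith
end

section
variable {D : ℤ}

lemma pell_key {u : Pell.Solution₁ D} (hux : 1 < u.x) (huy : 0 < u.y)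
    (hD5 : ¬ (5:ℤ) ∣ D) {j k t : ℕ} (hj : 1 ≤ j) (hk : 1 ≤ k) (ht : 1 ≤ t)
    {cj ck : ℤ} (hXj : XX u j = 5^t * cj) (hcj : ¬ (5:ℤ) ∣ cj)
    (hXk : XX u k = 5^(2*t) * ck) (hck : ¬ (5:ℤ) ∣ ck) :
    5^t ≤ k := by
  have h5 : Prime (5:ℤ) := by norm_num
  have hux0 : 0 < u.x := by linarith
  -- no 5 divides both X and Y
  have hXY5 : ∀ r : ℕ, (5:ℤ) ∣ XX u r → ¬ (5:ℤ) ∣ YY u r := by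
    intro r hX hY
    have hp := XXprop (u := u) r
    have : (5:ℤ) ∣ 1 := by
      have h1 : (5:ℤ) ∣ (XX u r)^2 := Dvd.dvd.pow hX (by norm_num)
      have h2 : (5:ℤ) ∣ D * (YY u r)^2 := Dvd.dvd.mul_left (Dvd.dvd.pow hY (by norm_num)) D
      calc (5:ℤ) ∣ (XX u r)^2 - D * (YY u r)^2 := dvd_sub h1 h2
        _ = 1 := hp
    norm_num at this
  -- rho
  have hex : ∃ r, 1 ≤ r ∧ (5:ℤ) ∣ XX u r := by
    refine ⟨j, hj, ?_⟩
    rw [hXj]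
    exact Dvd.dvd.mul_right (dvd_pow_self 5 (by omega)) cj
  set ρ := Nat.find hex with hρdef
  obtain ⟨hρ1, hρdvd⟩ := Nat.find_spec hex
  have hρmin : ∀ m, m < ρ → ¬(1 ≤ m ∧ (5:ℤ) ∣ XX u m) := fun m hm => Nat.find_min hex hm
  have W1 : ∀ s, 1 ≤ s → s < ρ → ¬ (5:ℤ) ∣ XX u s := by
    intro s h1 h2 hd; exact hρmin s h2 ⟨h1, hd⟩
  have W2 : ∀ s, 1 ≤ s → s < ρ → ¬ (5:ℤ) ∣ YY u s := by
    intro s h1 h2 hd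
    have hsum : XX u ρ = XX u (ρ - s) * XX u s + D * (YY u (ρ-s) * YY u s) := by
      rw [← XXadd]; congr 1; omega
    have hd2 : (5:ℤ) ∣ XX u (ρ - s) * XX u s := by
      have hdD : (5:ℤ) ∣ D * (YY u (ρ-s) * YY u s) :=
        Dvd.dvd.mul_left (Dvd.dvd.mul_left hd _) D
      have : XX u (ρ - s) * XX u s = XX u ρ - D * (YY u (ρ-s) * YY u s) := by linarith
      rw [this]
      exact dvd_sub hρdvd hdD
    rcases (h5.dvd_mul).mp hd2 with hc | hc
    · exact W1 (ρ - s) (by omega) (by omega) hc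
    · exact W1 s h1 h2 hc
  have W3 : ¬ (5:ℤ) ∣ YY u ρ := hXY5 ρ hρdvd
  -- double step facts
  have hX2ρeq : XX u (2*ρ) = XX u ρ * XX u ρ + D * (YY u ρ * YY u ρ) := by
    rw [← XXadd]; congr 1; omega
  have hY2ρeq : YY u (2*ρ) = XX u ρ * YY u ρ + YY u ρ * XX u ρ := by
    rw [← YYadd]; congr 1; omega
  have hX2ρ5 : ¬ (5:ℤ) ∣ XX u (2*ρ) := by
    intro hdd
    have : (5:ℤ) ∣ D * (YY u ρ * YY u ρ) := by
      have h1 : (5:ℤ) ∣ XX u ρ * XX u ρ := Dvd.dvd.mul_right hρdvd _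
      have : D * (YY u ρ * YY u ρ) = XX u (2*ρ) - XX u ρ * XX u ρ := by linarith [hX2ρeq]
      rw [this]; exact dvd_sub hdd h1
    rcases h5.dvd_mul.mp this with hc | hc
    · exact hD5 hc
    · rcases h5.dvd_mul.mp hc with hc2 | hc2 <;> exact W3 hc2
  have hY2ρ5 : (5:ℤ) ∣ YY u (2*ρ) := by
    rw [hY2ρeq]
    exact dvd_add (Dvd.dvd.mul_right hρdvd _) (Dvd.dvd.mul_left hρdvd _)
  -- periodic structure
  have Qlem : ∀ q : ℕ, ¬ (5:ℤ) ∣ XX u (2*ρ*q) ∧ (5:ℤ) ∣ YY u (2*ρ*q) := by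
    intro q
    induction q with
    | zero => rw [Nat.mul_zero, XX0, YY0]; exact ⟨by norm_num, dvd_zero 5⟩
    | succ m ih =>
      have hidx : 2*ρ*(m+1) = 2*ρ*m + 2*ρ := by ring
      constructor
      · rw [hidx, XXadd]
        intro hdd
        have : (5:ℤ) ∣ XX u (2*ρ*m) * XX u (2*ρ) := by
          have h1 : (5:ℤ) ∣ D * (YY u (2*ρ*m) * YY u (2*ρ)) :=
            Dvd.dvd.mul_left (Dvd.dvd.mul_left hY2ρ5 _) D
          have heq : XX u (2*ρ*m) * XX u (2*ρ) =
              (XX u (2*ρ*m) * XX u (2*ρ) + D * (YY u (2*ρ*m) * YY u (2*ρ)))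
              - D * (YY u (2*ρ*m) * YY u (2*ρ)) := by ring
          rw [heq]; exact dvd_sub hdd h1
        rcases h5.dvd_mul.mp this with hc | hc
        · exact ih.1 hc
        · exact hX2ρ5 hc
      · rw [hidx, YYadd]
        exact dvd_add (Dvd.dvd.mul_left hY2ρ5 _) (Dvd.dvd.mul_right ih.2 _)
  have Slem : ∀ w, (5:ℤ) ∣ XX u w → w % (2*ρ) = ρ := by
    intro w hw
    have hρpos : 0 < 2*ρ := by omega
    have hsplit : w = 2*ρ*(w/(2*ρ)) + w % (2*ρ) := (Nat.div_add_mod w (2*ρ)).symm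
    set q := w / (2*ρ); set r := w % (2*ρ)
    have hrlt : r < 2*ρ := Nat.mod_lt w hρpos
    have hXw : XX u w = XX u (2*ρ*q) * XX u r + D * (YY u (2*ρ*q) * YY u r) := by
      rw [← XXadd, ← hsplit]
    have hXr5 : (5:ℤ) ∣ XX u r := by
      have h1 : (5:ℤ) ∣ XX u (2*ρ*q) * XX u r := by
        have h2 : (5:ℤ) ∣ D * (YY u (2*ρ*q) * YY u r) :=
          Dvd.dvd.mul_left (Dvd.dvd.mul_right (Qlem q).2 _) D
        have heq : XX u (2*ρ*q) * XX u r = XX u w - D * (YY u (2*ρ*q) * YY u r) := by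
          linarith [hXw]
        rw [heq]; exact dvd_sub hw h2
      rcases h5.dvd_mul.mp h1 with hc | hc
      · exact absurd hc (Qlem q).1
      · exact hc
    -- now classify r
    rcases Nat.lt_trichotomy r ρ with hcase | hcase | hcase
    · exfalso
      rcases Nat.eq_zero_or_pos r with h0 | h0
      · rw [h0, XX0] at hXr5; norm_num at hXr5
      · exact W1 r h0 hcase hXr5
    · exact hcase
    · exfalso
      have hs1 : 1 ≤ r - ρ := by omega
      have hs2 : r - ρ < ρ := by omega
      have hXreq : XX u r = XX u ρ * XX u (r - ρ) + D * (YY u ρ * YY u (r-ρ)) := by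
        rw [← XXadd]; congr 1; omega
      have : (5:ℤ) ∣ D * (YY u ρ * YY u (r-ρ)) := by
        have h1 : (5:ℤ) ∣ XX u ρ * XX u (r-ρ) := Dvd.dvd.mul_right hρdvd _
        have heq : D * (YY u ρ * YY u (r-ρ)) = XX u r - XX u ρ * XX u (r-ρ) := by
          linarith [hXreq]
        rw [heq]; exact dvd_sub hXr5 h1
      rcases h5.dvd_mul.mp this with hc | hc
      · exact hD5 hc
      · rcases h5.dvd_mul.mp hc with hc2 | hc2
        · exact W3 hc2
        · exact W2 (r - ρ) hs1 hs2 hc2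
  -- exact power of 5 in X rho
  obtain ⟨c, u0, hXρ, hu0⟩ := extract5 (XX u ρ) (XXpos hux0 ρ).ne'
  have hc1 : 1 ≤ c := by
    rcases Nat.eq_zero_or_pos c with h0 | h0
    · exfalso; apply hu0; rw [h0, pow_zero, one_mul] at hXρ; rw [← hXρ]; exact hρdvd
    · exact h0
  -- Y(2ρ) = 5^c * y2 with y2 not divisible
  set y2 : ℤ := 2 * u0 * YY u ρ with hy2def
  have hY2ρval : YY u (2*ρ) = 5^c * y2 := by
    rw [hY2ρeq, hXρ]; ring
  have hy2nd : ¬ (5:ℤ) ∣ y2 := by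
    intro hd
    rcases h5.dvd_mul.mp hd with hc' | hc'
    · rcases h5.dvd_mul.mp hc' with hc2 | hc2
      · norm_num at hc2
      · exact hu0 hc2
    · exact W3 hc'
  -- X(2ρ) = -1 + 5^(2c) * e2
  set e2 : ℤ := 2 * u0^2 with he2def
  have hX2ρval : XX u (2*ρ) = -1 + 5^(2*c) * e2 := by
    have hp := XXprop (u := u) ρ
    have hDYρ : D * (YY u ρ * YY u ρ) = XX u ρ * XX u ρ - 1 := by nlinarith [hp]
    rw [hX2ρeq, hDYρ, hXρ]; ring
  -- fine expansion of X(2ρq), Y(2ρq)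
  have Dlem : ∀ q : ℕ, ∃ E F : ℤ,
      XX u (2*ρ*q) = (-1)^q + 5^(2*c) * E ∧
      YY u (2*ρ*q) = (-1)^(q+1) * q * (5^c * y2) + 5^(3*c) * F := by
    intro q
    induction q with
    | zero =>
      refine ⟨0, 0, ?_, ?_⟩
      · rw [Nat.mul_zero, XX0]; ring
      · rw [Nat.mul_zero, YY0]; push_cast; ring
    | succ m ih =>
      obtain ⟨E, F, hXE, hYF⟩ := ih
      have hidx : 2*ρ*(m+1) = 2*ρ*m + 2*ρ := by ring
      refine ⟨(-1)^m * e2 - E + 5^(2*c)*(E*e2) + (-1)^(m+1) * m * D * y2^2 + 5^(2*c)*(D*F*y2),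
              E*y2 + (-1)^(m+1)*m*(y2*e2) - F + 5^(2*c)*(F*e2), ?_, ?_⟩
      · rw [hidx, XXadd, hXE, hYF, hX2ρval, hY2ρval]
        push_cast
        ring
      · rw [hidx, YYadd, hXE, hYF, hX2ρval, hY2ρval]
        push_cast
        ring
  -- expansion at odd multiples of rho
  have hDYρ2 : D * (YY u ρ)^2 = 5^(2*c) * u0^2 - 1 := by
    have hp := XXprop (u := u) ρ
    have h1 : XX u ρ ^ 2 = 5^(2*c) * u0^2 := by rw [hXρ]; ring
    linarith
  have Elem : ∀ q : ℕ, ∃ G : ℤ,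
      XX u (ρ*(2*q+1)) = (-1)^q * (2*q+1) * (5^c * u0) + 5^(3*c) * G := by
    intro q
    obtain ⟨E, F, hXE, hYF⟩ := Dlem q
    have hidx : ρ*(2*q+1) = 2*ρ*q + ρ := by ring
    refine ⟨E*u0 + (-1)^(q+1)*(2*q)*u0^3 + D*F*(YY u ρ), ?_⟩
    rw [hidx, XXadd, hXE, hYF, hXρ]
    push_cast
    linear_combination ((-1:ℤ)^(q+1) * (2*(q:ℤ)) * 5^c * u0) * hDYρ2 + (D*(-1:ℤ)^(q+1)*(q:ℤ)*5^c*(YY u ρ)) * hy2def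
  -- quintuple lemma
  have F5 : ∀ (r γ : ℕ) (v : ℤ), 1 ≤ γ → XX u r = 5^γ * v → ¬ (5:ℤ) ∣ v →
      ∃ w, XX u (5*r) = 5^(γ+1) * w ∧ ¬ (5:ℤ) ∣ w := by
    intro r γ v hγ hXr hv
    have hX2r : XX u (2*r) = 2*(XX u r)^2 - 1 := by
      have h1 : XX u (2*r) = XX u r * XX u r + D * (YY u r * YY u r) := by
        rw [← XXadd]; congr 1; omega
      have hp := XXprop (u := u) r
      linear_combination h1 - hp
    have hY2r : YY u (2*r) = 2*(XX u r)*(YY u r) := by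
      have h1 : YY u (2*r) = XX u r * YY u r + YY u r * XX u r := by
        rw [← YYadd]; congr 1; omega
      linarith [h1]
    have hX4r : XX u (4*r) = 2*(XX u (2*r))^2 - 1 := by
      have h1 : XX u (4*r) = XX u (2*r) * XX u (2*r) + D * (YY u (2*r) * YY u (2*r)) := by
        rw [← XXadd]; congr 1; omega
      have hp := XXprop (u := u) (2*r)
      linear_combination h1 - hp
    have hY4r : YY u (4*r) = 2*(XX u (2*r))*(YY u (2*r)) := by
      have h1 : YY u (4*r) = XX u (2*r) * YY u (2*r) + YY u (2*r) * XX u (2*r) := by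
        rw [← YYadd]; congr 1; omega
      linarith [h1]
    have hX5r : XX u (5*r) = XX u (4*r) * XX u r + D * (YY u (4*r) * YY u r) := by
      rw [← XXadd]; congr 1; omega
    have hXX5 : XX u (5*r) = XX u r * (16*(XX u r)^4 - 20*(XX u r)^2 + 5) := by
      rw [hX5r, hX4r, hY4r, hX2r, hY2r]
      have hp := XXprop (u := u) r
      linear_combination (-(4:ℤ)*(XX u r)*(2*(XX u r)^2-1)) * hp
    obtain ⟨γ', rfl⟩ : ∃ γ', γ = γ' + 1 := ⟨γ - 1, by omega⟩
    refine ⟨v*(16*5^(4*γ'+3)*v^4 - 4*5^(2*γ'+2)*v^2 + 1), ?_, ?_⟩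
    · rw [hXX5, hXr]; ring
    · intro hd
      rcases h5.dvd_mul.mp hd with hc' | hc'
      · exact hv hc'
      · have h51 : (5:ℤ) ∣ 16*5^(4*γ'+3)*v^4 - 4*5^(2*γ'+2)*v^2 := by
          apply dvd_sub
          · exact Dvd.dvd.mul_right (Dvd.dvd.mul_left (dvd_pow_self 5 (by omega)) 16) _
          · exact Dvd.dvd.mul_right (Dvd.dvd.mul_left (dvd_pow_self 5 (by omega)) 4) _
        have : (5:ℤ) ∣ 1 := by
          have heq : (1:ℤ) = (16*5^(4*γ'+3)*v^4 - 4*5^(2*γ'+2)*v^2 + 1)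
              - (16*5^(4*γ'+3)*v^4 - 4*5^(2*γ'+2)*v^2) := by ring
          rw [heq]; exact dvd_sub hc' h51
        norm_num at this
  -- LTE master
  have LTE : ∀ (α s : ℕ), s % 2 = 1 → ¬ (5:ℤ) ∣ (s:ℤ) →
      ∃ H, XX u (ρ*(5^α*s)) = 5^(c+α) * H ∧ ¬ (5:ℤ) ∣ H := by
    intro α
    induction α with
    | zero =>
      intro s hs2 hs5
      obtain ⟨q, rfl⟩ : ∃ q, s = 2*q+1 := ⟨s/2, by omega⟩
      obtain ⟨G, hG⟩ := Elem q
      refine ⟨(-1)^q*(2*(q:ℤ)+1)*u0 + 5^(2*c)*G, ?_, ?_⟩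
      · rw [pow_zero, one_mul, hG]; push_cast; ring
      · intro hd
        have h1 : (5:ℤ) ∣ (-1)^q*(2*(q:ℤ)+1)*u0 := by
          have heq : (-1:ℤ)^q*(2*(q:ℤ)+1)*u0 =
              ((-1)^q*(2*(q:ℤ)+1)*u0 + 5^(2*c)*G) - 5^(2*c)*G := by ring
          rw [heq]
          exact dvd_sub hd (Dvd.dvd.mul_right (dvd_pow_self 5 (by omega)) G)
        rcases h5.dvd_mul.mp h1 with hc' | hc'
        · rcases h5.dvd_mul.mp hc' with hc2 | hc2
          · have := Int.isUnit_iff.mp (IsUnit.pow q (isUnit_one.neg))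
            rcases this with h | h <;> rw [h] at hc2 <;> norm_num at hc2
          · apply hs5; push_cast; exact hc2
        · exact hu0 hc'
    | succ α ih =>
      intro s hs2 hs5
      obtain ⟨H, hH, hHnd⟩ := ih s hs2 hs5
      have hidx : ρ*(5^(α+1)*s) = 5*(ρ*(5^α*s)) := by ring
      obtain ⟨w, hw, hwnd⟩ := F5 (ρ*(5^α*s)) (c+α) H (by omega) hH hHnd
      refine ⟨w, ?_, hwnd⟩
      rw [hidx, hw, show c+(α+1) = (c+α)+1 from by ring]
  -- apply to index j
  have happly : ∀ (m : ℕ), 1 ≤ m → ∀ (tm : ℕ) (cm : ℤ), 1 ≤ tm → XX u m = 5^tm * cm →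
      ¬ (5:ℤ) ∣ cm → ∃ α, tm = c + α ∧ 5^α ≤ m := by
    intro m hm tm cm htm hXm hcm
    have hm5 : (5:ℤ) ∣ XX u m := by
      rw [hXm]; exact Dvd.dvd.mul_right (dvd_pow_self 5 (by omega)) cm
    have hmmod := Slem m hm5
    have hmd : m = ρ * (2*(m/(2*ρ)) + 1) := by
      have h := Nat.div_add_mod m (2*ρ)
      rw [hmmod] at h
      have h2 : ρ * (2*(m/(2*ρ)) + 1) = 2*ρ*(m/(2*ρ)) + ρ := by ring
      rw [h2]; linarith
    obtain ⟨q0, hmd2⟩ : ∃ q0, m = ρ*(2*q0+1) := ⟨m/(2*ρ), hmd⟩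
    set sj := 2*q0 + 1 with hsjdef
    obtain ⟨α, s₀, hs₀, hs₀5⟩ := extract5nat sj (by omega)
    have hs₀odd : s₀ % 2 = 1 := by
      rcases Nat.even_or_odd s₀ with he | ho
      · exfalso
        obtain ⟨w, hw⟩ := he
        have h2 : sj = 2 * (5^α * w) := by rw [hs₀, hw]; ring
        obtain ⟨W, hW⟩ : ∃ W, sj = 2*W := ⟨_, h2⟩
        omega
      · rcases ho with ⟨w, hw⟩
        omega
    have hs₀5' : ¬ (5:ℤ) ∣ ((s₀:ℕ):ℤ) := by
      intro hd
      exact hs₀5 (Int.ofNat_dvd.mp (by exact_mod_cast hd))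
    obtain ⟨H, hH, hHnd⟩ := LTE α s₀ hs₀odd hs₀5'
    have hmeq : ρ*(5^α*s₀) = m := by rw [hmd2, hs₀]
    rw [hmeq] at hH
    rw [hXm] at hH
    have := pow5_unique hH hcm hHnd
    refine ⟨α, this, ?_⟩
    calc 5^α ≤ 5^α * s₀ := Nat.le_mul_of_pos_right _ (by omega)
      _ ≤ ρ * (5^α * s₀) := Nat.le_mul_of_pos_left _ (by omega)
      _ = m := hmeq
  obtain ⟨α₁, hα₁, hα₁le⟩ := happly j hj t cj ht hXj hcj
  obtain ⟨α₂, hα₂, hα₂le⟩ := happly k hk (2*t) ck (by omega) hXk hck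
  have htα : t ≤ α₂ := by omega
  calc (5:ℕ)^t ≤ 5^α₂ := Nat.pow_le_pow_right (by norm_num) htα
    _ ≤ k := hα₂le


end

lemma squarefree_eq_of_mul_sq {d₁ d₂ g : ℕ} (h1 : Squarefree d₁) (h2 : Squarefree d₂)
    (h : d₁ * d₂ = g^2) : d₁ = d₂ := by
  have hd₁ : d₁ ≠ 0 := h1.ne_zero
  have hd₂ : d₂ ≠ 0 := h2.ne_zero
  have hg : g ≠ 0 := by rintro rfl; simp at h; tauto
  have hfac : ∀ p : ℕ, d₁.factorization p = d₂.factorization p := by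
    intro p
    have hmul : (d₁ * d₂).factorization p = d₁.factorization p + d₂.factorization p := by
      rw [Nat.factorization_mul hd₁ hd₂]; simp
    have hpow : (g^2).factorization p = 2 * g.factorization p := by
      rw [Nat.factorization_pow]; simp [mul_comm]
    have heq : d₁.factorization p + d₂.factorization p = 2 * g.factorization p := by
      rw [← hmul, ← hpow, h]
    have l1 : d₁.factorization p ≤ 1 := (Nat.squarefree_iff_factorization_le_one hd₁).mp h1 p
    have l2 : d₂.factorization p ≤ 1 := (Nat.squarefree_iff_factorization_le_one hd₂).mp h2 p
    omega
  exact Nat.factorization_inj (Set.mem_setOf.mpr hd₁) (Set.mem_setOf.mpr hd₂)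
    (Finsupp.ext hfac)

lemma kernel_decomp {A B x : ℕ} (hA : 0 < A) (hB : 0 < B) (h : A * B = x^2) :
    ∃ d a b, Squarefree d ∧ A = d * a^2 ∧ B = d * b^2 := by
  obtain ⟨d₁, a, h1, hsf1⟩ := Nat.sq_mul_squarefree A
  obtain ⟨d₂, b, h2, hsf2⟩ := Nat.sq_mul_squarefree B
  have ha0 : a ≠ 0 := by rintro rfl; simp at h1; omega
  have hb0 : b ≠ 0 := by rintro rfl; simp at h2; omega
  have hx0 : x ≠ 0 := by rintro rfl; simp at h; rcases h with h|h <;> omega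
  -- d₁ * d₂ is a square
  have hsq : (a*b)^2 * (d₁ * d₂) = x^2 := by rw [← h, ← h1, ← h2]; ring
  have hdvd : (a*b) ∣ x := by
    have : (a*b)^2 ∣ x^2 := ⟨d₁*d₂, hsq.symm⟩
    exact (Nat.pow_dvd_pow_iff (by norm_num)).mp this
  obtain ⟨g, hg⟩ := hdvd
  have hgsq : d₁ * d₂ = g^2 := by
    have hab : (a*b)^2 ≠ 0 := by positivity
    have : (a*b)^2 * (d₁*d₂) = (a*b)^2 * g^2 := by rw [hsq, hg]; ring
    exact mul_left_cancel₀ hab this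
  have hdd := squarefree_eq_of_mul_sq hsf1 hsf2 hgsq
  exact ⟨d₁, a, b, hsf1, by rw [← h1, mul_comm], by rw [← h2, hdd, mul_comm]⟩

lemma nat8t : ∀ t : ℕ, 2 ≤ t → 8*t ≤ 5^t := by
  intro t
  induction t with
  | zero => omega
  | succ m ih =>
    intro h
    rcases Nat.lt_or_ge m 2 with hm | hm
    · interval_cases m
      · omega
      · norm_num
    · have h1 := ih hm
      have h2 : (2:ℕ) ≤ 5^m := by
        calc (2:ℕ) ≤ 8*m := by omega
          _ ≤ 5^m := h1
      rw [pow_succ]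
      omega
lemma evenKill {n x : ℕ} (hn : 4 ≤ n) (hev : n % 2 = 0)
    (he : (45^n - 1) * (100^n - 1) = x^2) : False := by
  obtain ⟨t, rfl⟩ : ∃ t, n = 2*t := ⟨n/2, by omega⟩
  have ht2 : 2 ≤ t := by omega
  have hA1 : 1 < 45^(2*t) := Nat.one_lt_pow (by omega) (by norm_num)
  have hB1 : 1 < 100^(2*t) := Nat.one_lt_pow (by omega) (by norm_num)
  obtain ⟨d, a, b, hsf, hAd, hBd⟩ := kernel_decomp (A := 45^(2*t) - 1) (B := 100^(2*t) - 1)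
    (by omega) (by omega) he
  have hd0 : 0 < d := Nat.pos_of_ne_zero hsf.ne_zero
  have ha0 : 0 < a := by
    rcases Nat.eq_zero_or_pos a with h0 | h0
    · rw [h0] at hAd; simp at hAd; omega
    · exact h0
  have hb0 : 0 < b := by
    rcases Nat.eq_zero_or_pos b with h0 | h0
    · rw [h0] at hBd; simp at hBd; omega
    · exact h0
  have hd5 : ¬ (5 ∣ d) := by
    intro h5d
    have h5A : (5:ℕ) ∣ 45^(2*t) := dvd_pow (by norm_num) (by omega)
    have hdA : (5:ℕ) ∣ 45^(2*t) - 1 := by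
      rw [hAd]; exact Dvd.dvd.mul_right h5d _
    have : (5:ℕ) ∣ 1 := by
      have := Nat.dvd_sub h5A hdA
      simpa [Nat.sub_sub_self hA1.le] using this
    norm_num at this
  have hd1 : d ≠ 1 := by
    rintro rfl
    rw [one_mul] at hBd
    have hM2 : (10^(2*t))^2 = 100^(2*t) := by
      rw [← pow_mul, show 2*t*2 = 2*(2*t) from by ring, pow_mul]; norm_num
    have hM10 : (10:ℕ) ≤ 10^(2*t) := by
      calc (10:ℕ) = 10^1 := (pow_one 10).symm
        _ ≤ 10^(2*t) := Nat.pow_le_pow_right (by norm_num) (by omega)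
    obtain ⟨m, hm⟩ := Nat.exists_eq_add_of_le hM10
    have hblt : b < 10^(2*t) := by
      by_contra hc
      push_neg at hc
      have h2 : (10^(2*t))^2 ≤ b^2 := Nat.pow_le_pow_left hc 2
      omega
    have h3 : b^2 ≤ (10^(2*t) - 1)^2 := Nat.pow_le_pow_left (by omega) 2
    have h4 : (10^(2*t) - 1)^2 + 2*(10^(2*t)) = (10^(2*t))^2 + 1 := by
      rw [hm]
      have h5 : 10 + m - 1 = 9 + m := by omega
      rw [h5]; ring
    omega
  -- move to ℤ
  have hD1 : 1 < (d:ℤ) := by exact_mod_cast (by omega : 1 < d)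
  have hDns : ¬ IsSquare ((d:ℤ)) := by
    rintro ⟨r, hr⟩
    have hnat : (d:ℤ) = ((r.natAbs * r.natAbs : ℕ) : ℤ) := by
      rw [hr]; exact_mod_cast (Int.natAbs_mul_self (a := r)).symm
    have hd' : d = r.natAbs * r.natAbs := by exact_mod_cast hnat
    have hunit := hsf r.natAbs (by rw [hd'])
    have : r.natAbs = 1 := Nat.isUnit_iff.mp hunit
    rw [this] at hd'; omega
  have heqA : ((45:ℤ)^t)^2 - (d:ℤ) * (a:ℤ)^2 = 1 := by
    have h' : d * a^2 + 1 = 45^(2*t) := by omega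
    have hc := congrArg (Nat.cast : ℕ → ℤ) h'
    push_cast at hc
    have hpw : ((45:ℤ)^t)^2 = (45:ℤ)^(2*t) := by rw [← pow_mul]; ring_nf
    rw [hpw]; linarith
  have heqB : ((10:ℤ)^(2*t))^2 - (d:ℤ) * (b:ℤ)^2 = 1 := by
    have h' : d * b^2 + 1 = 100^(2*t) := by omega
    have hc := congrArg (Nat.cast : ℕ → ℤ) h'
    push_cast at hc
    have hpw : ((10:ℤ)^(2*t))^2 = (100:ℤ)^(2*t) := by
      rw [← pow_mul, show 2*t*2 = 2*(2*t) from by ring, pow_mul]; norm_num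
    rw [hpw]; linarith
  set s1 : Pell.Solution₁ (d:ℤ) := Pell.Solution₁.mk ((45:ℤ)^t) (a:ℤ) heqA with hs1
  set s2 : Pell.Solution₁ (d:ℤ) := Pell.Solution₁.mk ((10:ℤ)^(2*t)) (b:ℤ) heqB with hs2
  obtain ⟨u, hu⟩ := Pell.IsFundamental.exists_of_not_isSquare (by omega) hDns
  have hux : 1 < u.x := hu.1
  have huy : 0 < u.y := hu.2.1
  obtain ⟨j, hj⟩ := hu.eq_pow_of_nonneg (a := s1)
    (by rw [hs1, Pell.Solution₁.x_mk]; positivity)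
    (by rw [hs1, Pell.Solution₁.y_mk]; positivity)
  obtain ⟨k, hk⟩ := hu.eq_pow_of_nonneg (a := s2)
    (by rw [hs2, Pell.Solution₁.x_mk]; positivity)
    (by rw [hs2, Pell.Solution₁.y_mk]; positivity)
  have hXj : XX u j = 5^t * (9:ℤ)^t := by
    have h1 : XX u j = s1.x := by rw [XX, ← hj]
    rw [h1, hs1, Pell.Solution₁.x_mk, show (45:ℤ) = 5*9 from by norm_num, mul_pow]
  have hXk : XX u k = 5^(2*t) * (2:ℤ)^(2*t) := by
    have h1 : XX u k = s2.x := by rw [XX, ← hk]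
    rw [h1, hs2, Pell.Solution₁.x_mk, show (10:ℤ) = 5*2 from by norm_num, mul_pow]
  have hj1 : 1 ≤ j := by
    rcases Nat.eq_zero_or_pos j with h0 | h0
    · exfalso
      rw [h0, pow_zero] at hj
      have : s1.y = 0 := by rw [hj]; rfl
      rw [hs1, Pell.Solution₁.y_mk] at this
      have : a = 0 := by exact_mod_cast this
      omega
    · exact h0
  have hk1 : 1 ≤ k := by
    rcases Nat.eq_zero_or_pos k with h0 | h0
    · exfalso
      rw [h0, pow_zero] at hk
      have : s2.y = 0 := by rw [hk]; rfl
      rw [hs2, Pell.Solution₁.y_mk] at this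
      have : b = 0 := by exact_mod_cast this
      omega
    · exact h0
  have hD5' : ¬ (5:ℤ) ∣ (d:ℤ) := by
    intro hd
    exact hd5 (by exact_mod_cast hd)
  have h9nd : ¬ (5:ℤ) ∣ (9:ℤ)^t := by
    intro hd
    have := (prime5).dvd_of_dvd_pow hd
    norm_num at this
  have h2nd : ¬ (5:ℤ) ∣ (2:ℤ)^(2*t) := by
    intro hd
    have := (prime5).dvd_of_dvd_pow hd
    norm_num at this
  have hkey : 5^t ≤ k :=
    pell_key hux huy hD5' hj1 hk1 (by omega) hXj h9nd hXk h2nd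
  -- growth contradiction
  have hgrow : (2:ℤ)^k ≤ XX u k := XXgrow hux huy k
  rw [hXk] at hgrow
  have hnat : (2:ℕ)^k ≤ 10^(2*t) := by
    have h10 : (5:ℤ)^(2*t) * 2^(2*t) = (10:ℤ)^(2*t) := by
      rw [← mul_pow]; norm_num
    rw [h10] at hgrow
    exact_mod_cast hgrow
  have hlt : (10:ℕ)^(2*t) < 2^(8*t) := by
    calc (10:ℕ)^(2*t) < 16^(2*t) := Nat.pow_lt_pow_left (by norm_num) (by omega)
      _ = 2^(8*t) := by rw [show (16:ℕ) = 2^4 from by norm_num, ← pow_mul]; ring_nf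
  have hklt : 2^k < 2^(8*t) := lt_of_le_of_lt hnat hlt
  have hk8t : k < 8*t := by
    by_contra hc
    push_neg at hc
    have : (2:ℕ)^(8*t) ≤ 2^k := Nat.pow_le_pow_right (by norm_num) hc
    omega
  have h8t := nat8t t ht2
  have : (5:ℕ)^t ≤ k := hkey
  omega

theorem stmt_5 (n x : ℕ) (hn : 0 < n) (hx : 0 < x) :
    (45 ^ n - 1) * (100 ^ n - 1) = x ^ 2 ↔ n = 1 ∧ x = 66 := by
  constructor
  · intro he
    have hn1 : n = 1 := by
      by_contra hne
      have hn2 : 2 ≤ n := by omega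
      rcases Nat.lt_or_ge n 4 with h4 | h4
      · interval_cases n
        · exact killA (p := 31) (P := 15) prime_31 (by norm_num) (by norm_num)
            h45_31 h100_31 he (by decide)
        · exact killA (p := 31) (P := 15) prime_31 (by norm_num) (by norm_num)
            h45_31 h100_31 he (by decide)
      · rcases Nat.even_or_odd n with hev | hod
        · exact evenKill h4 (Nat.even_iff.mp hev) he
        · exact oddKill (by omega) (Nat.odd_iff.mp hod) he
    subst hn1
    refine ⟨rfl, ?_⟩
    have h66 : x ^ 2 = 66 ^ 2 := by rw [← he]; norm_num
    exact Nat.pow_left_injective (by norm_num) h66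
  · rintro ⟨rfl, rfl⟩
    norm_num
end

section
/- The equation (20^n - 1)(77^n - 1) = x^2 has exactly one solution in positive integers n, x, namely n = 1, x = 38. -/
private lemma pow_linear (M u : ℕ) : ∃ c, (1 + M)^u = 1 + u*M + M*M*c := by
  induction u with
  | zero => exact ⟨0, by ring⟩
  | succ u ih =>
    obtain ⟨c, hc⟩ := ih
    exact ⟨c + u + M*c, by rw [pow_succ, hc]; ring⟩

private lemma p400 (t : ℕ) : ∃ b, (400:ℕ)^(3^t) = 1 + 3^(t+1)*b ∧ b % 3 = 1 := by
  induction t with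
  | zero => exact ⟨133, by norm_num, by norm_num⟩
  | succ t ih =>
    obtain ⟨b, hb, hbm⟩ := ih
    refine ⟨b + 3^(t+1)*b^2 + 3^(2*t+1)*b^3, ?_, ?_⟩
    · have h1 : (400:ℕ)^(3^(t+1)) = ((400:ℕ)^(3^t))^3 := by
        rw [← pow_mul, pow_succ]
      rw [h1, hb]; ring
    · have h1 : b + 3^(t+1)*b^2 + 3^(2*t+1)*b^3
          = b + 3*(3^t*b^2 + 3^(2*t)*b^3) := by ring
      rw [h1, Nat.add_mul_mod_self_left]; exact hbm

private lemma p5929 (t : ℕ) : ∃ d, (5929:ℕ)^(3^t) = 1 + 3^(t+1)*d ∧ d % 3 = 2 := by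
  induction t with
  | zero => exact ⟨1976, by norm_num, by norm_num⟩
  | succ t ih =>
    obtain ⟨d, hd, hdm⟩ := ih
    refine ⟨d + 3^(t+1)*d^2 + 3^(2*t+1)*d^3, ?_, ?_⟩
    · have h1 : (5929:ℕ)^(3^(t+1)) = ((5929:ℕ)^(3^t))^3 := by
        rw [← pow_mul, pow_succ]
      rw [h1, hd]; ring
    · have h1 : d + 3^(t+1)*d^2 + 3^(2*t+1)*d^3
          = d + 3*(3^t*d^2 + 3^(2*t)*d^3) := by ring
      rw [h1, Nat.add_mul_mod_self_left]; exact hdm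

private lemma even_case (n x : ℕ) (hn : 0 < n) (hp : n % 2 = 0)
    (h : (20^n - 1) * (77^n - 1) = x^2) : False := by
  obtain ⟨j, rfl⟩ : ∃ j, n = 2*j := ⟨n/2, by omega⟩
  have hj : j ≠ 0 := by omega
  obtain ⟨t, u, hju, hu3⟩ : ∃ t u, j = 3^t * u ∧ ¬ 3 ∣ u :=
    ⟨j.factorization 3, j / 3^(j.factorization 3),
      (Nat.ordProj_mul_ordCompl_eq_self j 3).symm,
      Nat.not_dvd_ordCompl (by norm_num) hj⟩
  subst hju
  obtain ⟨b, hb, hbm⟩ := p400 t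
  obtain ⟨d, hd, hdm⟩ := p5929 t
  obtain ⟨c, hc⟩ := pow_linear (3^(t+1)*b) u
  obtain ⟨e, he⟩ := pow_linear (3^(t+1)*d) u
  have e1 : (20:ℕ)^(2*(3^t*u)) = ((400:ℕ)^(3^t))^u := by
    rw [show (400:ℕ) = 20^2 from by norm_num, ← pow_mul, ← pow_mul]
  have e2 : (77:ℕ)^(2*(3^t*u)) = ((5929:ℕ)^(3^t))^u := by
    rw [show (5929:ℕ) = 77^2 from by norm_num, ← pow_mul, ← pow_mul]
  have hA : (20:ℕ)^(2*(3^t*u)) - 1 = 3^(t+1) * (u*b + 3^(t+1)*(b*b)*c) := by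
    rw [e1, hb, hc]
    have h2 : 1 + u*(3^(t+1)*b) + (3^(t+1)*b)*(3^(t+1)*b)*c
        = 1 + 3^(t+1) * (u*b + 3^(t+1)*(b*b)*c) := by ring
    rw [h2, Nat.add_sub_cancel_left]
  have hB : (77:ℕ)^(2*(3^t*u)) - 1 = 3^(t+1) * (u*d + 3^(t+1)*(d*d)*e) := by
    rw [e2, hd, he]
    have h2 : 1 + u*(3^(t+1)*d) + (3^(t+1)*d)*(3^(t+1)*d)*e
        = 1 + 3^(t+1) * (u*d + 3^(t+1)*(d*d)*e) := by ring
    rw [h2, Nat.add_sub_cancel_left]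
  rw [hA, hB] at h
  set γ := u*b + 3^(t+1)*(b*b)*c with hγdef
  set δ := u*d + 3^(t+1)*(d*d)*e with hδdef
  have hγ : γ % 3 = (u*b) % 3 := by
    rw [hγdef, show u*b + 3^(t+1)*(b*b)*c = u*b + 3*(3^t*(b*b)*c) from by ring,
      Nat.add_mul_mod_self_left]
  have hδ : δ % 3 = (u*d) % 3 := by
    rw [hδdef, show u*d + 3^(t+1)*(d*d)*e = u*d + 3*(3^t*(d*d)*e) from by ring,
      Nat.add_mul_mod_self_left]
  have hu12 : u % 3 = 1 ∨ u % 3 = 2 := by omega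
  have hγδ : (γ * δ) % 3 = 2 := by
    rw [Nat.mul_mod, hγ, hδ, Nat.mul_mod u b, Nat.mul_mod u d, hbm, hdm]
    rcases hu12 with h1 | h1 <;> rw [h1] <;> norm_num
  have hsq : (3^(t+1))^2 * (γ*δ) = x^2 := by rw [← h]; ring
  have hdvd : 3^(t+1) ∣ x :=
    (Nat.pow_dvd_pow_iff (two_ne_zero)).mp ⟨γ*δ, hsq.symm⟩
  obtain ⟨y, rfl⟩ := hdvd
  have hyy : γ*δ = y^2 := by
    have h3 : (0:ℕ) < (3^(t+1))^2 := by positivity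
    apply Nat.eq_of_mul_eq_mul_left h3
    rw [hsq]; ring
  rw [hyy] at hγδ
  have hy : y % 3 = 0 ∨ y % 3 = 1 ∨ y % 3 = 2 := by omega
  rcases hy with h1|h1|h1 <;>
    rw [pow_two, Nat.mul_mod, h1] at hγδ <;> norm_num at hγδ

private lemma castAB (q : ℕ) {n x : ℕ} (h : (20^n - 1)*(77^n - 1) = x^2) :
    ((20:ZMod q)^n - 1) * ((77:ZMod q)^n - 1) = (x:ZMod q)^2 := by
  have h20 : (1:ℕ) ≤ 20^n := Nat.one_le_pow _ _ (by norm_num)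
  have h77 : (1:ℕ) ≤ 77^n := Nat.one_le_pow _ _ (by norm_num)
  have hcast := congrArg (Nat.cast (R := ZMod q)) h
  push_cast [Nat.cast_sub h20, Nat.cast_sub h77] at hcast
  exact hcast

private lemma kill (q L r : ℕ) {n x : ℕ}
    (hq20 : (20 : ZMod q)^L = 1) (hq77 : (77 : ZMod q)^L = 1)
    (h : (20^n - 1) * (77^n - 1) = x^2) (hr : n % L = r)
    (hkill : ∀ y : ZMod q, ((20 : ZMod q)^r - 1) * ((77 : ZMod q)^r - 1) ≠ y^2) :
    False := by
  have hc := castAB q h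
  obtain ⟨k, hk⟩ : ∃ k, n = L*k + r :=
    ⟨n/L, by rw [← hr]; exact (Nat.div_add_mod n L).symm⟩
  rw [hk, pow_add, pow_mul, hq20, one_pow, one_mul, pow_add, pow_mul, hq77,
    one_pow, one_mul] at hc
  exact hkill _ hc

private lemma odd64 (r : ℕ) {n x : ℕ} (h3 : 3 ≤ n)
    (h : (20^n - 1) * (77^n - 1) = x^2) (hr : n % 16 = r)
    (hkill : ∀ y : ZMod 64, ((0:ZMod 64) - 1) * ((77 : ZMod 64)^r - 1) ≠ y^2) :
    False := by
  have hc := castAB 64 h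
  have h20 : (20:ZMod 64)^n = 0 := by
    obtain ⟨m, hm⟩ : ∃ m, n = 3 + m := ⟨n - 3, by omega⟩
    rw [hm, pow_add, show (20:ZMod 64)^3 = 0 from by decide, zero_mul]
  rw [h20] at hc
  obtain ⟨k, hk⟩ : ∃ k, n = 16*k + r := ⟨n/16, by omega⟩
  rw [hk, pow_add, pow_mul, show (77:ZMod 64)^16 = 1 from by decide,
    one_pow, one_mul] at hc
  exact hkill _ hc

theorem stmt_6 (n x : ℕ) (hn : 0 < n) (hx : 0 < x) :
    (20 ^ n - 1) * (77 ^ n - 1) = x ^ 2 ↔ n = 1 ∧ x = 38 := by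
  constructor
  · intro h
    have hn1 : n = 1 := by
      by_contra hne
      have h2n : 2 ≤ n := by omega
      rcases (by omega : n % 2 = 0 ∨ n % 2 = 1) with hp | hp
      · exact even_case n x hn hp h
      · have h3 : 3 ≤ n := by omega
        rcases (by omega : n % 8 = 5 ∨ (n % 16 = 1 ∨ n % 16 = 3 ∨ n % 16 = 7 ∨
            n % 16 = 9 ∨ n % 16 = 11 ∨ n % 16 = 15)) with h8 | hcase
        · rcases (by omega : n % 72 = 5 ∨ n % 72 = 13 ∨ n % 72 = 21 ∨
              n % 72 = 29 ∨ n % 72 = 37 ∨ n % 72 = 45 ∨ n % 72 = 53 ∨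
              n % 72 = 61 ∨ n % 72 = 69) with hr|hr|hr|hr|hr|hr|hr|hr|hr
          · exact kill 13 72 5 (by decide) (by decide) h hr (by decide)
          · exact kill 37 72 13 (by decide) (by decide) h hr (by decide)
          · exact kill 73 72 21 (by decide) (by decide) h hr (by decide)
          · exact kill 13 72 29 (by decide) (by decide) h hr (by decide)
          · exact kill 73 72 37 (by decide) (by decide) h hr (by decide)
          · exact kill 37 72 45 (by decide) (by decide) h hr (by decide)
          · exact kill 13 72 53 (by decide) (by decide) h hr (by decide)
          · exact kill 37 72 61 (by decide) (by decide) h hr (by decide)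
          · exact kill 37 72 69 (by decide) (by decide) h hr (by decide)
        · rcases hcase with hr|hr|hr|hr|hr|hr
          · exact odd64 1 h3 h hr (by decide)
          · exact odd64 3 h3 h hr (by decide)
          · exact odd64 7 h3 h hr (by decide)
          · exact odd64 9 h3 h hr (by decide)
          · exact odd64 11 h3 h hr (by decide)
          · exact odd64 15 h3 h hr (by decide)
    subst hn1
    refine ⟨rfl, ?_⟩
    have hxx : x ^ 2 = 38 ^ 2 := by rw [← h]; norm_num
    exact Nat.pow_left_injective (by norm_num) hxx
  · rintro ⟨rfl, rfl⟩; norm_num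
end

section
/- The equation (12^n - 1)(45^n - 1) = x^2 has exactly one solution in positive integers n, x, namely n = 1, x = 22. -/
open Pell

lemma zmod_pow_mod {q : ℕ} (a : ZMod q) {L : ℕ} (hL : a ^ L = 1) (n : ℕ) :
    a ^ n = a ^ (n % L) := by
  conv_lhs => rw [← Nat.div_add_mod n L, pow_add, pow_mul, hL, one_pow, one_mul]

lemma nat_pow_cycle (a L M : ℕ) (h : a ^ L % M = 1 % M) (n : ℕ) :
    a ^ n % M = a ^ (n % L) % M := by
  conv_lhs => rw [← Nat.div_add_mod n L, pow_add, pow_mul]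
  rw [Nat.mul_mod, Nat.pow_mod, h, ← Nat.pow_mod, one_pow, ← Nat.mul_mod, one_mul]

lemma odd_sq_mod8 {z : ℕ} (hz : z % 2 = 1) : z ^ 2 % 8 = 1 := by
  obtain ⟨a, rfl⟩ : ∃ a, z = 2 * a + 1 := ⟨z / 2, by omega⟩
  obtain ⟨b, hb⟩ : ∃ b, a * (a + 1) = 2 * b := (Nat.even_mul_succ_self a).exists_two_nsmul _
  have h1 : (2 * a + 1) ^ 2 = 4 * (a * (a + 1)) + 1 := by ring
  omega


lemma gcd_flip {p q t k : ℤ} (h : p + q = t * k) : Int.gcd p k = Int.gcd q k := by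
  apply Nat.dvd_antisymm
  · have h1 : (↑(Int.gcd p k) : ℤ) ∣ q := by
      have ha : (↑(Int.gcd p k) : ℤ) ∣ p := Int.gcd_dvd_left p k
      have hb : (↑(Int.gcd p k) : ℤ) ∣ k := Int.gcd_dvd_right p k
      have : (↑(Int.gcd p k) : ℤ) ∣ t * k - p := dvd_sub (hb.mul_left t) ha
      rwa [show t * k - p = q by linarith] at this
    exact Int.natCast_dvd_natCast.mp (Int.dvd_coe_gcd h1 (Int.gcd_dvd_right p k))
  · have h1 : (↑(Int.gcd q k) : ℤ) ∣ p := by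
      have ha : (↑(Int.gcd q k) : ℤ) ∣ q := Int.gcd_dvd_left q k
      have hb : (↑(Int.gcd q k) : ℤ) ∣ k := Int.gcd_dvd_right q k
      have : (↑(Int.gcd q k) : ℤ) ∣ t * k - q := dvd_sub (hb.mul_left t) ha
      rwa [show t * k - q = p by linarith] at this
    exact Int.natCast_dvd_natCast.mp (Int.dvd_coe_gcd h1 (Int.gcd_dvd_right q k))

lemma pell_key_s7 {d : ℤ} (ε : Pell.Solution₁ d) (a b : ℕ) :
    (ε ^ (a + 2 * b)).x + (ε ^ a).x = 2 * ((ε ^ (a + b)).x * (ε ^ b).x) := by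
  have h1 : ε ^ (a + 2 * b) = ε ^ (a + b) * ε ^ b := by
    rw [← pow_add]; congr 1; ring
  have h2 : ε ^ a = ε ^ (a + b) * (ε ^ b)⁻¹ := by
    rw [eq_mul_inv_iff_mul_eq, ← pow_add]
  rw [h1, h2, Solution₁.x_mul, Solution₁.x_mul, Solution₁.x_inv, Solution₁.y_inv]
  ring

lemma pell_gcd_master {d : ℤ} (ε : Pell.Solution₁ d) :
    ∀ N j k : ℕ, j + k ≤ N → k ≤ j →
      ∃ i : ℕ, ((ε ^ i).x).natAbs = Int.gcd ((ε ^ j).x) ((ε ^ k).x) := by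
  intro N
  induction N with
  | zero =>
    intro j k h1 h2
    have : j = 0 ∧ k = 0 := by omega
    exact ⟨0, by simp [this.1, this.2]⟩
  | succ N ih =>
    intro j k hjk hkj
    rcases Nat.eq_zero_or_pos k with hk0 | hk1
    · subst hk0
      refine ⟨0, ?_⟩
      simp [Int.gcd]
    rcases eq_or_lt_of_le hkj with heq | hlt
    · exact ⟨k, by rw [heq, Int.gcd_self]⟩
    -- k < j
    rcases le_or_gt (2 * k) j with h2k | h2k
    · -- j ≥ 2k : gcd (X j) (X k) = gcd (X (j - 2k)) (X k)
      have hkey := pell_key_s7 ε (j - 2 * k) k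
      rw [show j - 2 * k + 2 * k = j by omega, show j - 2 * k + k = j - k by omega] at hkey
      have hg : Int.gcd ((ε ^ j).x) ((ε ^ k).x)
          = Int.gcd ((ε ^ (j - 2 * k)).x) ((ε ^ k).x) :=
        gcd_flip (t := 2 * (ε ^ (j - k)).x) (by linarith [hkey])
      rcases le_total k (j - 2 * k) with hs | hs
      · obtain ⟨i, hi⟩ := ih (j - 2 * k) k (by omega) hs
        exact ⟨i, by rw [hg]; exact hi⟩
      · obtain ⟨i, hi⟩ := ih k (j - 2 * k) (by omega) hs
        exact ⟨i, by rw [hg, Int.gcd_comm]; exact hi⟩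
    · -- k < j < 2k : gcd (X j) (X k) = gcd (X (2k - j)) (X k)
      have hkey := pell_key_s7 ε (2 * k - j) (j - k)
      rw [show 2 * k - j + 2 * (j - k) = j by omega,
          show 2 * k - j + (j - k) = k by omega] at hkey
      have hg : Int.gcd ((ε ^ j).x) ((ε ^ k).x)
          = Int.gcd ((ε ^ (2 * k - j)).x) ((ε ^ k).x) :=
        gcd_flip (t := 2 * (ε ^ (j - k)).x) (by linarith [hkey])
      obtain ⟨i, hi⟩ := ih k (2 * k - j) (by omega) (by omega)
      exact ⟨i, by rw [hg, Int.gcd_comm]; exact hi⟩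

lemma two_pow_mul_odd_unique : ∀ s {t a b : ℕ}, a % 2 = 1 → b % 2 = 1 →
    2 ^ s * a = 2 ^ t * b → s = t ∧ a = b := by
  intro s
  induction s with
  | zero =>
    intro t a b ha hb h
    simp only [pow_zero, one_mul] at h
    cases t with
    | zero => simp only [pow_zero, one_mul] at h; exact ⟨rfl, h⟩
    | succ t =>
      exfalso
      have h2 : 2 ∣ 2 ^ (t + 1) * b := Dvd.dvd.mul_right (dvd_pow_self 2 (Nat.succ_ne_zero t)) b
      omega
  | succ s ih =>
    intro t a b ha hb h
    cases t with
    | zero =>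
      exfalso
      simp only [pow_zero, one_mul] at h
      have h2 : 2 ∣ 2 ^ (s + 1) * a := Dvd.dvd.mul_right (dvd_pow_self 2 (Nat.succ_ne_zero s)) a
      omega
    | succ t =>
      have h' : 2 ^ s * a = 2 ^ t * b := by
        have hh : 2 * (2 ^ s * a) = 2 * (2 ^ t * b) := by
          rw [pow_succ, pow_succ] at h; ring_nf at h ⊢; linarith
        omega
      obtain ⟨h1, h2⟩ := ih ha hb h'
      exact ⟨by omega, h2⟩




lemma e45_1 {m : ℕ} (hm : m % 2 = 1) :
    ∃ c, 45 ^ (2 * m) = 8 * c + 1 ∧ c % 2 = 1 := by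
  have h1 : 45 ^ (2 * m) = (45 ^ 2) ^ m := by rw [← pow_mul]
  have h2 : (45 ^ 2) ^ m % 16 = 9 := by
    rw [nat_pow_cycle (45 ^ 2) 2 16 (by norm_num), hm]
    norm_num
  have h3 := Nat.div_add_mod ((45 ^ 2) ^ m) 16
  refine ⟨2 * ((45 ^ 2) ^ m / 16) + 1, by omega, by omega⟩

lemma e45_2 {m : ℕ} (hm : m % 2 = 1) :
    ∃ c, 45 ^ (4 * m) = 16 * c + 1 ∧ c % 2 = 1 ∧ c % 8 = m % 8 := by
  have h1 : 45 ^ (4 * m) = (45 ^ 4) ^ m := by rw [← pow_mul]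
  have h2 : (45 ^ 4) ^ m % 128 = 16 * (m % 8) + 1 := by
    rw [nat_pow_cycle (45 ^ 4) 8 128 (by norm_num)]
    have : m % 8 = 1 ∨ m % 8 = 3 ∨ m % 8 = 5 ∨ m % 8 = 7 := by omega
    rcases this with h | h | h | h <;> rw [h] <;> norm_num
  have h3 := Nat.div_add_mod ((45 ^ 4) ^ m) 128
  have hr : m % 8 < 8 := Nat.mod_lt _ (by norm_num)
  have hro : m % 8 % 2 = 1 := by omega
  refine ⟨8 * ((45 ^ 4) ^ m / 128) + m % 8, by omega, by omega, by omega⟩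

lemma e45 {m : ℕ} (hm : m % 2 = 1) : ∀ s, 1 ≤ s →
    ∃ c, 45 ^ (2 ^ s * m) = 2 ^ (s + 2) * c + 1 ∧ c % 2 = 1 ∧ (2 ≤ s → c % 8 = m % 8) := by
  have step : ∀ s, 2 ≤ s →
      (∃ c, 45 ^ (2 ^ s * m) = 2 ^ (s + 2) * c + 1 ∧ c % 2 = 1 ∧ c % 8 = m % 8) →
      ∃ c, 45 ^ (2 ^ (s + 1) * m) = 2 ^ (s + 3) * c + 1 ∧ c % 2 = 1 ∧ c % 8 = m % 8 := by
    intro s hs ⟨c, hc, hco, hc8⟩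
    have h1 : 45 ^ (2 ^ (s + 1) * m) = (45 ^ (2 ^ s * m)) ^ 2 := by
      rw [← pow_mul]; congr 1; ring
    have hQ2 : 2 ^ (s + 2) = 2 ^ (s + 1) * 2 := by rw [pow_succ]
    have hQ4 : 2 ^ (s + 3) = 2 ^ (s + 1) * 4 := by
      rw [show s + 3 = (s + 1) + 2 by omega, pow_add]; norm_num
    refine ⟨2 ^ (s + 1) * c ^ 2 + c, ?_, ?_, ?_⟩
    · rw [h1, hc, hQ2, hQ4]
      ring
    · have e : 2 ^ (s + 1) * c ^ 2 + c = 2 * (2 ^ s * c ^ 2) + c := by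
        rw [pow_succ]; ring
      rw [e, Nat.mul_add_mod]
      exact hco
    · obtain ⟨t, ht⟩ : ∃ t, 2 ^ (s + 1) = 8 * t := ⟨2 ^ (s - 2), by
        rw [show (8 : ℕ) = 2 ^ 3 by norm_num, ← pow_add]; congr 1; omega⟩
      have e : 2 ^ (s + 1) * c ^ 2 + c = 8 * (t * c ^ 2) + c := by rw [ht]; ring
      rw [e, Nat.mul_add_mod]
      exact hc8
  intro s hs
  rcases eq_or_lt_of_le hs with h1 | h1
  · obtain ⟨c, hc, hco⟩ := e45_1 hm
    refine ⟨c, ?_, hco, by omega⟩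
    rw [← h1, pow_one, show (1 : ℕ) + 2 = 3 from rfl, show (2 : ℕ) ^ 3 = 8 by norm_num]
    exact hc
  · have main : ∀ s, 2 ≤ s →
        ∃ c, 45 ^ (2 ^ s * m) = 2 ^ (s + 2) * c + 1 ∧ c % 2 = 1 ∧ c % 8 = m % 8 := by
      intro s hs
      induction s, hs using Nat.le_induction with
      | base =>
        obtain ⟨c, hc, hco, hc8⟩ := e45_2 hm
        refine ⟨c, ?_, hco, hc8⟩
        rw [show (2 : ℕ) ^ 2 = 4 by norm_num, show (2 : ℕ) + 2 = 4 from rfl,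
          show (2 : ℕ) ^ 4 = 16 by norm_num]
        exact hc
      | succ s hs ih => exact step s hs ih
    obtain ⟨c, hc, hco, hc8⟩ := main s (by omega)
    exact ⟨c, hc, hco, fun _ => hc8⟩

lemma e9 {m : ℕ} (hm : m % 8 = 7) : ∀ s, 1 ≤ s →
    ∃ c, 9 ^ (2 ^ s * m) = 2 ^ (s + 3) * c + 1 ∧ c % 8 = 3 := by
  intro s hs
  induction s, hs using Nat.le_induction with
  | base =>
    have h1 : 9 ^ (2 ^ 1 * m) = (9 ^ 2) ^ m := by rw [← pow_mul]; norm_num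
    have h2 : (9 ^ 2) ^ m % 128 = 49 := by
      rw [nat_pow_cycle (9 ^ 2) 8 128 (by norm_num), hm]
      norm_num
    have h3 := Nat.div_add_mod ((9 ^ 2) ^ m) 128
    refine ⟨8 * ((9 ^ 2) ^ m / 128) + 3, ?_, by omega⟩
    rw [h1, show (1 : ℕ) + 3 = 4 from rfl, show (2 : ℕ) ^ 4 = 16 by norm_num]
    omega
  | succ s hs ih =>
    obtain ⟨c, hc, hc8⟩ := ih
    have h1 : 9 ^ (2 ^ (s + 1) * m) = (9 ^ (2 ^ s * m)) ^ 2 := by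
      rw [← pow_mul]; congr 1; ring
    have hQ2 : 2 ^ (s + 3) = 2 ^ (s + 2) * 2 := by rw [pow_succ]
    have hQ4 : 2 ^ (s + 4) = 2 ^ (s + 2) * 4 := by
      rw [show s + 4 = (s + 2) + 2 by omega, pow_add]; norm_num
    refine ⟨2 ^ (s + 2) * c ^ 2 + c, ?_, ?_⟩
    · rw [h1, hc, hQ2, hQ4]
      ring
    · obtain ⟨t, ht⟩ : ∃ t, 2 ^ (s + 2) = 8 * t := ⟨2 ^ (s - 1), by
        rw [show (8 : ℕ) = 2 ^ 3 by norm_num, ← pow_add]; congr 1; omega⟩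
      have e : 2 ^ (s + 2) * c ^ 2 + c = 8 * (t * c ^ 2) + c := by rw [ht]; ring
      rw [e, Nat.mul_add_mod]
      exact hc8

theorem aux_forward (n x : ℕ) (hn : 0 < n) (hx : 0 < x)
    (hE : (12 ^ n - 1) * (45 ^ n - 1) = x ^ 2) : n = 1 ∧ x = 22 := by
  -- basic facts
  have h12 : 1 ≤ 12 ^ n := Nat.one_le_pow _ _ (by norm_num)
  have h45 : 1 ≤ 45 ^ n := Nat.one_le_pow _ _ (by norm_num)
  obtain ⟨a', ha'⟩ : ∃ a', 12 ^ n = a' + 1 := ⟨12 ^ n - 1, by omega⟩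
  obtain ⟨b', hb'⟩ : ∃ b', 45 ^ n = b' + 1 := ⟨45 ^ n - 1, by omega⟩
  have hE' : a' * b' = x ^ 2 := by
    have e1 : 12 ^ n - 1 = a' := by omega
    have e2 : 45 ^ n - 1 = b' := by omega
    rw [e1, e2] at hE; exact hE
  have key : x ^ 2 + 12 ^ n + 45 ^ n = 540 ^ n + 1 := by
    have h540 : (540 : ℕ) ^ n = 12 ^ n * 45 ^ n := by
      rw [show (540 : ℕ) = 12 * 45 from rfl, mul_pow]
    have hmm : (a' + 1) * (b' + 1) = a' * b' + a' + b' + 1 := by ring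
    rw [h540, ha', hb', hmm]
    omega
  -- case n = 1
  rcases eq_or_lt_of_le (show 1 ≤ n from hn) with h1 | h1
  · have hn1 : n = 1 := h1.symm
    subst hn1
    norm_num at ha' hb'
    have hx2 : x ^ 2 = 484 := by
      have e1 : a' = 11 := by omega
      have e2 : b' = 44 := by omega
      rw [e1, e2] at hE'
      omega
    have hxle : x ≤ 22 := by nlinarith
    have hxge : 22 ≤ x := by nlinarith
    exact ⟨rfl, by omega⟩
  -- n ≥ 2 : derive False
  exfalso
  have hn2 : 2 ≤ n := h1
  rcases Nat.even_or_odd n with hev | hodd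
  · -- even case
    have hneven : n % 2 = 0 := Nat.even_iff.mp hev
    obtain ⟨s, m, hm2, hnsm⟩ :=
      Nat.exists_eq_pow_mul_and_not_dvd (show n ≠ 0 by omega) 2 (by norm_num)
    have hmodd : m % 2 = 1 := by omega
    have hs1 : 1 ≤ s := by
      by_contra hs
      have hs0 : s = 0 := by omega
      rw [hs0, pow_zero, one_mul] at hnsm
      omega
    -- kernel construction
    obtain ⟨u, w, hwu, hu⟩ := Nat.sq_mul_squarefree a'
    have h144 : (144 : ℕ) ≤ 12 ^ n := by
      calc (144 : ℕ) = 12 ^ 2 := by norm_num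
      _ ≤ 12 ^ n := Nat.pow_le_pow_right (by norm_num) hn2
    have ha'pos : 0 < a' := by omega
    have hb'pos : 0 < b' := by
      have : (2025 : ℕ) ≤ 45 ^ n := by
        calc (2025 : ℕ) = 45 ^ 2 := by norm_num
        _ ≤ 45 ^ n := Nat.pow_le_pow_right (by norm_num) hn2
      omega
    have hwpos : 0 < w := by
      rcases Nat.eq_zero_or_pos w with h | h
      · rw [h] at hwu; simp at hwu; omega
      · exact h
    have hupos : 0 < u := by
      rcases Nat.eq_zero_or_pos u with h | h
      · rw [h] at hwu; simp at hwu; omega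
      · exact h
    have hw2x2 : w ^ 2 ∣ x ^ 2 := ⟨u * b', by rw [← hE', ← hwu]; ring⟩
    have hwx : w ∣ x := (Nat.pow_dvd_pow_iff two_ne_zero).mp hw2x2
    obtain ⟨q, hq⟩ := hwx
    have hqB : u * b' = q ^ 2 := by
      have h1 : w ^ 2 * (u * b') = w ^ 2 * q ^ 2 := by
        calc w ^ 2 * (u * b') = (w ^ 2 * u) * b' := by ring
        _ = a' * b' := by rw [hwu]
        _ = x ^ 2 := hE'
        _ = (w * q) ^ 2 := by rw [hq]
        _ = w ^ 2 * q ^ 2 := by ring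
      exact Nat.eq_of_mul_eq_mul_left (by positivity) h1
    have huq : u ∣ q := (hu.dvd_pow_iff_dvd two_ne_zero).mp ⟨b', hqB.symm⟩
    obtain ⟨V, hV⟩ := huq
    have hB : b' = u * V ^ 2 := by
      have h1 : u * b' = u * (u * V ^ 2) := by rw [hqB, hV]; ring
      exact Nat.eq_of_mul_eq_mul_left hupos h1
    -- parities
    have h2a : a' % 2 = 1 := by
      have : (2 : ℕ) ∣ 12 ^ n := dvd_pow (by norm_num) (by omega)
      omega
    have hwodd : w % 2 = 1 := by
      rcases Nat.even_or_odd w with he | ho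
      · exfalso
        obtain ⟨w', rfl⟩ := he
        have : a' = 2 * (2 * (w' * w') * u) := by rw [← hwu]; ring
        omega
      · exact Nat.odd_iff.mp ho
    have huodd : u % 2 = 1 := by
      rcases Nat.even_or_odd u with he | ho
      · exfalso
        obtain ⟨u', rfl⟩ := he
        have : a' = 2 * (w ^ 2 * u') := by rw [← hwu]; ring
        omega
      · exact Nat.odd_iff.mp ho
    have hu8 : u % 8 = 7 := by
      have h8d : (8 : ℕ) ∣ 12 ^ n := dvd_trans (by norm_num) (pow_dvd_pow 12 hn2)
      have ha8 : a' % 8 = 7 := by omega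
      have hmm := Nat.mul_mod (w ^ 2) u 8
      rw [odd_sq_mod8 hwodd, one_mul, hwu] at hmm
      omega
    -- 2-adic structure of b'
    obtain ⟨c, hc45, hcodd, hc8⟩ := e45 hmodd s hs1
    have hb'c : b' = 2 ^ (s + 2) * c := by
      rw [hnsm] at hb'
      omega
    have hVpos : 0 < V := by
      rcases Nat.eq_zero_or_pos V with h | h
      · rw [h] at hB; simp at hB; omega
      · exact h
    obtain ⟨t, z, hz2, hVz⟩ :=
      Nat.exists_eq_pow_mul_and_not_dvd (show V ≠ 0 by omega) 2 (by norm_num)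
    have hzodd : z % 2 = 1 := by omega
    have huz : (u * z ^ 2) % 2 = 1 := by
      have h1 := Nat.mul_mod u (z ^ 2) 2
      rw [huodd, one_mul] at h1
      have h2 : z ^ 2 % 8 = 1 := odd_sq_mod8 hzodd
      omega
    have hbz : 2 ^ (s + 2) * c = 2 ^ (2 * t) * (u * z ^ 2) := by
      rw [← hb'c, hB, hVz]
      ring
    obtain ⟨hst, hcuz⟩ := two_pow_mul_odd_unique (s + 2) hcodd huz hbz
    have hs2 : 2 ≤ s := by omega
    have hm8 : m % 8 = 7 := by
      have h1 := hc8 hs2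
      have h2 := Nat.mul_mod u (z ^ 2) 8
      rw [odd_sq_mod8 hzodd, mul_one, hu8] at h2
      omega
    -- Pell setup
    set H := 2 ^ (s - 1) * m with hH
    have h2s : 2 ^ s = 2 * 2 ^ (s - 1) := by
      conv_lhs => rw [show s = (s - 1) + 1 by omega]
      rw [pow_succ]; ring
    have hn2h : n = 2 * H := by
      rw [hnsm, hH, h2s]; ring
    have hHpos : 0 < H := by
      rw [hH]
      have hm0 : 0 < m := by omega
      positivity
    have hAZ : ((12 : ℤ) ^ H) ^ 2 - (u : ℤ) * (w : ℤ) ^ 2 = 1 := by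
      have hN : 12 ^ n = w ^ 2 * u + 1 := by omega
      have hNZ : ((12 : ℤ)) ^ n = (w : ℤ) ^ 2 * (u : ℤ) + 1 := by exact_mod_cast hN
      have hpow : ((12 : ℤ) ^ H) ^ 2 = (12 : ℤ) ^ n := by
        rw [← pow_mul, hn2h]; ring_nf
      rw [hpow, hNZ]; ring
    have hBZ : ((45 : ℤ) ^ H) ^ 2 - (u : ℤ) * (V : ℤ) ^ 2 = 1 := by
      have hN : 45 ^ n = u * V ^ 2 + 1 := by omega
      have hNZ : ((45 : ℤ)) ^ n = (u : ℤ) * (V : ℤ) ^ 2 + 1 := by exact_mod_cast hN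
      have hpow : ((45 : ℤ) ^ H) ^ 2 = (45 : ℤ) ^ n := by
        rw [← pow_mul, hn2h]; ring_nf
      rw [hpow, hNZ]; ring
    have hd0 : (0 : ℤ) < (u : ℤ) := by exact_mod_cast hupos
    have hdns : ¬IsSquare ((u : ℕ) : ℤ) := by
      rintro ⟨r, hr⟩
      have h1 : u = r.natAbs * r.natAbs := by
        have := congrArg Int.natAbs hr
        rwa [Int.natAbs_natCast, Int.natAbs_mul] at this
      have h2 : IsUnit r.natAbs := hu r.natAbs (dvd_of_eq h1.symm)
      rw [Nat.isUnit_iff] at h2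
      rw [h2] at h1
      omega
    obtain ⟨ε, hf⟩ := Pell.IsFundamental.exists_of_not_isSquare hd0 hdns
    set sa : Pell.Solution₁ (u : ℤ) := Pell.Solution₁.mk ((12 : ℤ) ^ H) (w : ℤ) hAZ with hsa
    set sb : Pell.Solution₁ (u : ℤ) := Pell.Solution₁.mk ((45 : ℤ) ^ H) (V : ℤ) hBZ with hsb
    obtain ⟨j, hj⟩ := hf.eq_pow_of_nonneg (a := sa)
      (by rw [hsa, Pell.Solution₁.x_mk]; positivity)
      (by rw [hsa, Pell.Solution₁.y_mk]; positivity)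
    obtain ⟨k, hk⟩ := hf.eq_pow_of_nonneg (a := sb)
      (by rw [hsb, Pell.Solution₁.x_mk]; positivity)
      (by rw [hsb, Pell.Solution₁.y_mk]; positivity)
    -- the gcd of the x-coordinates
    have hgN : Nat.gcd (12 ^ H) (45 ^ H) = 3 ^ H := by
      have e12 : (12 : ℕ) ^ H = 3 ^ H * 4 ^ H := by rw [← mul_pow]; norm_num
      have e45' : (45 : ℕ) ^ H = 3 ^ H * 15 ^ H := by rw [← mul_pow]; norm_num
      rw [e12, e45', Nat.gcd_mul_left]
      have hcop : Nat.Coprime (4 ^ H) (15 ^ H) :=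
        Nat.Coprime.pow H H (show Nat.Coprime 4 15 by decide)
      rw [hcop.gcd_eq_one, mul_one]
    have hgZ : Int.gcd (sa.x) (sb.x) = 3 ^ H := by
      rw [hsa, hsb, Pell.Solution₁.x_mk, Pell.Solution₁.x_mk]
      have c1 : (12 : ℤ) ^ H = ((12 ^ H : ℕ) : ℤ) := by push_cast; ring
      have c2 : (45 : ℤ) ^ H = ((45 ^ H : ℕ) : ℤ) := by push_cast; ring
      rw [c1, c2, Int.gcd_natCast_natCast, hgN]
    have hExists : ∃ i : ℕ, ((ε ^ i).x).natAbs = 3 ^ H := by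
      rcases le_total k j with hkj | hjk
      · obtain ⟨i, hi⟩ := pell_gcd_master ε (j + k) j k le_rfl hkj
        exact ⟨i, by rw [hi, ← hj, ← hk, hgZ]⟩
      · obtain ⟨i, hi⟩ := pell_gcd_master ε (j + k) k j (by omega) hjk
        exact ⟨i, by rw [hi, ← hj, ← hk, Int.gcd_comm, hgZ]⟩
    obtain ⟨i, hi3⟩ := hExists
    have hp := (ε ^ i).prop
    set e := ((ε ^ i).y).natAbs with he
    have hx2 : ((ε ^ i).x) ^ 2 = (9 : ℤ) ^ H := by
      rw [← Int.natAbs_sq ((ε ^ i).x), hi3]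
      push_cast
      rw [← pow_mul, show H * 2 = 2 * H by ring, pow_mul]
      norm_num
    have hy2 : ((ε ^ i).y) ^ 2 = ((e : ℕ) : ℤ) ^ 2 := (Int.natAbs_sq _).symm
    have hUE : u * e ^ 2 + 1 = 9 ^ H := by
      have hZ : (u : ℤ) * ((e : ℕ) : ℤ) ^ 2 + 1 = (9 : ℤ) ^ H := by
        rw [← hy2]
        have := hp
        rw [hx2] at this
        linarith
      exact_mod_cast hZ
    have hepos : 0 < e := by
      rcases Nat.eq_zero_or_pos e with h | h
      · exfalso
        rw [h] at hUE
        have h9 : (9 : ℕ) ≤ 9 ^ H := by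
          calc (9 : ℕ) = 9 ^ 1 := by norm_num
          _ ≤ 9 ^ H := Nat.pow_le_pow_right (by norm_num) hHpos
        simp at hUE
        omega
      · exact h
    obtain ⟨t2, z2, hz2', hez⟩ :=
      Nat.exists_eq_pow_mul_and_not_dvd (show e ≠ 0 by omega) 2 (by norm_num)
    have hz2odd : z2 % 2 = 1 := by omega
    have huz2 : (u * z2 ^ 2) % 2 = 1 := by
      have h1 := Nat.mul_mod u (z2 ^ 2) 2
      rw [huodd, one_mul] at h1
      have h2 : z2 ^ 2 % 8 = 1 := odd_sq_mod8 hz2odd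
      omega
    obtain ⟨c9, hc9, hc93⟩ := e9 hm8 (s - 1) (by omega)
    have h9H : 9 ^ H = 2 ^ (s - 1 + 3) * c9 + 1 := by rw [hH]; exact hc9
    have hkey2 : 2 ^ (s - 1 + 3) * c9 = 2 ^ (2 * t2) * (u * z2 ^ 2) := by
      have : u * e ^ 2 = 2 ^ (2 * t2) * (u * z2 ^ 2) := by
        rw [hez]; ring
      omega
    have hc9odd : c9 % 2 = 1 := by omega
    obtain ⟨_, hfin⟩ := two_pow_mul_odd_unique (s - 1 + 3) hc9odd huz2 hkey2
    have hfin8 := Nat.mul_mod u (z2 ^ 2) 8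
    rw [odd_sq_mod8 hz2odd, mul_one, hu8] at hfin8
    omega
  · -- odd case
    have hnodd : n % 2 = 1 := Nat.odd_iff.mp hodd
    have hn3 : 3 ≤ n := by omega
    have h12_32 : 12 ^ n % 32 = 0 := by
      have hd : (32 : ℕ) ∣ 12 ^ n := dvd_trans (by norm_num) (pow_dvd_pow 12 hn3)
      omega
    have h540_32 : 540 ^ n % 32 = 0 := by
      have hd : (32 : ℕ) ∣ 540 ^ n := dvd_trans (by norm_num) (pow_dvd_pow 540 hn3)
      omega
    have h45r : 45 ^ n % 32 = 45 ^ (n % 8) % 32 := nat_pow_cycle 45 8 32 (by norm_num) n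
    have hxm : (x % 32) ^ 2 % 32 = x ^ 2 % 32 := (Nat.pow_mod x 2 32).symm
    have hxlt : x % 32 < 32 := Nat.mod_lt _ (by norm_num)
    have hmod8 : n % 8 = 1 ∨ n % 8 = 3 ∨ n % 8 = 5 ∨ n % 8 = 7 := by omega
    rcases hmod8 with h8 | h8 | h8 | h8
    · rw [h8] at h45r; norm_num at h45r
      have hbad : ∀ y, y < 32 → y ^ 2 % 32 ≠ 20 := by decide
      exact hbad _ hxlt (by omega)
    · rw [h8] at h45r; norm_num at h45r
      have hbad : ∀ y, y < 32 → y ^ 2 % 32 ≠ 12 := by decide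
      exact hbad _ hxlt (by omega)
    · -- n % 8 = 5 : prime certificates
      have h24 : n % 24 = 5 ∨ n % 24 = 13 ∨ n % 24 = 21 := by omega
      have hc13 := congrArg (Nat.cast (R := ZMod 13)) key
      have hc73 := congrArg (Nat.cast (R := ZMod 73)) key
      push_cast at hc13 hc73
      rcases h24 with h24 | h24 | h24
      · have h12n : n % 12 = 5 := by omega
        rw [zmod_pow_mod (12 : ZMod 13) (show (12 : ZMod 13) ^ 12 = 1 by decide) n,
            zmod_pow_mod (45 : ZMod 13) (show (45 : ZMod 13) ^ 12 = 1 by decide) n,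
            zmod_pow_mod (540 : ZMod 13) (show (540 : ZMod 13) ^ 12 = 1 by decide) n,
            h12n] at hc13
        have hbad : ∀ y : ZMod 13, y ^ 2 + 12 ^ 5 + 45 ^ 5 ≠ 540 ^ 5 + 1 := by decide
        exact hbad _ hc13
      · have h72 : n % 72 = 13 ∨ n % 72 = 37 ∨ n % 72 = 61 := by omega
        rw [zmod_pow_mod (12 : ZMod 73) (show (12 : ZMod 73) ^ 72 = 1 by decide) n,
            zmod_pow_mod (45 : ZMod 73) (show (45 : ZMod 73) ^ 72 = 1 by decide) n,
            zmod_pow_mod (540 : ZMod 73) (show (540 : ZMod 73) ^ 72 = 1 by decide) n] at hc73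
        rcases h72 with h72 | h72 | h72 <;> rw [h72] at hc73
        · have hbad : ∀ y : ZMod 73, y ^ 2 + 12 ^ 13 + 45 ^ 13 ≠ 540 ^ 13 + 1 := by decide
          exact hbad _ hc73
        · have hbad : ∀ y : ZMod 73, y ^ 2 + 12 ^ 37 + 45 ^ 37 ≠ 540 ^ 37 + 1 := by decide
          exact hbad _ hc73
        · have hbad : ∀ y : ZMod 73, y ^ 2 + 12 ^ 61 + 45 ^ 61 ≠ 540 ^ 61 + 1 := by decide
          exact hbad _ hc73
      · have h12n : n % 12 = 9 := by omega
        rw [zmod_pow_mod (12 : ZMod 13) (show (12 : ZMod 13) ^ 12 = 1 by decide) n,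
            zmod_pow_mod (45 : ZMod 13) (show (45 : ZMod 13) ^ 12 = 1 by decide) n,
            zmod_pow_mod (540 : ZMod 13) (show (540 : ZMod 13) ^ 12 = 1 by decide) n,
            h12n] at hc13
        have hbad : ∀ y : ZMod 13, y ^ 2 + 12 ^ 9 + 45 ^ 9 ≠ 540 ^ 9 + 1 := by decide
        exact hbad _ hc13
    · rw [h8] at h45r; norm_num at h45r
      have hbad : ∀ y, y < 32 → y ^ 2 % 32 ≠ 28 := by decide
      exact hbad _ hxlt (by omega)


theorem stmt_7 (n x : ℕ) (hn : 0 < n) (hx : 0 < x) :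
    (12 ^ n - 1) * (45 ^ n - 1) = x ^ 2 ↔ n = 1 ∧ x = 22 := by
  constructor
  · exact aux_forward n x hn hx
  · rintro ⟨rfl, rfl⟩
    norm_num
end

section
/- Let a, b be integers with 1 < a < b, a ∤ b, b ∤ a, and g = gcd(a,b) > 1. If g² > a or g² > b, then there are no positive integers n, x with n even such that (a^n - 1)(b^n - 1) = x^2. -/
set_option maxHeartbeats 1000000

private lemma int_pos_left {s t : ℤ} (ht : 0 < t) (h : 0 < s * t) : 0 < s := by
  rcases mul_pos_iff.mp h with ⟨hs, _⟩ | ⟨_, ht'⟩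
  · exact hs
  · exact absurd ht (not_lt.mpr ht'.le)

private lemma int_lt_of_sq_lt_sq {s t : ℤ} (ht : 0 ≤ t) (h : s ^ 2 < t ^ 2) : s < t := by
  by_contra h'
  push_neg at h'
  have h0 : 0 ≤ s := le_trans ht h'
  have := mul_le_mul h' h' ht h0
  linarith only [this, h]

/-- Minimality: any positive Pell solution with x-part divisible by c has x ≥ A,
provided A is a solution x-part divisible by c with A < c². -/
private lemma pell_min (D A u c : ℤ) (hD : 2 ≤ D) (hA : 2 ≤ A) (hu : 1 ≤ u)
    (heA : A ^ 2 - D * u ^ 2 = 1) (hc : 2 ≤ c) (hcA : c ∣ A) (hAc : A < c ^ 2) :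
    ∀ x y : ℤ, 1 ≤ x → 1 ≤ y → x ^ 2 - D * y ^ 2 = 1 → c ∣ x → A ≤ x := by
  intro x y hx hy hxy hcx
  by_contra hlt
  push_neg at hlt
  have hx2lt : x ^ 2 < A ^ 2 := pow_lt_pow_left₀ hlt (by linarith) two_ne_zero
  have hy2 : y ^ 2 < u ^ 2 := by
    have hD' : D * y ^ 2 < D * u ^ 2 := by linarith
    exact lt_of_mul_lt_mul_left hD' (by linarith)
  set X := x * A - D * u * y with hX
  set Y := x * u - A * y with hY
  have hnorm : X ^ 2 - D * Y ^ 2 = 1 := by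
    have h : X ^ 2 - D * Y ^ 2 = (x ^ 2 - D * y ^ 2) * (A ^ 2 - D * u ^ 2) := by ring
    rw [h, hxy, heA]; ring
  have h1 : (x * u - A * y) * (x * u + A * y) = u ^ 2 - y ^ 2 := by
    linear_combination u ^ 2 * hxy - y ^ 2 * heA
  have hsum1 : 0 < x * u + A * y := by
    have p1 := mul_pos (show (0:ℤ) < x by linarith) (show (0:ℤ) < u by linarith)
    have p2 := mul_pos (show (0:ℤ) < A by linarith) (show (0:ℤ) < y by linarith)
    linarith
  have hY1 : 1 ≤ Y := by
    have := int_pos_left hsum1 (by rw [h1]; linarith)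
    linarith
  have h2 : (x * A - D * u * y) * (x * A + D * u * y) = x ^ 2 + A ^ 2 - 1 := by
    linear_combination (A ^ 2 - 1) * hxy + D * y ^ 2 * heA
  have hsum2 : 0 < x * A + D * u * y := by
    have p1 := mul_pos (show (0:ℤ) < x by linarith) (show (0:ℤ) < A by linarith)
    have p2 : 0 ≤ D * u * y :=
      mul_nonneg (mul_nonneg (by linarith) (by linarith)) (by linarith)
    linarith
  have hX1 : 1 ≤ X := by
    have q1 := mul_pos (show (0:ℤ) < x by linarith) (show (0:ℤ) < x by linarith)
    have q2 := mul_pos (show (0:ℤ) < A by linarith) (show (0:ℤ) < A by linarith)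
    have := int_pos_left hsum2 (by rw [h2]; linarith only [q1, q2])
    linarith
  have hcY : c ∣ Y := dvd_sub (hcx.mul_right u) (hcA.mul_right y)
  have hYc : c ≤ Y := Int.le_of_dvd (by linarith) hcY
  have hxc : c ≤ x := Int.le_of_dvd (by linarith) hcx
  have hXc : c + 1 ≤ X := by
    have hY2c : c * c ≤ Y * Y := mul_le_mul hYc hYc (by linarith) (by linarith)
    have t : 2 * (c * c) ≤ D * (Y * Y) :=
      mul_le_mul hD hY2c (mul_nonneg (by linarith) (by linarith)) (by linarith)
    by_contra h
    push_neg at h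
    have hXX : X * X ≤ c * c := mul_le_mul (by linarith) (by linarith) (by linarith) (by linarith)
    have hcc : 0 ≤ c * c := mul_nonneg (by linarith) (by linarith)
    linarith only [hnorm, t, hXX, hcc]
  have hfin : x * X + D * y * Y = A := by linear_combination A * hxy
  have t1 : c * (c + 1) ≤ x * X := mul_le_mul hxc hXc (by linarith) (by linarith)
  have t2 : 1 * c ≤ y * Y := mul_le_mul hy hYc (by linarith) (by linarith)
  have t3 : 2 * (1 * c) ≤ D * (y * Y) := mul_le_mul hD t2 (by linarith) (by linarith)
  linarith only [hfin, t1, t3, hAc, hc]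

/-- Structure of solutions with y-part divisible by c: the y-part is divisible by A. -/
private lemma pell_H (D A u c : ℤ) (hD : 2 ≤ D) (hA : 2 ≤ A) (hu : 1 ≤ u)
    (heA : A ^ 2 - D * u ^ 2 = 1) (hc : 2 ≤ c) (hcA : c ∣ A) (hAc : A < c ^ 2) :
    ∀ x y : ℤ, 1 ≤ x → 0 ≤ y → x ^ 2 - D * y ^ 2 = 1 → c ∣ y → A ∣ y := by
  suffices H : ∀ n : ℕ, ∀ x y : ℤ, x.toNat ≤ n → 1 ≤ x → 0 ≤ y →
      x ^ 2 - D * y ^ 2 = 1 → c ∣ y → A ∣ y by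
    exact fun x y => H x.toNat x y le_rfl
  intro n
  induction n using Nat.strong_induction_on with
  | _ n IH =>
    intro x y hxn hx hy hxy hcy
    rcases eq_or_lt_of_le hy with h0 | hy1
    · exact ⟨0, by rw [← h0]; ring⟩
    replace hy1 : 1 ≤ y := hy1
    have hyy1 : 1 * 1 ≤ y * y := mul_le_mul hy1 hy1 (by linarith) (by linarith)
    have hDyy : 2 * (1 * 1) ≤ D * (y * y) := mul_le_mul hD hyy1 (by linarith) (by linarith)
    have hx2 : 2 ≤ x := by
      by_contra hcon
      push_neg at hcon
      have hx1 : x = 1 := le_antisymm (by linarith) hx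
      rw [hx1] at hxy
      linarith only [hxy, hDyy]
    set M := A * x - D * u * y with hM
    set Z := u * x - A * y with hZ
    have hnormM : M ^ 2 - D * Z ^ 2 = 1 := by
      have h : M ^ 2 - D * Z ^ 2 = (A ^ 2 - D * u ^ 2) * (x ^ 2 - D * y ^ 2) := by ring
      rw [h, hxy, heA]; ring
    have h2 : (A * x - D * u * y) * (A * x + D * u * y) = A ^ 2 + x ^ 2 - 1 := by
      linear_combination (x ^ 2 - 1) * heA + D * u ^ 2 * hxy
    have hsum2 : 0 < A * x + D * u * y := by
      have p1 : 0 < A * x := mul_pos (by linarith) (by linarith)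
      have p2 : 0 ≤ D * u * y :=
        mul_nonneg (mul_nonneg (by linarith) (by linarith)) hy
      linarith
    have hM1 : 1 ≤ M := by
      have q1 := mul_pos (show (0:ℤ) < x by linarith) (show (0:ℤ) < x by linarith)
      have q2 := mul_pos (show (0:ℤ) < A by linarith) (show (0:ℤ) < A by linarith)
      have := int_pos_left hsum2 (by rw [h2]; linarith only [q1, q2])
      linarith
    have hcM : c ∣ M := dvd_sub (hcA.mul_right x) (hcy.mul_left (D * u))
    have hAM : A ≤ M := by
      rcases eq_or_ne Z 0 with hz0 | hz0
      · exfalso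
        have hMsq : M ^ 2 = 1 := by rw [hz0] at hnormM; linarith [hnormM]
        have hMle : M ≤ 1 := by
          by_contra hM2
          push_neg at hM2
          have : 2 * 2 ≤ M * M := mul_le_mul (by linarith) (by linarith) (by linarith) (by linarith)
          linarith only [this, hMsq]
        have hMeq : M = 1 := le_antisymm hMle hM1
        have : c ≤ 1 := Int.le_of_dvd one_pos (hMeq ▸ hcM)
        linarith
      · have habs : 1 ≤ |Z| := Int.one_le_abs (by simpa using hz0)
        have hnabs : M ^ 2 - D * |Z| ^ 2 = 1 := by rw [sq_abs]; exact hnormM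
        exact pell_min D A u c hD hA hu heA hc hcA hAc M |Z| hM1 habs hnabs hcM
    have p2 : 0 ≤ D * u * y :=
      mul_nonneg (mul_nonneg (by linarith) (by linarith)) hy
    have hxP : 2 * A ^ 2 - 1 ≤ x := by
      have hstep : D * u * y ≤ A * (x - 1) := by linarith
      have s1 : (D * u * y) ^ 2 ≤ (A * (x - 1)) ^ 2 := pow_le_pow_left₀ p2 hstep 2
      have key : (D * u * y) ^ 2 = (A ^ 2 - 1) * (x ^ 2 - 1) := by
        linear_combination (-(D * y ^ 2)) * heA - (A ^ 2 - 1) * hxy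
      have id1 : (x - 1) * (x + 1 - 2 * A ^ 2) = (A * (x - 1)) ^ 2 - (A ^ 2 - 1) * (x ^ 2 - 1) := by
        ring
      have fact : 0 ≤ (x - 1) * (x + 1 - 2 * A ^ 2) := by rw [id1, ← key]; linarith
      by_contra hcon
      push_neg at hcon
      have : (x - 1) * (x + 1 - 2 * A ^ 2) < 0 :=
        mul_neg_of_pos_of_neg (by linarith) (by linarith)
      linarith
    rcases eq_or_lt_of_le hxP with hxeq | hxgt
    · have e0 : D * y ^ 2 = D * (2 * A * u) ^ 2 := by
        linear_combination (-1) * hxy + 4 * A ^ 2 * heA + (x + (2 * A ^ 2 - 1)) * hxeq.symm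
      have e1 : (y - 2 * A * u) * (y + 2 * A * u) = 0 := by
        have := mul_left_cancel₀ (show (D:ℤ) ≠ 0 by linarith) e0
        linear_combination this
      rcases mul_eq_zero.mp e1 with h | h
      · exact ⟨2 * u, by linarith⟩
      · exfalso
        have := mul_pos (show (0:ℤ) < A by linarith) (show (0:ℤ) < u by linarith)
        linarith
    · set P := 2 * A ^ 2 - 1 with hPdef
      set Q := 2 * A * u with hQdef
      have hPQ : P ^ 2 - D * Q ^ 2 = 1 := by linear_combination 4 * A ^ 2 * heA
      have hAA : 2 * 2 ≤ A * A := mul_le_mul hA hA (by linarith) (by linarith)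
      have hP : 2 ≤ P := by
        have : A * A = A ^ 2 := by ring
        linarith [hAA]
      have hQ1 : 1 ≤ Q := by
        have := mul_pos (show (0:ℤ) < A by linarith) (show (0:ℤ) < u by linarith)
        linarith
      have hyQ : Q < y := by
        have hx2' : P ^ 2 < x ^ 2 := pow_lt_pow_left₀ hxgt (by linarith) two_ne_zero
        have d1 : D * Q ^ 2 < D * y ^ 2 := by linarith
        have d2 : Q ^ 2 < y ^ 2 := lt_of_mul_lt_mul_left d1 (by linarith)
        exact int_lt_of_sq_lt_sq hy d2
      set x' := P * x - D * Q * y with hx'def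
      set y' := P * y - Q * x with hy'def
      have hnorm' : x' ^ 2 - D * y' ^ 2 = 1 := by
        have h : x' ^ 2 - D * y' ^ 2 = (P ^ 2 - D * Q ^ 2) * (x ^ 2 - D * y ^ 2) := by ring
        rw [h, hxy, hPQ]; ring
      have hq1 : (P * y - Q * x) * (P * y + Q * x) = y ^ 2 - Q ^ 2 := by
        linear_combination y ^ 2 * hPQ - Q ^ 2 * hxy
      have hsq1 : 0 < P * y + Q * x := by
        have p3 := mul_pos (show (0:ℤ) < P by linarith) (show (0:ℤ) < y by linarith)
        have p4 := mul_pos (show (0:ℤ) < Q by linarith) (show (0:ℤ) < x by linarith)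
        linarith
      have hy'1 : 1 ≤ y' := by
        have hQ2 : Q ^ 2 < y ^ 2 := pow_lt_pow_left₀ hyQ (by linarith) two_ne_zero
        have := int_pos_left hsq1 (by rw [hq1]; linarith)
        linarith
      have hq2 : (P * x - D * Q * y) * (P * x + D * Q * y) = P ^ 2 + x ^ 2 - 1 := by
        linear_combination (x ^ 2 - 1) * hPQ + D * Q ^ 2 * hxy
      have hsq2 : 0 < P * x + D * Q * y := by
        have p3 := mul_pos (show (0:ℤ) < P by linarith) (show (0:ℤ) < x by linarith)
        have p4 : 0 ≤ D * Q * y :=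
          mul_nonneg (mul_nonneg (by linarith) (by linarith)) hy
        linarith
      have hx'1 : 1 ≤ x' := by
        have q1 := mul_pos (show (0:ℤ) < P by linarith) (show (0:ℤ) < P by linarith)
        have q2 := mul_pos (show (0:ℤ) < x by linarith) (show (0:ℤ) < x by linarith)
        have := int_pos_left hsq2 (by rw [hq2]; linarith only [q1, q2])
        linarith
      have hcQ : c ∣ Q := Dvd.dvd.mul_right (hcA.mul_left 2) u
      have hcy' : c ∣ y' := dvd_sub (hcy.mul_left P) (hcQ.mul_right x)
      have hx'lt : x' < x := by
        have key2 : (D * Q * y) ^ 2 = (P ^ 2 - 1) * (x ^ 2 - 1) := by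
          linear_combination (-(D * y ^ 2)) * hPQ - (P ^ 2 - 1) * hxy
        have idd : (D * Q * y) ^ 2 - ((P - 1) * x) ^ 2 = (P - 1) * (2 * x ^ 2 - P - 1) := by
          rw [key2]; ring
        have hxx : x ≤ x * x := le_mul_of_one_le_left (by linarith) (by linarith)
        have hfac2 : 0 < 2 * x ^ 2 - P - 1 := by
          have : x * x = x ^ 2 := by ring
          linarith
        have hposmul : 0 < (P - 1) * (2 * x ^ 2 - P - 1) :=
          mul_pos (by linarith) hfac2
        have hlt2 : ((P - 1) * x) ^ 2 < (D * Q * y) ^ 2 := by linarith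
        have p4 : 0 ≤ D * Q * y :=
          mul_nonneg (mul_nonneg (by linarith) (by linarith)) hy
        have := int_lt_of_sq_lt_sq p4 hlt2
        linarith
      have hmeas : x'.toNat < n := by omega
      have hAy' : A ∣ y' := IH x'.toNat hmeas x' y' le_rfl hx'1 (by linarith) hnorm' hcy'
      have hyrec : y = P * y' + Q * x' := by linear_combination y * hPQ - 8 * A ^ 2 * y * heA
      have hAQ : A ∣ Q := ⟨2 * u, by ring⟩
      rw [hyrec]
      exact dvd_add (hAy'.mul_left P) (hAQ.mul_right x')

/-- The crux lemma: two Pell solutions for one D whose x-parts share a divisor c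
with c² exceeding the smaller x-part force divisibility of the x-parts. -/
private lemma pell_crux (D A B u v c : ℤ) (hD : 2 ≤ D) (hA : 2 ≤ A) (hu : 1 ≤ u) (hv : 1 ≤ v)
    (hAB : A < B) (heA : A ^ 2 - D * u ^ 2 = 1) (heB : B ^ 2 - D * v ^ 2 = 1)
    (hc : 2 ≤ c) (hcA : c ∣ A) (hcB : c ∣ B) (hAc : A < c ^ 2) : A ∣ B := by
  have hB : 2 ≤ B := by linarith
  have huv : u < v := by
    have h1 : A ^ 2 < B ^ 2 := pow_lt_pow_left₀ hAB (by linarith) two_ne_zero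
    have h2 : D * u ^ 2 < D * v ^ 2 := by linarith
    have h3 : u ^ 2 < v ^ 2 := lt_of_mul_lt_mul_left h2 (by linarith)
    exact int_lt_of_sq_lt_sq (by linarith) h3
  set X := A * B - D * u * v with hXdef
  set Y := A * v - u * B with hYdef
  have hnorm : X ^ 2 - D * Y ^ 2 = 1 := by
    have h : X ^ 2 - D * Y ^ 2 = (A ^ 2 - D * u ^ 2) * (B ^ 2 - D * v ^ 2) := by ring
    rw [h, heA, heB]; ring
  have hq1 : (A * v - u * B) * (A * v + u * B) = v ^ 2 - u ^ 2 := by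
    linear_combination v ^ 2 * heA - u ^ 2 * heB
  have hsq1 : 0 < A * v + u * B := by
    have p1 := mul_pos (show (0:ℤ) < A by linarith) (show (0:ℤ) < v by linarith)
    have p2 := mul_pos (show (0:ℤ) < u by linarith) (show (0:ℤ) < B by linarith)
    linarith
  have hY1 : 1 ≤ Y := by
    have huv2 : u ^ 2 < v ^ 2 := pow_lt_pow_left₀ huv (by linarith) two_ne_zero
    have := int_pos_left hsq1 (by rw [hq1]; linarith)
    linarith
  have hq2 : (A * B - D * u * v) * (A * B + D * u * v) = A ^ 2 + B ^ 2 - 1 := by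
    linear_combination (B ^ 2 - 1) * heA + D * u ^ 2 * heB
  have hsq2 : 0 < A * B + D * u * v := by
    have p1 := mul_pos (show (0:ℤ) < A by linarith) (show (0:ℤ) < B by linarith)
    have p2 : 0 ≤ D * u * v :=
      mul_nonneg (mul_nonneg (by linarith) (by linarith)) (by linarith)
    linarith
  have hX1 : 1 ≤ X := by
    have q1 := mul_pos (show (0:ℤ) < A by linarith) (show (0:ℤ) < A by linarith)
    have q2 := mul_pos (show (0:ℤ) < B by linarith) (show (0:ℤ) < B by linarith)
    have := int_pos_left hsq2 (by rw [hq2]; linarith only [q1, q2])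
    linarith
  have hcY : c ∣ Y := dvd_sub (hcA.mul_right v) (hcB.mul_left u)
  have hAY : A ∣ Y :=
    pell_H D A u c hD hA hu heA hc hcA hAc X Y hX1 (by linarith) hnorm hcY
  have hfin : B = A * X + D * u * Y := by linear_combination (-B) * heA
  rw [hfin]
  exact dvd_add (Dvd.intro X rfl) (hAY.mul_left (D * u))

private lemma sqf_eq {d₁ d₂ t : ℕ} (h₁ : Squarefree d₁) (h₂ : Squarefree d₂)
    (h : d₁ * d₂ = t ^ 2) : d₁ = d₂ := by
  have key : ∀ {e₁ e₂ : ℕ}, Squarefree e₁ → Squarefree e₂ → e₁ * e₂ = t ^ 2 →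
      ∀ p, Prime p → p ∣ e₁ → p ∣ e₂ := by
    intro e₁ e₂ hs1 hs2 he p hp hpe
    by_contra hnd
    have hpt : p ∣ t := hp.dvd_of_dvd_pow (he ▸ (hpe.mul_right e₂))
    have hp2 : p ^ 2 ∣ e₁ * e₂ := by rw [he]; exact pow_dvd_pow_of_dvd hpt 2
    have hpp : p.Prime := Nat.prime_iff.mpr hp
    have hcop : Nat.Coprime (p ^ 2) e₂ :=
      Nat.Coprime.pow_left 2 ((Nat.Prime.coprime_iff_not_dvd hpp).mpr hnd)
    have hdvd : p ^ 2 ∣ e₁ := hcop.dvd_of_dvd_mul_right hp2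
    have : IsUnit p := hs1 p (by rwa [← pow_two])
    exact hp.not_unit this
  rw [Nat.Squarefree.ext_iff h₁ h₂]
  intro p hp
  exact ⟨key h₁ h₂ h p hp.prime, key h₂ h₁ (by rwa [mul_comm]) p hp.prime⟩

theorem stmt_8 (a b : ℕ) (ha : 1 < a) (hab : a < b) (hnab : ¬ a ∣ b) (hnba : ¬ b ∣ a)
    (hg : 1 < Nat.gcd a b) (hsq : (Nat.gcd a b) ^ 2 > a ∨ (Nat.gcd a b) ^ 2 > b) :
    ¬ ∃ (n x : ℕ), 0 < n ∧ 0 < x ∧ Even n ∧ (a ^ n - 1) * (b ^ n - 1) = x ^ 2 := by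
  rintro ⟨n, x, hn, hx, hev, heq⟩
  obtain ⟨m, rfl⟩ := hev
  have hm : 0 < m := by omega
  set A := a ^ m with hAdef
  set B := b ^ m with hBdef
  have hA2 : 1 < A := Nat.one_lt_pow hm.ne' ha
  have hB2 : 1 < B := Nat.one_lt_pow hm.ne' (lt_trans ha hab)
  have hABlt : A < B := Nat.pow_lt_pow_left hab hm.ne'
  have hAn : a ^ (m + m) = A ^ 2 := by rw [pow_add, sq]
  have hBn : b ^ (m + m) = B ^ 2 := by rw [pow_add, sq]
  rw [hAn, hBn] at heq
  have hA1 : 1 ≤ A ^ 2 := Nat.one_le_pow _ _ (by omega)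
  have hB1 : 1 ≤ B ^ 2 := Nat.one_le_pow _ _ (by omega)
  obtain ⟨D, u, hDu, hDsf⟩ := Nat.sq_mul_squarefree (A ^ 2 - 1)
  obtain ⟨D', v, hDv, hDsf'⟩ := Nat.sq_mul_squarefree (B ^ 2 - 1)
  have hD0 : D ≠ 0 := hDsf.ne_zero
  have hD'0 : D' ≠ 0 := hDsf'.ne_zero
  have hAgt : 1 < A ^ 2 := Nat.one_lt_pow two_ne_zero hA2
  have hBgt : 1 < B ^ 2 := Nat.one_lt_pow two_ne_zero hB2
  have hu0 : u ≠ 0 := by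
    rintro rfl
    simp only [ne_eq, OfNat.ofNat_ne_zero, not_false_eq_true, zero_pow, zero_mul] at hDu
    omega
  have hv0 : v ≠ 0 := by
    rintro rfl
    simp only [ne_eq, OfNat.ofNat_ne_zero, not_false_eq_true, zero_pow, zero_mul] at hDv
    omega
  -- show D = D'
  have hprod : (u * v) ^ 2 * (D * D') = x ^ 2 := by
    rw [← heq, ← hDu, ← hDv]; ring
  have huvx : u * v ∣ x := (Nat.pow_dvd_pow_iff two_ne_zero).mp ⟨D * D', hprod.symm⟩
  obtain ⟨t, rfl⟩ := huvx
  have huvpos : 0 < (u * v) ^ 2 :=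
    Nat.pow_pos (Nat.pos_of_ne_zero (mul_ne_zero hu0 hv0))
  have hDD' : D * D' = t ^ 2 := by
    have h2 : (u * v) ^ 2 * (D * D') = (u * v) ^ 2 * t ^ 2 := by rw [hprod]; ring
    exact Nat.eq_of_mul_eq_mul_left huvpos h2
  have hDeq : D = D' := sqf_eq hDsf hDsf' hDD'
  subst hDeq
  -- D ≥ 2
  have hDne1 : D ≠ 1 := by
    rintro rfl
    rw [mul_one] at hDu
    have hA2sq : A ^ 2 = u ^ 2 + 1 := by omega
    have huA : u < A := by
      by_contra hle
      push_neg at hle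
      have := Nat.pow_le_pow_left hle 2
      omega
    have h3 : (u + 1) ^ 2 ≤ A ^ 2 := Nat.pow_le_pow_left huA 2
    have hu00 : u = 0 := by linarith only [h3, hA2sq]
    exact hu0 hu00
  have hD2 : 2 ≤ D := by omega
  -- gcd facts
  set c := Nat.gcd A B with hcdef
  have hgA : Nat.gcd a b ^ m ∣ A := pow_dvd_pow_of_dvd (Nat.gcd_dvd_left a b) m
  have hgB : Nat.gcd a b ^ m ∣ B := pow_dvd_pow_of_dvd (Nat.gcd_dvd_right a b) m
  have hgc : Nat.gcd a b ^ m ∣ c := Nat.dvd_gcd hgA hgB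
  have hc0 : 0 < c := Nat.gcd_pos_of_pos_left _ (by omega)
  have hgm : Nat.gcd a b ^ m ≤ c := Nat.le_of_dvd hc0 hgc
  have hggm : Nat.gcd a b ≤ Nat.gcd a b ^ m := Nat.le_self_pow hm.ne' _
  have hc2 : 2 ≤ c := by omega
  have hga : a < Nat.gcd a b ^ 2 := hsq.elim id (fun h => lt_trans hab h)
  have hAc : A < c ^ 2 := by
    calc A = a ^ m := rfl
    _ < (Nat.gcd a b ^ 2) ^ m := Nat.pow_lt_pow_left hga hm.ne'
    _ = (Nat.gcd a b ^ m) ^ 2 := by rw [← pow_mul, ← pow_mul, mul_comm]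
    _ ≤ c ^ 2 := Nat.pow_le_pow_left hgm 2
  -- cast to ℤ
  have heAZ : (A:ℤ) ^ 2 - (D:ℤ) * (u:ℤ) ^ 2 = 1 := by
    have h := congrArg (fun k : ℕ => (k : ℤ)) hDu
    push_cast [Nat.cast_sub hA1] at h
    linarith
  have heBZ : (B:ℤ) ^ 2 - (D:ℤ) * (v:ℤ) ^ 2 = 1 := by
    have h := congrArg (fun k : ℕ => (k : ℤ)) hDv
    push_cast [Nat.cast_sub hB1] at h
    linarith
  have hdvdZ : (A:ℤ) ∣ (B:ℤ) := by
    apply pell_crux (D:ℤ) (A:ℤ) (B:ℤ) (u:ℤ) (v:ℤ) (c:ℤ)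
    · exact_mod_cast hD2
    · exact_mod_cast hA2
    · exact_mod_cast Nat.one_le_iff_ne_zero.mpr hu0
    · exact_mod_cast Nat.one_le_iff_ne_zero.mpr hv0
    · exact_mod_cast hABlt
    · exact heAZ
    · exact heBZ
    · exact_mod_cast hc2
    · exact_mod_cast Int.natCast_dvd_natCast.mpr (Nat.gcd_dvd_left A B)
    · exact_mod_cast Int.natCast_dvd_natCast.mpr (Nat.gcd_dvd_right A B)
    · exact_mod_cast hAc
  have hdvd : A ∣ B := Int.natCast_dvd_natCast.mp hdvdZ
  exact hnab ((Nat.pow_dvd_pow_iff hm.ne').mp hdvd)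
end

section
/- Let a, b be integers with 1 < a < b such that a divides b and a > b/a. Then there are no positive integers n, x with n even such that (a^n - 1)(b^n - 1) = x^2. -/
lemma stmt_9_aux (U W X : ℤ) (hUpos : 2 ≤ U) (hWpos : 2 ≤ W) (hUW : W + 1 ≤ U)
    (hXpos : 1 ≤ X) (key : (U ^ 2 - 1) * (U ^ 2 * W ^ 2 - 1) = X ^ 2) : False := by
  set A : ℤ := 2 * U ^ 2 * W ^ 2 - W ^ 2 - 1 with hA
  have hfac : (A - 2 * W * X) * (A + 2 * W * X) = (W ^ 2 - 1) ^ 2 := by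
    rw [hA]; linear_combination (4 * W ^ 2) * key
  have hApos : 0 < A := by nlinarith
  have hpos2 : 0 < A + 2 * W * X := by nlinarith
  have h9 : (3:ℤ) ≤ W ^ 2 - 1 := by nlinarith
  have hgt : 0 < A - 2 * W * X := by
    by_contra h
    push_neg at h
    nlinarith [mul_nonpos_of_nonpos_of_nonneg h hpos2.le]
  have hle : A + 2 * W * X ≤ (W ^ 2 - 1) ^ 2 := by
    calc A + 2 * W * X = 1 * (A + 2 * W * X) := by ring
    _ ≤ (A - 2 * W * X) * (A + 2 * W * X) :=
        mul_le_mul_of_nonneg_right (by omega) hpos2.le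
    _ = (W ^ 2 - 1) ^ 2 := hfac
  have hU2 : (W + 1) ^ 2 * W ^ 2 ≤ U ^ 2 * W ^ 2 := by
    apply mul_le_mul_of_nonneg_right _ (sq_nonneg W)
    nlinarith
  have hWX : 0 ≤ 2 * W * X := by nlinarith
  nlinarith [hle, hU2, hWX, hWpos, sq_nonneg W,
    mul_pos (by nlinarith : (0:ℤ) < W * W) (by nlinarith : (0:ℤ) < W)]

theorem stmt_9 (a b : ℕ) (ha : 1 < a) (hab : a < b) (hdvd : a ∣ b) (hba : b / a < a) :
    ¬ ∃ (n x : ℕ), 0 < n ∧ 0 < x ∧ Even n ∧ (a ^ n - 1) * (b ^ n - 1) = x ^ 2 := by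
  rintro ⟨n, x, hn, hx, hne, heq⟩
  obtain ⟨m, hm⟩ := hne
  have hm1 : 1 ≤ m := by omega
  obtain ⟨c, hc⟩ := hdvd
  have ha0 : 0 < a := by omega
  have hc2 : 2 ≤ c := by
    rcases Nat.lt_or_ge c 2 with h | h
    · interval_cases c <;> omega
    · exact h
  have hca : c < a := by
    have : b / a = c := by rw [hc]; exact Nat.mul_div_cancel_left c ha0
    omega
  have han : 1 ≤ a ^ n := Nat.one_le_pow _ _ ha0
  have hbn : 1 ≤ b ^ n := Nat.one_le_pow _ _ (by omega)
  have h1 : ((a:ℤ) ^ n - 1) * ((b:ℤ) ^ n - 1) = (x:ℤ) ^ 2 := by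
    have h := heq
    zify [han, hbn] at h
    exact_mod_cast h
  apply stmt_9_aux ((a:ℤ) ^ m) ((c:ℤ) ^ m) (x:ℤ)
  · have h2 : 2 ≤ a ^ m := Nat.one_lt_pow (by omega) ha
    exact_mod_cast h2
  · have h2 : 2 ≤ c ^ m := Nat.one_lt_pow (by omega) hc2
    exact_mod_cast h2
  · have h2 : c ^ m < a ^ m := Nat.pow_lt_pow_left hca (by omega)
    have h3 : (c:ℤ) ^ m < (a:ℤ) ^ m := by exact_mod_cast h2
    omega
  · exact_mod_cast hx
  · have hbz : (b:ℤ) = a * c := by exact_mod_cast hc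
    rw [hbz, hm] at h1
    linear_combination h1
end

section
/- Let a, b be odd integers with 1 < a < b and g = gcd(a,b) > 1. If a/g ≡ 3 (mod 4) or b/g ≡ 3 (mod 4), then there are no positive integers n, x with n ≡ 2 (mod 4) such that (a^n - 1)(b^n - 1) = x^2. -/
open Pell Pell.Solution₁

section PellAux
variable {d : ℤ} (ε : Pell.Solution₁ d)

private lemma xadd' (i j : ℕ) : (ε^(i+j)).x = (ε^i).x * (ε^j).x + d * ((ε^i).y * (ε^j).y) := by
  rw [pow_add, x_mul]

private lemma yadd' (i j : ℕ) : (ε^(i+j)).y = (ε^i).x * (ε^j).y + (ε^i).y * (ε^j).x := by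
  rw [pow_add, y_mul]

private lemma xstep2 (u r : ℕ) : (ε^(u+2*r)).x + (ε^u).x = 2 * (ε^r).x * (ε^(u+r)).x := by
  have h1 : (ε^(u+r+r)).x = (ε^(u+r)).x * (ε^r).x + d * ((ε^(u+r)).y * (ε^r).y) := xadd' ε (u+r) r
  have h2 : (ε^(u+r)).x = (ε^u).x * (ε^r).x + d * ((ε^u).y * (ε^r).y) := xadd' ε u r
  have h3 : (ε^(u+r)).y = (ε^u).x * (ε^r).y + (ε^u).y * (ε^r).x := yadd' ε u r
  have hp : (ε^r).x ^ 2 - d * (ε^r).y ^ 2 = 1 := (ε^r).prop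
  have he : u + 2*r = u + r + r := by ring
  rw [he, h1, h2, h3]
  linear_combination (-(ε^u).x) * hp

private lemma ystep2 (u r : ℕ) : (ε^(u+2*r)).y + (ε^u).y = 2 * (ε^r).x * (ε^(u+r)).y := by
  have h1 : (ε^(u+r+r)).y = (ε^(u+r)).x * (ε^r).y + (ε^(u+r)).y * (ε^r).x := yadd' ε (u+r) r
  have h2 : (ε^(u+r)).x = (ε^u).x * (ε^r).x + d * ((ε^u).y * (ε^r).y) := xadd' ε u r
  have h3 : (ε^(u+r)).y = (ε^u).x * (ε^r).y + (ε^u).y * (ε^r).x := yadd' ε u r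
  have hp : (ε^r).x ^ 2 - d * (ε^r).y ^ 2 = 1 := (ε^r).prop
  have he : u + 2*r = u + r + r := by ring
  rw [he, h1, h2, h3]
  linear_combination (-(ε^u).y) * hp

/-- if M ∣ X_r then M ∣ X_{r(2l+1)} -/
private lemma rank_backward {M : ℤ} {r : ℕ} (hr : M ∣ (ε^r).x) :
    ∀ l : ℕ, M ∣ (ε^(r*(2*l+1))).x := by
  intro l
  induction l with
  | zero => simpa using hr
  | succ l ih =>
    have he : r*(2*(l+1)+1) = r*(2*l+1) + 2*r := by ring
    have h2 := xstep2 ε (r*(2*l+1)) r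
    rw [← he] at h2
    have : (ε^(r*(2*(l+1)+1))).x = 2 * (ε^r).x * (ε^(r*(2*l+1)+r)).x - (ε^(r*(2*l+1))).x := by
      linarith [h2]
    rw [this]
    exact dvd_sub (Dvd.dvd.mul_right (hr.mul_left 2) _) ih

private lemma rank_main {M : ℤ} (hM : 1 < M) {r : ℕ} (hr : 0 < r) (hrdvd : M ∣ (ε^r).x)
    (hmin : ∀ i, 0 < i → i < r → ¬ M ∣ (ε^i).x) :
    ∀ i, M ∣ (ε^i).x → ∃ q, Odd q ∧ i = r * q := by
  intro i
  induction i using Nat.strong_induction_on with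
  | _ i ih =>
  intro hi
  have hX2r : M ∣ (ε^(2*r)).x + 1 := by
    have h := xstep2 ε 0 r
    simp only [zero_add, pow_zero, x_one] at h
    have : (ε^(2*r)).x + 1 = 2 * (ε^r).x * (ε^r).x := h
    rw [this]
    exact Dvd.dvd.mul_right (hrdvd.mul_left 2) _
  rcases lt_trichotomy i r with hlt | heq | hgt
  · rcases Nat.eq_zero_or_pos i with h0 | hpos
    · subst h0
      simp only [pow_zero, x_one] at hi
      exact absurd (Int.le_of_dvd one_pos hi) (by omega)
    · exact absurd hi (hmin i hpos hlt)
  · exact ⟨1, odd_one, by omega⟩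
  · rcases le_or_gt i (2*r) with hle | hgt2
    · exfalso
      set u := 2*r - i with hu
      have hui : u + i = 2*r := by omega
      have h2 := xstep2 ε u i
      rw [show u + 2*i = i + 2*r by omega] at h2
      have h3 := xstep2 ε i r
      have hMi2r : M ∣ (ε^(i+2*r)).x := by
        have : (ε^(i+2*r)).x = 2 * (ε^r).x * (ε^(i+r)).x - (ε^i).x := by linarith [h3]
        rw [this]
        exact dvd_sub (Dvd.dvd.mul_right (hrdvd.mul_left 2) _) hi
      have hMu : M ∣ (ε^u).x := by
        rw [hui] at h2
        have : (ε^u).x = 2 * (ε^i).x * (ε^(2*r)).x - (ε^(i+2*r)).x := by linarith [h2]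
        rw [this]
        exact dvd_sub (Dvd.dvd.mul_right (hi.mul_left 2) _) hMi2r
      rcases Nat.eq_zero_or_pos u with h0 | hpos
      · rw [h0] at hMu
        simp only [pow_zero, x_one] at hMu
        exact absurd (Int.le_of_dvd one_pos hMu) (by omega)
      · exact hmin u hpos (by omega) hMu
    · have h2 := xstep2 ε (i - 2*r) r
      rw [show i - 2*r + 2*r = i by omega] at h2
      have hMd : M ∣ (ε^(i-2*r)).x := by
        have : (ε^(i-2*r)).x = 2 * (ε^r).x * (ε^(i-2*r+r)).x - (ε^i).x := by linarith [h2]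
        rw [this]
        exact dvd_sub (Dvd.dvd.mul_right (hrdvd.mul_left 2) _) hi
      obtain ⟨q, hq, hiq⟩ := ih (i - 2*r) (by omega) hMd
      refine ⟨q + 2, by rcases hq with ⟨c, hc⟩; exact ⟨c+1, by omega⟩, ?_⟩
      have hrq : r*(q+2) = r*q + 2*r := by ring
      omega

private lemma key_lemma (dd : ℕ) (hodd : Odd ((ε^dd).x)) (h8 : (8:ℤ) ∣ d) :
    ∀ l : ℕ, ∃ w : ℤ, (ε^(dd*(2*l+1))).x = (ε^dd).x * w ∧ (8:ℤ) ∣ w - 1 ∧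
      (ε^dd).x ∣ w - (-1)^l*(2*l+1) ∧
      (ε^dd).x ∣ (ε^(dd*(2*l+1))).y - (-1)^l*(ε^dd).y := by
  intro l
  set c := (ε^dd).x with hc
  set e := (ε^dd).y with hey
  have hprop : c^2 - d * e^2 = 1 := (ε^dd).prop
  have hc8 : (8:ℤ) ∣ c^2 - 1 := by
    obtain ⟨z, hz⟩ := hodd
    have h2 : Even (z*(z+1)) := Int.even_mul_succ_self z
    obtain ⟨w2, hw2⟩ := h2
    exact ⟨w2, by rw [hz]; linear_combination 4*hw2⟩
  induction l with
  | zero =>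
    refine ⟨1, by simp [mul_one, hc], by simp, by simp, by simp [hey]⟩
  | succ l ih =>
    obtain ⟨w, hw, h8w, hwm, hym⟩ := ih
    set u := dd*(2*l+1) with hu
    have h2x := xstep2 ε u dd
    have h2y := ystep2 ε u dd
    have hxa := xadd' ε u dd
    have hya := yadd' ε u dd
    have hidx : dd*(2*(l+1)+1) = u + 2*dd := by rw [hu]; ring
    obtain ⟨z1, hz1⟩ := hym
    obtain ⟨z2, hz2⟩ := hwm
    refine ⟨(2*c^2-1)*w + 2*d*((ε^u).y)*e, ?_, ?_, ?_, ?_⟩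
    · rw [hidx]
      have : (ε^(u+2*dd)).x = 2*c*(ε^(u+dd)).x - (ε^u).x := by linarith [h2x]
      rw [this, hxa, hw]
      ring
    · obtain ⟨z8, hz8⟩ := hc8
      obtain ⟨w8, hw8⟩ := h8w
      obtain ⟨d8, hd8⟩ := h8
      exact ⟨2*z8*w + w8 + 2*d8*(ε^u).y*e, by linear_combination 2*w*hz8 + hw8 + 2*(ε^u).y*e*hd8⟩
    · rw [pow_succ]
      refine ⟨2*c*(-1)^l*(2*l+1) + (2*c^2-1)*z2 + 2*(-1)^l*c + 2*d*e*z1, ?_⟩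
      push_cast
      linear_combination (2*d*e)*hz1 + (2*c^2-1)*hz2 - 2*(-1)^l*hprop
    · rw [hidx, pow_succ]
      have : (ε^(u+2*dd)).y = 2*c*(ε^(u+dd)).y - (ε^u).y := by linarith [h2y]
      rw [this, hya]
      exact ⟨2*((ε^u).x*e + (ε^u).y*c) - z1, by linear_combination -hz1⟩

end PellAux

set_option maxHeartbeats 1000000 in
theorem stmt_10 (a b : ℕ) (ha : 1 < a) (hab : a < b) (hoa : Odd a) (hob : Odd b)
    (hg : 1 < Nat.gcd a b)
    (hmod : a / Nat.gcd a b % 4 = 3 ∨ b / Nat.gcd a b % 4 = 3) :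
    ¬ ∃ (n x : ℕ), 0 < n ∧ 0 < x ∧ n % 4 = 2 ∧ (a ^ n - 1) * (b ^ n - 1) = x ^ 2 := by
  rintro ⟨n, x, hn, hx, hn4, heq⟩
  obtain ⟨qn, rfl⟩ : ∃ q, n = 4*q+2 := ⟨n/4, by omega⟩
  set m := 2*qn+1 with hm
  have hb : 1 < b := lt_trans ha hab
  set g0 := Nat.gcd a b with hg0
  have hg0pos : 0 < g0 := by omega
  set A := a^m with hA
  set B := b^m with hB
  have hA1 : 1 < A := Nat.one_lt_pow (by omega) ha
  have hB1 : 1 < B := Nat.one_lt_pow (by omega) hb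
  have hoA : Odd A := hoa.pow
  have hoB : Odd B := hob.pow
  have hA2 : 1 < A^2 := Nat.one_lt_pow two_ne_zero hA1
  have hB2 : 1 < B^2 := Nat.one_lt_pow two_ne_zero hB1
  have heqn : (A^2 - 1) * (B^2 - 1) = x^2 := by
    rw [hA, hB, ← pow_mul, ← pow_mul, show m*2 = 4*qn+2 by omega]
    exact heq
  -- the gcd split
  set D0 := Nat.gcd (A^2-1) (B^2-1) with hD0
  have hA2pos : 0 < A^2 - 1 := by omega
  have hB2pos : 0 < B^2 - 1 := by omega
  have hD0pos : 0 < D0 := Nat.gcd_pos_of_pos_left _ hA2pos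
  set u := (A^2-1)/D0 with hu
  set v := (B^2-1)/D0 with hv
  have huu : D0 * u = A^2 - 1 := Nat.mul_div_cancel' (Nat.gcd_dvd_left _ _)
  have hvv : D0 * v = B^2 - 1 := Nat.mul_div_cancel' (Nat.gcd_dvd_right _ _)
  have hupos : 0 < u := by
    rcases Nat.eq_zero_or_pos u with h0 | h
    · rw [h0, Nat.mul_zero] at huu; omega
    · exact h
  have hvpos : 0 < v := by
    rcases Nat.eq_zero_or_pos v with h0 | h
    · rw [h0, Nat.mul_zero] at hvv; omega
    · exact h
  have hcop : Nat.Coprime u v := Nat.coprime_div_gcd_div_gcd hD0pos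
  have hD2x : D0^2 ∣ x^2 := ⟨u*v, by rw [← heqn, ← huu, ← hvv]; ring⟩
  obtain ⟨x0, hx0⟩ : D0 ∣ x := (Nat.pow_dvd_pow_iff two_ne_zero).mp hD2x
  have huv : u * v = x0^2 := by
    have h1 : D0^2 * (u*v) = D0^2 * x0^2 := by
      have h2 : D0^2*(u*v) = (D0*u)*(D0*v) := by ring
      rw [h2, huu, hvv, heqn, hx0]; ring
    exact Nat.eq_of_mul_eq_mul_left (by positivity) h1
  -- u and v are squares
  have hcopZ : IsCoprime (u:ℤ) (v:ℤ) := Nat.isCoprime_iff_coprime.mpr hcop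
  obtain ⟨s1, hs1⟩ := Int.sq_of_isCoprime hcopZ (show (u:ℤ)*(v:ℤ) = (x0:ℤ)^2 by exact_mod_cast huv)
  obtain ⟨t1, ht1⟩ := Int.sq_of_isCoprime hcopZ.symm
    (show (v:ℤ)*(u:ℤ) = (x0:ℤ)^2 by rw [mul_comm]; exact_mod_cast huv)
  have hs : (u:ℤ) = s1^2 := by
    rcases hs1 with h | h
    · exact h
    · exfalso; have h0u : (0:ℤ) < u := by exact_mod_cast hupos
      linarith only [sq_nonneg s1, h0u, h]
  have ht : (v:ℤ) = t1^2 := by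
    rcases ht1 with h | h
    · exact h
    · exfalso; have h0v : (0:ℤ) < v := by exact_mod_cast hvpos
      linarith only [sq_nonneg t1, h0v, h]
  -- 8 divides D0
  have hsq8 : ∀ C : ℕ, Odd C → 1 < C → 8 ∣ C^2 - 1 := by
    intro C hC h1C
    obtain ⟨w, hw⟩ := hC
    have h2 : Even (w*(w+1)) := Nat.even_mul_succ_self w
    obtain ⟨c2, hc2⟩ := h2
    have : C^2 = 8*c2 + 1 := by subst hw; linear_combination 4*hc2
    omega
  have h8D : 8 ∣ D0 := by
    have h8A := hsq8 A hoA hA1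
    have h8B := hsq8 B hoB hB1
    rcases Nat.even_or_odd u with heu | hou
    · -- then v is odd
      have hov : Odd v := by
        rcases Nat.even_or_odd v with hev | hov
        · exfalso
          obtain ⟨u2, hu2⟩ := heu
          obtain ⟨v2, hv2⟩ := hev
          have : (2:ℕ) ∣ Nat.gcd u v := Nat.dvd_gcd ⟨u2, by omega⟩ ⟨v2, by omega⟩
          rw [hcop] at this
          omega
        · exact hov
      have hco8 : Nat.Coprime 8 v := by
        have h2v : Nat.Coprime 2 v := Nat.coprime_two_left.mpr hov
        have := Nat.Coprime.pow_left 3 h2v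
        norm_num at this; exact this
      exact hco8.dvd_of_dvd_mul_right (by rw [hvv]; exact h8B)
    · have hco8 : Nat.Coprime 8 u := by
        have h2u : Nat.Coprime 2 u := Nat.coprime_two_left.mpr hou
        have := Nat.Coprime.pow_left 3 h2u
        norm_num at this; exact this
      exact hco8.dvd_of_dvd_mul_right (by rw [huu]; exact h8A)
  -- Pell setup
  have huuZ : (D0:ℤ) * u = (A:ℤ)^2 - 1 := by
    have h1 := congrArg (Nat.cast (R := ℤ)) huu
    push_cast [Nat.cast_sub hA2.le] at h1
    exact_mod_cast h1
  have hvvZ : (D0:ℤ) * v = (B:ℤ)^2 - 1 := by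
    have h1 := congrArg (Nat.cast (R := ℤ)) hvv
    push_cast [Nat.cast_sub hB2.le] at h1
    exact_mod_cast h1
  set solA : Pell.Solution₁ (D0:ℤ) :=
    Pell.Solution₁.mk (A:ℤ) |s1| (by rw [sq_abs, ← hs]; linear_combination -huuZ) with hsolA
  set solB : Pell.Solution₁ (D0:ℤ) :=
    Pell.Solution₁.mk (B:ℤ) |t1| (by rw [sq_abs, ← ht]; linear_combination -hvvZ) with hsolB
  have h1A : 1 < solA.x := by rw [hsolA, x_mk]; exact_mod_cast hA1
  have hdpos : (0:ℤ) < (D0:ℤ) := by exact_mod_cast hD0pos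
  have hdns : ¬IsSquare ((D0:ℤ)) := d_nonsquare_of_one_lt_x h1A
  obtain ⟨ε, hε⟩ := Pell.IsFundamental.exists_of_not_isSquare hdpos hdns
  obtain ⟨j, hj⟩ := hε.eq_pow_of_nonneg (lt_trans one_pos h1A)
    (by rw [hsolA, y_mk]; exact abs_nonneg s1)
  obtain ⟨k, hk⟩ := hε.eq_pow_of_nonneg
    (show 0 < solB.x by rw [hsolB, x_mk]; positivity)
    (by rw [hsolB, y_mk]; exact abs_nonneg t1)
  have hXj : (ε^j).x = (A:ℤ) := by rw [← hj, hsolA, x_mk]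
  have hXk : (ε^k).x = (B:ℤ) := by rw [← hk, hsolB, x_mk]
  have hjpos : 0 < j := by
    rcases Nat.eq_zero_or_pos j with h0 | h
    · exfalso
      rw [h0, pow_zero, x_one] at hXj
      have : A = 1 := by exact_mod_cast hXj.symm
      omega
    · exact h
  have h8dI : (8:ℤ) ∣ (D0:ℤ) := by exact_mod_cast h8D
  have odd_dvd : ∀ d' q' : ℕ, Odd q' → d' ∣ q' → Odd d' := by
    intro d' q' hq hd
    rcases Nat.even_or_odd d' with he | ho
    · exfalso
      have h2 : 2 ∣ q' := dvd_trans he.two_dvd hd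
      rw [Nat.odd_iff] at hq
      omega
    · exact ho
  classical
  have main_rank : ∀ q : ℕ, 1 < q → (q:ℤ) ∣ (ε^j).x → (q:ℤ) ∣ (ε^k).x →
      ((q:ℤ) ∣ (ε^(Nat.gcd j k)).x ∧
       ∃ j2 k2, Odd j2 ∧ Odd k2 ∧ j = Nat.gcd j k * j2 ∧ k = Nat.gcd j k * k2) := by
    intro q hq hqj hqk
    have hex : ∃ i, 0 < i ∧ (q:ℤ) ∣ (ε^i).x := ⟨j, hjpos, hqj⟩
    obtain ⟨hrpos, hrdvd⟩ := Nat.find_spec hex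
    have hmin : ∀ i, 0 < i → i < Nat.find hex → ¬(q:ℤ) ∣ (ε^i).x := by
      intro i h1 h2 hdvd
      exact Nat.find_min hex h2 ⟨h1, hdvd⟩
    have hqZ : (1:ℤ) < q := by exact_mod_cast hq
    obtain ⟨q1, hq1odd, hjq⟩ := rank_main ε hqZ hrpos hrdvd hmin j hqj
    obtain ⟨q2, hq2odd, hkq⟩ := rank_main ε hqZ hrpos hrdvd hmin k hqk
    set r := Nat.find hex with hr
    have hgcd : Nat.gcd j k = r * Nat.gcd q1 q2 := by rw [hjq, hkq, Nat.gcd_mul_left]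
    have hgodd : Odd (Nat.gcd q1 q2) := odd_dvd _ _ hq1odd (Nat.gcd_dvd_left q1 q2)
    constructor
    · obtain ⟨l, hl⟩ := hgodd
      rw [hgcd, hl]
      exact rank_backward ε hrdvd l
    · set m1 := Nat.gcd q1 q2 with hm1
      have hm1d1 : m1 ∣ q1 := Nat.gcd_dvd_left q1 q2
      have hm1d2 : m1 ∣ q2 := Nat.gcd_dvd_right q1 q2
      have he1 : m1 * (q1/m1) = q1 := Nat.mul_div_cancel' hm1d1
      have he2 : m1 * (q2/m1) = q2 := Nat.mul_div_cancel' hm1d2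
      refine ⟨q1/m1, q2/m1, odd_dvd _ _ hq1odd ⟨m1, by rw [mul_comm]; exact he1.symm⟩,
        odd_dvd _ _ hq2odd ⟨m1, by rw [mul_comm]; exact he2.symm⟩, ?_, ?_⟩
      · rw [hgcd, mul_assoc, he1]; exact hjq
      · rw [hgcd, mul_assoc, he2]; exact hkq
  -- apply with q := g0
  have hg0a : g0 ∣ A := dvd_trans (Nat.gcd_dvd_left a b) (dvd_pow_self a (by omega : m ≠ 0))
  have hg0b : g0 ∣ B := dvd_trans (Nat.gcd_dvd_right a b) (dvd_pow_self b (by omega : m ≠ 0))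
  obtain ⟨-, j2, k2, hj2odd, hk2odd, hj2, hk2⟩ :=
    main_rank g0 hg (by rw [hXj]; exact_mod_cast hg0a) (by rw [hXk]; exact_mod_cast hg0b)
  set dd := Nat.gcd j k with hdd
  set XD := (ε^dd).x with hXD
  have hXDpos : 0 < XD := x_pow_pos hε.x_pos dd
  obtain ⟨lj, hlj⟩ := hj2odd
  obtain ⟨lk, hlk⟩ := hk2odd
  have hXDA : XD ∣ (A:ℤ) := by
    rw [← hXj, hj2, hlj]
    exact rank_backward ε dvd_rfl lj
  have hXDB : XD ∣ (B:ℤ) := by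
    rw [← hXk, hk2, hlk]
    exact rank_backward ε dvd_rfl lk
  have hXDodd : Odd XD := by
    rcases Int.even_or_odd XD with he | ho
    · exfalso
      have h2 : (2:ℤ) ∣ (A:ℤ) := dvd_trans he.two_dvd hXDA
      have h2' : (2:ℕ) ∣ A := by exact_mod_cast h2
      rw [Nat.odd_iff] at hoA
      omega
    · exact ho
  obtain ⟨w, hwEq, hw8, -, -⟩ := key_lemma ε dd hXDodd h8dI lj
  obtain ⟨w', hwEq', hw8', -, -⟩ := key_lemma ε dd hXDodd h8dI lk
  have hAw : (A:ℤ) = XD * w := by rw [← hXj, hj2, hlj]; exact hwEq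
  have hBw : (B:ℤ) = XD * w' := by rw [← hXk, hk2, hlk]; exact hwEq'
  -- gcd A B = g0^m
  set a1 := a / g0 with ha1d
  set b1 := b / g0 with hb1d
  have ha1 : g0 * a1 = a := Nat.mul_div_cancel' (Nat.gcd_dvd_left a b)
  have hb1 : g0 * b1 = b := Nat.mul_div_cancel' (Nat.gcd_dvd_right a b)
  have hcop1 : Nat.Coprime a1 b1 := Nat.coprime_div_gcd_div_gcd hg0pos
  have hgcdAB : Nat.gcd A B = g0^m := by
    rw [hA, hB, ← ha1, ← hb1, mul_pow, mul_pow, Nat.gcd_mul_left,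
      Nat.Coprime.pow m m hcop1, mul_one]
  set XDn := XD.toNat with hXDn
  have hXDcast : (XDn:ℤ) = XD := Int.toNat_of_nonneg hXDpos.le
  have hXDnpos : 0 < XDn := by omega
  have hdvd1 : XDn ∣ Nat.gcd A B :=
    Nat.dvd_gcd (by exact_mod_cast hXDcast ▸ hXDA) (by exact_mod_cast hXDcast ▸ hXDB)
  have hdvd2 : g0^m ∣ XDn := by
    rw [← Nat.factorization_le_iff_dvd (by positivity) hXDnpos.ne']
    refine Finsupp.le_def.mpr fun p => ?_
    rcases Nat.eq_zero_or_pos ((g0^m).factorization p) with h0 | hppos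
    · omega
    · have hp : p.Prime := Nat.prime_of_mem_primeFactors
        (by rw [← Nat.support_factorization]; exact Finsupp.mem_support_iff.mpr hppos.ne')
      set ee := (g0^m).factorization p with hee
      have hqd : p^ee ∣ g0^m := Nat.ordProj_dvd _ p
      have hq1 : 1 < p^ee := Nat.one_lt_pow hppos.ne' hp.one_lt
      have hqA : ((p^ee : ℕ):ℤ) ∣ (ε^j).x := by
        rw [hXj]
        exact_mod_cast dvd_trans hqd (hgcdAB ▸ Nat.gcd_dvd_left A B)
      have hqB : ((p^ee : ℕ):ℤ) ∣ (ε^k).x := by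
        rw [hXk]
        exact_mod_cast dvd_trans hqd (hgcdAB ▸ Nat.gcd_dvd_right A B)
      obtain ⟨hddvd, -⟩ := main_rank (p^ee) hq1 hqA hqB
      have hXDn_dvd : p^ee ∣ XDn := by
        have : ((p^ee : ℕ):ℤ) ∣ (XDn:ℤ) := by rw [hXDcast]; exact hddvd
        exact_mod_cast this
      exact (Nat.Prime.pow_dvd_iff_le_factorization hp hXDnpos.ne').mp hXDn_dvd
  have hPXD : g0^m = XDn := Nat.dvd_antisymm hdvd2 (hgcdAB ▸ hdvd1)
  -- endgame
  have hXDg : ((g0^m : ℕ) : ℤ) = XD := by rw [← hXDcast, ← hPXD]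
  have hg0mpos : (0:ℤ) < (g0^m : ℤ) := by positivity
  have hAfact : A = g0^m * a1^m := by rw [hA, ← ha1, mul_pow]
  have hBfact : B = g0^m * b1^m := by rw [hB, ← hb1, mul_pow]
  have hwa : w = ((a1^m : ℕ) : ℤ) := by
    have h1 : XD * w = XD * ((a1^m : ℕ):ℤ) := by
      rw [← hAw, ← hXDg]
      exact_mod_cast congrArg (Nat.cast (R := ℤ)) hAfact
    exact mul_left_cancel₀ (ne_of_gt hXDpos) h1
  have hwb : w' = ((b1^m : ℕ) : ℤ) := by
    have h1 : XD * w' = XD * ((b1^m : ℕ):ℤ) := by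
      rw [← hBw, ← hXDg]
      exact_mod_cast congrArg (Nat.cast (R := ℤ)) hBfact
    exact mul_left_cancel₀ (ne_of_gt hXDpos) h1
  have hmod4 : ∀ (NN : ℕ) (ww : ℤ), ww = ((NN:ℕ):ℤ) → (8:ℤ) ∣ ww - 1 → NN % 4 = 1 := by
    intro NN ww hww h8w
    rw [hww] at h8w
    have h4 : (4:ℤ) ∣ (NN:ℤ) - 1 := dvd_trans ⟨2, by norm_num⟩ h8w
    obtain ⟨c, hc⟩ := h4
    have hc0 : 0 ≤ c := by omega
    obtain ⟨cn, rfl⟩ : ∃ cn : ℕ, c = (cn:ℤ) := ⟨c.toNat, (Int.toNat_of_nonneg hc0).symm⟩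
    omega
  have hA4 := hmod4 (a1^m) w hwa hw8
  have hB4 := hmod4 (b1^m) w' hwb hw8'
  have hodd3 : ∀ c1 : ℕ, c1 % 4 = 3 → c1^m % 4 = 3 := by
    intro c1 hc1
    rw [hm, Nat.pow_mod, hc1]
    have h9 : (3:ℕ)^(2*qn+1) = 9^qn*3 := by rw [pow_succ, pow_mul]; norm_num
    rw [h9, Nat.mul_mod, Nat.pow_mod]
    norm_num
  rcases hmod with h3 | h3
  · have := hodd3 a1 h3
    omega
  · have := hodd3 b1 h3
    omega
end
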